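/- arXiv:2410.14811 — 8 statements merged into one kernel-verified Lean document; each statement's English description precedes it below -/
import Mathlib

section
/- Let β > 0 and D ∈ ℝ, and let C ⊆ E be a nonempty closed convex set. Then C is β-smooth and satisfies diam(C) ≤ D if and only if there exists a nonempty closed convex set C₀ ⊆ E with diam(C₀) ≤ D − 2/β such that C = C₀ + closedBall(0, 1/β) (Minkowski sum). -/
open Metric Set
open scoped RealInnerProductSpace Pointwise
open scoped Topology

noncomputable section

variable {F : Type*} [NormedAddCommGroup F] [InnerProductSpace ℝ F]

/-- The normal cone of a set `C` at a point `z`. -/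
def normalCone (C : Set F) (z : F) : Set F :=
  {v | ∀ x ∈ C, ⟪v, x - z⟫ ≤ 0}

/-- A set `C` is `β`-smooth if at every boundary point `z`, every unit normal vector `n`
gives a closed ball of radius `1/β` centered at `z - (1/β) n` contained in `C`. -/
def IsSmoothSet (β : ℝ) (C : Set F) : Prop :=
  ∀ z ∈ frontier C, ∀ n ∈ normalCone C z, ‖n‖ = 1 →
    closedBall (z - (1 / β) • n) (1 / β) ⊆ C

/-- `diam C ≤ D`, expressed pointwise. -/
def DiamLE (C : Set F) (D : ℝ) : Prop :=
  ∀ x ∈ C, ∀ y ∈ C, ‖x - y‖ ≤ D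

/-- If the normal cone at a point of a closed set contains a nonzero vector, the point is on
the frontier. -/
lemma mem_frontier_of_normal {C : Set F} {z n : F} (hz : z ∈ C)
    (hn : n ∈ normalCone C z) (hn0 : n ≠ 0) : z ∈ frontier C := by
  refine ⟨subset_closure hz, fun hint => ?_⟩
  rcases Metric.isOpen_iff.1 isOpen_interior z hint with ⟨ε, hε, hball⟩
  set c : ℝ := (ε / 2) * ‖n‖⁻¹ with hc
  have hnn : (0:ℝ) < ‖n‖ := norm_pos_iff.2 hn0
  have hcpos : 0 < c := by positivity
  have hw : z + c • n ∈ C := by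
    apply interior_subset
    apply hball
    have : dist (z + c • n) z = c * ‖n‖ := by
      rw [dist_eq_norm]
      simp [norm_smul, abs_of_pos hcpos]
    rw [mem_ball, this, hc]
    calc ε / 2 * ‖n‖⁻¹ * ‖n‖ = ε / 2 := by
          rw [mul_assoc, inv_mul_cancel₀ hnn.ne', mul_one]
    _ < ε := by linarith
  have := hn _ hw
  rw [add_sub_cancel_left, real_inner_smul_right, real_inner_self_eq_norm_sq] at this
  have hpos : 0 < c * ‖n‖ ^ 2 := by positivity
  linarith

/-- Projection onto a nonempty closed convex set from an exterior point produces a frontier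
point together with a unit normal vector. -/
lemma exists_unit_normal_of_notMem [CompleteSpace F] {C : Set F} (hne : C.Nonempty)
    (hcl : IsClosed C) (hcv : Convex ℝ C) {u : F} (hu : u ∉ C) :
    ∃ z ∈ frontier C, ∃ n : F, ‖n‖ = 1 ∧ n ∈ normalCone C z := by
  obtain ⟨z, hzC, hz⟩ := exists_norm_eq_iInf_of_complete_convex hne hcl.isComplete hcv u
  have hnormal : ∀ w ∈ C, ⟪u - z, w - z⟫ ≤ 0 :=
    (norm_eq_iInf_iff_real_inner_le_zero hcv hzC).1 hz
  have huz : u - z ≠ 0 := sub_ne_zero.2 fun h => hu (h ▸ hzC)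
  have hnn : (0:ℝ) < ‖u - z‖ := norm_pos_iff.2 huz
  set n : F := ‖u - z‖⁻¹ • (u - z) with hn
  have hn1 : ‖n‖ = 1 := by
    rw [hn, norm_smul, norm_inv, norm_norm, inv_mul_cancel₀ hnn.ne']
  have hnN : n ∈ normalCone C z := by
    intro w hw
    rw [hn, real_inner_smul_left]
    have := hnormal w hw
    have hinv : (0:ℝ) ≤ ‖u - z‖⁻¹ := by positivity
    exact mul_nonpos_of_nonneg_of_nonpos hinv this
  exact ⟨z, mem_frontier_of_normal hzC hnN (by rw [← norm_pos_iff, hn1]; norm_num), n, hn1, hnN⟩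

/-- Every frontier point of a convex set with nonempty interior admits a unit normal vector. -/
lemma exists_unit_normal_of_frontier [CompleteSpace F] {C : Set F} (hcv : Convex ℝ C)
    (hint : (interior C).Nonempty) {z : F} (hz : z ∈ frontier C) :
    ∃ n : F, ‖n‖ = 1 ∧ n ∈ normalCone C z := by
  obtain ⟨a₀, ha₀⟩ := hint
  have hznot : z ∉ interior C := hz.2
  obtain ⟨f, hf⟩ := geometric_hahn_banach_open_point (hcv.interior) isOpen_interior hznot
  have key : ∀ y ∈ C, f y ≤ f z := by
    intro y hy
    have hev : ∀ᶠ t in 𝓝[>] (0:ℝ), f (t • a₀ + (1 - t) • y) ≤ f z := by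
      filter_upwards [Ioc_mem_nhdsGT one_pos] with t ht
      exact le_of_lt (hf _ (hcv.combo_interior_self_mem_interior ha₀ hy ht.1
        (by linarith [ht.2]) (by ring)))
    have hcont : Filter.Tendsto (fun t : ℝ => f (t • a₀ + (1 - t) • y)) (𝓝[>] (0:ℝ))
        (𝓝 (f y)) := by
      have hc : Continuous fun t : ℝ => f (t • a₀ + (1 - t) • y) := by
        apply f.continuous.comp
        continuity
      have h0 : Filter.Tendsto (fun t : ℝ => f (t • a₀ + (1 - t) • y)) (𝓝 (0:ℝ))
          (𝓝 (f y)) := by simpa using hc.tendsto 0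
      exact h0.mono_left nhdsWithin_le_nhds
    exact le_of_tendsto hcont hev
  set v : F := (InnerProductSpace.toDual ℝ F).symm f with hv
  have hvf : ∀ x : F, ⟪v, x⟫ = f x := fun x => InnerProductSpace.toDual_symm_apply
  have hv0 : v ≠ 0 := by
    intro h
    have h1 := hf a₀ ha₀
    have h2 : f a₀ = 0 := by rw [← hvf, h, inner_zero_left]
    have h3 : f z = 0 := by rw [← hvf, h, inner_zero_left]
    rw [h2, h3] at h1; exact lt_irrefl _ h1
  have hvn : (0:ℝ) < ‖v‖ := norm_pos_iff.2 hv0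
  refine ⟨‖v‖⁻¹ • v, by rw [norm_smul, norm_inv, norm_norm, inv_mul_cancel₀ hvn.ne'], ?_⟩
  intro y hy
  rw [real_inner_smul_left]
  have : ⟪v, y - z⟫ ≤ 0 := by
    rw [inner_sub_right, hvf, hvf]
    linarith [key y hy]
  exact mul_nonpos_of_nonneg_of_nonpos (by positivity) this

set_option maxHeartbeats 1600000 in
/-- A nonempty closed convex set `C` is `β`-smooth with `diam C ≤ D` iff it is the
Minkowski sum of a nonempty closed convex set of diameter at most `D - 2/β` and a
closed ball of radius `1/β`. -/
theorem smooth_and_diam_iff_minkowski {d : ℕ} (hd : 1 ≤ d) (β D : ℝ) (hβ : 0 < β)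
    (C : Set (EuclideanSpace ℝ (Fin d))) (hne : C.Nonempty) (hcl : IsClosed C)
    (hcv : Convex ℝ C) :
    (IsSmoothSet β C ∧ DiamLE C D) ↔
      ∃ C₀ : Set (EuclideanSpace ℝ (Fin d)), C₀.Nonempty ∧ IsClosed C₀ ∧ Convex ℝ C₀ ∧
        DiamLE C₀ (D - 2 / β) ∧ C = C₀ + closedBall 0 (1 / β) := by
  have hr : (0:ℝ) < 1 / β := by positivity
  constructor
  · rintro ⟨hsm, hdiam⟩
    set r : ℝ := 1 / β with hrdef
    set C₀ : Set (EuclideanSpace ℝ (Fin d)) := {x | closedBall x r ⊆ C} with hC₀def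
    -- membership characterization
    have hmem : ∀ x : EuclideanSpace ℝ (Fin d), x ∈ C₀ ↔
        ∀ b : EuclideanSpace ℝ (Fin d), ‖b‖ ≤ r → x + b ∈ C := by
      intro x
      constructor
      · intro hx b hb
        exact hx (by rw [mem_closedBall, dist_eq_norm, add_sub_cancel_left]; exact hb)
      · intro h y hy
        have := h (y - x) (by rwa [← dist_eq_norm, ← mem_closedBall])
        rwa [add_sub_cancel] at this
    have hC₀cl : IsClosed C₀ := by
      have : C₀ = ⋂ (b : EuclideanSpace ℝ (Fin d)) (_ : ‖b‖ ≤ r), (fun x => x + b) ⁻¹' C := by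
        ext x
        simp only [Set.mem_iInter, Set.mem_preimage]
        exact hmem x
      rw [this]
      exact isClosed_iInter fun b => isClosed_iInter fun _ =>
        hcl.preimage (continuous_id.add continuous_const)
    have hC₀cv : Convex ℝ C₀ := by
      intro x hx y hy a b ha hb hab
      intro w hw
      have h1 : x + (w - (a • x + b • y)) ∈ C := hx (by
        rw [mem_closedBall, dist_eq_norm, add_sub_cancel_left, ← dist_eq_norm]
        exact hw)
      have h2 : y + (w - (a • x + b • y)) ∈ C := hy (by
        rw [mem_closedBall, dist_eq_norm, add_sub_cancel_left, ← dist_eq_norm]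
        exact hw)
      have := hcv h1 h2 ha hb hab
      have heq : a • (x + (w - (a • x + b • y))) + b • (y + (w - (a • x + b • y))) = w := by
        have step : a • (x + (w - (a • x + b • y))) + b • (y + (w - (a • x + b • y)))
            = (a • x + b • y) + (a + b) • (w - (a • x + b • y)) := by
          rw [smul_add, smul_add, add_smul]
          abel
        rw [step, hab, one_smul, add_sub_cancel]
      rwa [heq] at this
    -- basic bounds
    obtain ⟨x₀, hx₀⟩ := id hne
    have hD0 : 0 ≤ D := by simpa using hdiam x₀ hx₀ x₀ hx₀
    set e : EuclideanSpace ℝ (Fin d) := EuclideanSpace.single (⟨0, hd⟩ : Fin d) (1:ℝ) with he_def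
    have he : ‖e‖ = 1 := by rw [he_def, EuclideanSpace.norm_single]; norm_num
    -- C₀ is nonempty
    have hp : x₀ + (D + 1) • e ∉ C := by
      intro h
      have := hdiam _ h x₀ hx₀
      rw [add_sub_cancel_left, norm_smul, he] at this
      rw [Real.norm_eq_abs, abs_of_pos (by linarith)] at this
      linarith
    obtain ⟨z, hzf, n, hn1, hnN⟩ := exists_unit_normal_of_notMem hne hcl hcv hp
    have hcmem : z - r • n ∈ C₀ := hsm z hzf n hnN hn1
    have hC₀ne : C₀.Nonempty := ⟨_, hcmem⟩
    have hint : (interior C).Nonempty := by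
      refine ⟨z - r • n, mem_interior.2 ⟨ball (z - r • n) r, ?_, isOpen_ball, mem_ball_self hr⟩⟩
      exact ball_subset_closedBall.trans hcmem
    -- diameter bound for C₀
    have hC₀diam : DiamLE C₀ (D - 2 / β) := by
      intro x hx y hy
      have key : ∀ u : EuclideanSpace ℝ (Fin d), ‖u‖ = 1 → x - y = ‖x - y‖ • u → ‖x - y‖ ≤ D - 2 / β := by
        intro u hu hxyu
        have hnru : ‖r • u‖ ≤ r := by
          rw [norm_smul, hu, mul_one, Real.norm_eq_abs, abs_of_pos hr]
        have hnru' : ‖(-r) • u‖ ≤ r := by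
          rw [norm_smul, hu, mul_one, Real.norm_eq_abs, abs_neg, abs_of_pos hr]
        have hpx : x + r • u ∈ C := (hmem x).1 hx _ hnru
        have hpy : y + (-r) • u ∈ C := (hmem y).1 hy _ hnru'
        have hD := hdiam _ hpx _ hpy
        have heq : (x + r • u) - (y + (-r) • u) = (‖x - y‖ + 2 * r) • u := by
          have : (x + r • u) - (y + (-r) • u) = (x - y) + (2 * r) • u := by
            rw [two_mul, add_smul, neg_smul]
            abel
          rw [this, hxyu, ← add_smul, norm_smul, hu, mul_one, Real.norm_eq_abs,
            abs_of_nonneg (norm_nonneg _)]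
        rw [heq, norm_smul, hu, mul_one, Real.norm_eq_abs,
          abs_of_nonneg (by positivity)] at hD
        have h2r : 2 / β = 2 * r := by rw [hrdef]; ring
        rw [h2r]; linarith
      by_cases hxy : x = y
      · subst hxy
        have := key e he (by simp)
        simpa using this
      · have hxy0 : x - y ≠ 0 := sub_ne_zero.2 hxy
        have hxyn : (0:ℝ) < ‖x - y‖ := norm_pos_iff.2 hxy0
        exact key (‖x - y‖⁻¹ • (x - y))
          (by rw [norm_smul, norm_inv, norm_norm, inv_mul_cancel₀ hxyn.ne'])
          (by rw [smul_smul, mul_inv_cancel₀ hxyn.ne', one_smul])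
    refine ⟨C₀, hC₀ne, hC₀cl, hC₀cv, hC₀diam, Set.Subset.antisymm ?_ ?_⟩
    · -- C ⊆ C₀ + closedBall 0 r
      intro x hxC
      by_cases hx0 : closedBall x r ⊆ C
      · exact Set.mem_add.2 ⟨x, hx0, 0, by simp [hr.le], by simp⟩
      · obtain ⟨p, hpball, hpC⟩ := not_subset.1 hx0
        set t : ℝ := infDist x Cᶜ with htdef
        have hCc : (Cᶜ : Set (EuclideanSpace ℝ (Fin d))).Nonempty := ⟨p, hpC⟩
        have ht0 : 0 ≤ t := infDist_nonneg
        have htr : t ≤ r := le_trans (infDist_le_dist_of_mem hpC)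
          (by rw [dist_comm]; exact mem_closedBall.1 hpball)
        have hball : closedBall x t ⊆ C := by
          have hb : ball x t ⊆ C := by
            intro y hy
            by_contra h
            have h2 : infDist x Cᶜ ≤ dist x y := infDist_le_dist_of_mem (Set.mem_compl h)
            rw [mem_ball, dist_comm] at hy
            rw [← htdef] at h2
            linarith
          rcases eq_or_lt_of_le ht0 with h0 | h0
          · rw [← h0, closedBall_zero]
            exact singleton_subset_iff.2 hxC
          · rw [← closure_ball x h0.ne']
            exact closure_minimal hb hcl
        obtain ⟨z, hzmem, hzd⟩ := isClosed_closure.exists_infDist_eq_dist hCc.closure x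
        rw [infDist_closure, ← htdef] at hzd
        have hzC : z ∈ C := by
          rcases eq_or_lt_of_le ht0 with h0 | h0
          · have : dist x z = 0 := by rw [← hzd, ← h0]
            rw [dist_eq_zero] at this
            rwa [← this]
          · exact hball (by rw [mem_closedBall, dist_comm, ← hzd])
        have hzfront : z ∈ frontier C := by
          refine ⟨subset_closure hzC, ?_⟩
          rw [closure_compl] at hzmem
          exact hzmem
        obtain ⟨n, hn1, hnN⟩ := exists_unit_normal_of_frontier hcv hint hzfront
        have hcmem2 : z - r • n ∈ C₀ := hsm z hzfront n hnN hn1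
        have habove : x + t • n ∈ C := hball (by
          rw [mem_closedBall, dist_eq_norm, add_sub_cancel_left, norm_smul, hn1, mul_one,
            Real.norm_eq_abs, abs_of_nonneg ht0])
        have hinner : ⟪n, x - z⟫ + t ≤ 0 := by
          have := hnN _ habove
          have heq : (x + t • n) - z = (x - z) + t • n := by abel
          rw [heq, inner_add_right, real_inner_smul_right, real_inner_self_eq_norm_sq, hn1]
            at this
          linarith [this]
        have hxz : ‖x - z‖ = t := by rw [← dist_eq_norm, ← hzd]
        have hsq : ‖x - (z - r • n)‖ ^ 2 ≤ (r - t) ^ 2 := by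
          have heq : x - (z - r • n) = (x - z) + r • n := by abel
          rw [heq, norm_add_sq_real, hxz]
          have h1 : ⟪x - z, r • n⟫ = r * ⟪n, x - z⟫ := by
            rw [real_inner_smul_right, real_inner_comm]
          have h2 : ‖r • n‖ = r := by
            rw [norm_smul, hn1, mul_one, Real.norm_eq_abs, abs_of_pos hr]
          rw [h1, h2]
          nlinarith [hinner, hr]
        have hle : ‖x - (z - r • n)‖ ≤ r := by
          nlinarith [norm_nonneg (x - (z - r • n)), htr]
        refine Set.mem_add.2 ⟨z - r • n, hcmem2, x - (z - r • n), ?_, by abel⟩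
        rwa [mem_closedBall_zero_iff]
    · -- C₀ + closedBall 0 r ⊆ C
      rintro w hw
      obtain ⟨a, ha, b, hb, rfl⟩ := Set.mem_add.1 hw
      exact (hmem a).1 ha b (mem_closedBall_zero_iff.1 hb)
  · rintro ⟨C₀, hC₀ne, hC₀cl, hC₀cv, hC₀diam, rfl⟩
    constructor
    · -- smoothness
      intro z hzf n hnN hn1
      have hzC : z ∈ C₀ + closedBall 0 (1/β) := hcl.frontier_subset hzf
      obtain ⟨a, ha, b, hb, hab⟩ := Set.mem_add.1 hzC
      have hbr : ‖b‖ ≤ 1/β := mem_closedBall_zero_iff.1 hb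
      have hx : a + (1/β) • n ∈ C₀ + closedBall 0 (1/β) :=
        Set.mem_add.2 ⟨a, ha, (1/β) • n, by
          rw [mem_closedBall_zero_iff, norm_smul, hn1, mul_one, Real.norm_eq_abs,
            abs_of_pos hr], rfl⟩
      have h1 := hnN _ hx
      have heq : (a + (1/β) • n) - z = (1/β) • n - b := by rw [← hab]; abel
      rw [heq, inner_sub_right, real_inner_smul_right, real_inner_self_eq_norm_sq, hn1] at h1
      have h3 : ⟪n, b⟫ ≤ ‖b‖ := by
        have := real_inner_le_norm n b
        rwa [hn1, one_mul] at this
      have hbn : ‖b‖ = 1/β := le_antisymm hbr (by nlinarith)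
      have hinner_eq : ⟪n, b⟫ = ‖n‖ * ‖b‖ := by rw [hn1, one_mul, hbn]; nlinarith
      have hb_eq : b = (1/β) • n := by
        have := inner_eq_norm_mul_iff_real.1 hinner_eq
        rw [hbn, hn1, one_smul] at this
        exact this.symm
      have hcenter : z - (1/β) • n = a := by rw [← hab, hb_eq]; abel
      rw [hcenter]
      intro y hy
      refine Set.mem_add.2 ⟨a, ha, y - a, ?_, by abel⟩
      rw [mem_closedBall_zero_iff, ← dist_eq_norm]
      exact mem_closedBall.1 hy
    · -- diameter
      rintro x hx y hy
      obtain ⟨a, ha, b, hb, rfl⟩ := Set.mem_add.1 hx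
      obtain ⟨a', ha', b', hb', rfl⟩ := Set.mem_add.1 hy
      have h1 : ‖a - a'‖ ≤ D - 2/β := hC₀diam a ha a' ha'
      have h2 : ‖b‖ ≤ 1/β := mem_closedBall_zero_iff.1 hb
      have h3 : ‖b'‖ ≤ 1/β := mem_closedBall_zero_iff.1 hb'
      have heq : (a + b) - (a' + b') = (a - a') + (b - b') := by abel
      rw [heq]
      calc ‖(a - a') + (b - b')‖ ≤ ‖a - a'‖ + ‖b - b'‖ := norm_add_le _ _
        _ ≤ ‖a - a'‖ + (‖b‖ + ‖b'‖) := by linarith [norm_sub_le b b']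
        _ ≤ (D - 2/β) + (1/β + 1/β) := by linarith
        _ = D := by field_simp; ring
end
end

section
/- Let D ≥ 0 and let (z_i, v_i)_{i∈I}, (x_k, δ_k)_{k∈K} be interpolation data in E, with n_i = v_i/‖v_i‖. There exists a nonempty closed convex set C ⊆ E with diam(C) ≤ D that interpolates the data (that is, z_i ∈ C and v_i ∈ N_C(z_i) for all i ∈ I, and x_k ∈ int_{δ_k} C for all k ∈ K) if and only if for all i, j ∈ I and all k, l ∈ K: ⟪n_i, z_j − z_i⟫ ≤ 0; ⟪n_i, x_k + δ_k·n_i − z_i⟫ ≤ 0; ‖x_k − x_l‖ ≤ D − δ_k − δ_l; ‖z_i − x_k‖ ≤ D − δ_k; and ‖z_i − z_j‖ ≤ D. -/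
open Metric Set
open scoped RealInnerProductSpace Pointwise

noncomputable section

variable {F : Type*} [NormedAddCommGroup F] [InnerProductSpace ℝ F]

/-- A set `C` is `α`-strongly convex if at every boundary point `z`, every unit normal
vector `n` gives a closed ball of radius `1/α` centered at `z - (1/α) n` containing `C`. -/
def IsStronglyConvexSet (α : ℝ) (C : Set F) : Prop :=
  ∀ z ∈ frontier C, ∀ n ∈ normalCone C z, ‖n‖ = 1 →
    C ⊆ closedBall (z - (1 / α) • n) (1 / α)

/-- The `δ`-interior of a set: points whose closed `δ`-ball lies inside the set. -/
def deltaInterior (δ : ℝ) (C : Set F) : Set F :=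
  {x | closedBall x δ ⊆ C}

/-- The set `C` interpolates the data: `z i ∈ C` with normal vector `v i`, and
`x k` lies in the `δ k`-interior of `C`. -/
def InterpolatedBy {ι κ : Type*} (C : Set F) (z v : ι → F) (x : κ → F) (δ : κ → ℝ) : Prop :=
  (∀ i, z i ∈ C ∧ v i ∈ normalCone C (z i)) ∧ ∀ k, x k ∈ deltaInterior (δ k) C

/-- The interpolation conditions `Interp(α, β, D; λ)`, with `n i = v i / ‖v i‖`,
`r = 1/α - 1/β` and `s k = max 0 (δ k - 1/β)`. -/
def InterpCond {ι κ : Type*} (α β D lam : ℝ) (z v : ι → F) (x : κ → F) (δ : κ → ℝ) : Prop :=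
  ∃ w : κ → F,
    (∀ i j, ‖z i - (1 / α) • (‖v i‖⁻¹ • v i) - (z j - (1 / β) • (‖v j‖⁻¹ • v j))‖ ≤
      1 / α - 1 / β) ∧
    (∀ i k, ‖z i - (1 / α) • (‖v i‖⁻¹ • v i) - w k‖ ≤
      (1 / α - 1 / β) - max 0 (δ k - 1 / β)) ∧
    (∀ k, ‖x k - w k‖ ≤ 1 / β - δ k + max 0 (δ k - 1 / β)) ∧
    (∀ i j, ‖z i - (1 / β) • (‖v i‖⁻¹ • v i) - (z j - (1 / β) • (‖v j‖⁻¹ • v j))‖ ≤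
      lam * (D - 2 / β)) ∧
    (∀ i k, ‖z i - (1 / β) • (‖v i‖⁻¹ • v i) - w k‖ ≤
      lam * (D - 2 / β) - max 0 (δ k - 1 / β)) ∧
    (∀ k l, ‖w k - w l‖ ≤ lam * (D - 2 / β) - max 0 (δ k - 1 / β) - max 0 (δ l - 1 / β))


lemma far_points {G : Type*} [NormedAddCommGroup G] [NormedSpace ℝ G]
    (e : G) (he : ‖e‖ = 1) (p q : G) (s t : ℝ) (hs : 0 ≤ s) (ht : 0 ≤ t) :
    ∃ a b : G, ‖a - p‖ ≤ s ∧ ‖b - q‖ ≤ t ∧ ‖p - q‖ + s + t ≤ ‖a - b‖ := by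
  classical
  set u : G := if p = q then e else ‖p - q‖⁻¹ • (p - q) with hu
  have hunorm : ‖u‖ = 1 := by
    rw [hu]
    split_ifs with h
    · exact he
    · exact norm_smul_inv_norm (sub_ne_zero.mpr h)
  refine ⟨p + s • u, q - t • u, ?_, ?_, ?_⟩
  · simp [norm_smul, hunorm, abs_of_nonneg hs]
  · simp [norm_smul, hunorm, abs_of_nonneg ht]
  · have key : p + s • u - (q - t • u) = (p - q) + (s + t) • u := by module
    rw [key]
    by_cases h : p = q
    · rw [h, sub_self, norm_zero, zero_add, zero_add, norm_smul, Real.norm_eq_abs,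
        abs_of_nonneg (add_nonneg hs ht), hunorm, mul_one]
    · have hne : ‖p - q‖ ≠ 0 := norm_ne_zero_iff.mpr (sub_ne_zero.mpr h)
      have huval : (p - q) + (s + t) • u = (1 + (s + t) * ‖p - q‖⁻¹) • (p - q) := by
        rw [hu, if_neg h, smul_smul, add_smul, one_smul]
      have hpos : 0 ≤ 1 + (s + t) * ‖p - q‖⁻¹ := by positivity
      rw [huval, norm_smul, Real.norm_eq_abs, abs_of_nonneg hpos, add_mul, one_mul,
        mul_assoc, inv_mul_cancel₀ hne, mul_one]
      linarith

/-- Interpolation by a bounded-diameter convex set: a nonempty closed convex set `C` with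
`diam C ≤ D` interpolating the data exists iff the five listed conditions hold,
where `n i = v i / ‖v i‖`. -/
theorem convex_set_interpolation {d : ℕ} (hd : 1 ≤ d) {ι κ : Type*} [Fintype ι] [Fintype κ]
    (D : ℝ) (hD : 0 ≤ D) (z v : ι → EuclideanSpace ℝ (Fin d)) (hv : ∀ i, v i ≠ 0)
    (x : κ → EuclideanSpace ℝ (Fin d)) (δ : κ → ℝ) (hδ : ∀ k, 0 ≤ δ k) :
    (∃ C : Set (EuclideanSpace ℝ (Fin d)), C.Nonempty ∧ IsClosed C ∧ Convex ℝ C ∧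
        DiamLE C D ∧ InterpolatedBy C z v x δ) ↔
      ((∀ i j, ⟪‖v i‖⁻¹ • v i, z j - z i⟫ ≤ 0) ∧
       (∀ i k, ⟪‖v i‖⁻¹ • v i, x k + δ k • (‖v i‖⁻¹ • v i) - z i⟫ ≤ 0) ∧
       (∀ k l, ‖x k - x l‖ ≤ D - δ k - δ l) ∧
       (∀ i k, ‖z i - x k‖ ≤ D - δ k) ∧
       (∀ i j, ‖z i - z j‖ ≤ D)) := by
  classical
  have hn1 : ∀ i, ‖(‖v i‖⁻¹ • v i : EuclideanSpace ℝ (Fin d))‖ = 1 :=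
    fun i => norm_smul_inv_norm (hv i)
  have hvi : ∀ i, v i = ‖v i‖ • (‖v i‖⁻¹ • v i) := fun i =>
    (smul_inv_smul₀ (norm_ne_zero_iff.mpr (hv i)) (v i)).symm
  obtain ⟨e, he⟩ : ∃ e : EuclideanSpace ℝ (Fin d), ‖e‖ = 1 := by
    refine ⟨EuclideanSpace.single ⟨0, hd⟩ (1 : ℝ), ?_⟩
    simp [EuclideanSpace.norm_single]
  have hscale : ∀ (i : ι) (w : EuclideanSpace ℝ (Fin d)),
      ⟪v i, w⟫ ≤ 0 → ⟪‖v i‖⁻¹ • v i, w⟫ ≤ 0 := by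
    intro i w hw
    rw [real_inner_smul_left]
    exact mul_nonpos_of_nonneg_of_nonpos (inv_nonneg.mpr (norm_nonneg _)) hw
  have hscale' : ∀ (i : ι) (w : EuclideanSpace ℝ (Fin d)),
      ⟪‖v i‖⁻¹ • v i, w⟫ ≤ 0 → ⟪v i, w⟫ ≤ 0 := by
    intro i w hw
    rw [hvi i, real_inner_smul_left]
    exact mul_nonpos_of_nonneg_of_nonpos (norm_nonneg _) hw
  constructor
  · rintro ⟨C, hCne, hCcl, hCconv, hdiam, ⟨hzv, hx⟩⟩
    refine ⟨fun i j => hscale i _ ((hzv i).2 (z j) (hzv j).1), ?_, ?_, ?_,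
      fun i j => hdiam (z i) (hzv i).1 (z j) (hzv j).1⟩
    · intro i k
      have hp : x k + δ k • (‖v i‖⁻¹ • v i) ∈ closedBall (x k) (δ k) := by
        rw [mem_closedBall, dist_eq_norm]
        simp [norm_smul, hn1 i, abs_of_nonneg (hδ k)]
      exact hscale i _ ((hzv i).2 _ (hx k hp))
    · intro k l
      obtain ⟨a, b, ha, hb, hab⟩ := far_points e he (x k) (x l) (δ k) (δ l) (hδ k) (hδ l)
      have haC : a ∈ C := hx k (by rw [mem_closedBall, dist_eq_norm]; exact ha)
      have hbC : b ∈ C := hx l (by rw [mem_closedBall, dist_eq_norm]; exact hb)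
      have := hdiam a haC b hbC
      linarith
    · intro i k
      obtain ⟨a, b, ha, hb, hab⟩ := far_points e he (z i) (x k) 0 (δ k) le_rfl (hδ k)
      have haz : a = z i := by
        have := norm_le_zero_iff.mp ha
        rwa [sub_eq_zero] at this
      have hbC : b ∈ C := hx k (by rw [mem_closedBall, dist_eq_norm]; exact hb)
      have := hdiam a (haz ▸ (hzv i).1) b hbC
      linarith
  · rintro ⟨h1, h2, h3, h4, h5⟩
    by_cases hne : Nonempty ι ∨ Nonempty κ
    · set S : Set (EuclideanSpace ℝ (Fin d)) :=
        (Set.range z) ∪ ⋃ k, closedBall (x k) (δ k) with hS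
      have hSne : S.Nonempty := by
        rcases hne with hι | hκ
        · obtain ⟨i⟩ := hι
          exact ⟨z i, Or.inl ⟨i, rfl⟩⟩
        · obtain ⟨k⟩ := hκ
          exact ⟨x k, Or.inr (mem_iUnion.mpr ⟨k, mem_closedBall_self (hδ k)⟩)⟩
      have hSD : ∀ p ∈ S, ∀ q ∈ S, ‖p - q‖ ≤ D := by
        rintro p (⟨i, rfl⟩ | hp) q (⟨j, rfl⟩ | hq)
        · exact h5 i j
        · obtain ⟨k, hk⟩ := mem_iUnion.mp hq
          rw [mem_closedBall] at hk
          rw [← dist_eq_norm]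
          have hzx : dist (z i) (x k) ≤ D - δ k := by rw [dist_eq_norm]; exact h4 i k
          have hxq : dist (x k) q ≤ δ k := by rw [dist_comm]; exact hk
          linarith [dist_triangle (z i) (x k) q]
        · obtain ⟨k, hk⟩ := mem_iUnion.mp hp
          rw [mem_closedBall] at hk
          rw [← dist_eq_norm]
          have hzx : dist (x k) (z j) ≤ D - δ k := by
            rw [dist_comm, dist_eq_norm]; exact h4 j k
          linarith [dist_triangle p (x k) (z j)]
        · obtain ⟨k, hk⟩ := mem_iUnion.mp hp
          obtain ⟨l, hl⟩ := mem_iUnion.mp hq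
          rw [mem_closedBall] at hk hl
          rw [← dist_eq_norm]
          have hkl : dist (x k) (x l) ≤ D - δ k - δ l := by
            rw [dist_eq_norm]; exact h3 k l
          have hlq : dist (x l) q ≤ δ l := by rw [dist_comm]; exact hl
          linarith [dist_triangle p (x k) q, dist_triangle (x k) (x l) q]
      have hSn : ∀ i, ∀ p ∈ S, ⟪‖v i‖⁻¹ • v i, p - z i⟫ ≤ 0 := by
        rintro i p (⟨j, rfl⟩ | hp)
        · exact h1 i j
        · obtain ⟨k, hk⟩ := mem_iUnion.mp hp
          rw [mem_closedBall, dist_eq_norm] at hk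
          have hsplit : p - z i = (p - x k) + (x k - z i) := by abel
          rw [hsplit, inner_add_right]
          have hCS : ⟪‖v i‖⁻¹ • v i, p - x k⟫ ≤ δ k := by
            calc ⟪‖v i‖⁻¹ • v i, p - x k⟫ ≤ ‖(‖v i‖⁻¹ • v i : EuclideanSpace ℝ (Fin d))‖
                * ‖p - x k‖ := real_inner_le_norm _ _
            _ ≤ 1 * δ k := by rw [hn1 i]; exact mul_le_mul_of_nonneg_left hk zero_le_one
            _ = δ k := one_mul _
          have h2' := h2 i k
          have hexp : x k + δ k • (‖v i‖⁻¹ • v i) - z i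
              = (x k - z i) + δ k • (‖v i‖⁻¹ • v i) := by abel
          rw [hexp, inner_add_right, real_inner_smul_right,
            real_inner_self_eq_norm_sq, hn1 i, one_pow, mul_one] at h2'
          linarith
      set C : Set (EuclideanSpace ℝ (Fin d)) := closure (convexHull ℝ S) with hC
      have hSC : S ⊆ C := (subset_convexHull ℝ S).trans subset_closure
      refine ⟨C, hSne.mono hSC, isClosed_closure, (convex_convexHull ℝ S).closure, ?_, ?_, ?_⟩
      · intro a ha b hb
        have hsub : ∀ q ∈ S, ∀ c ∈ C, ‖c - q‖ ≤ D := by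
          intro q hq c hc
          have hsubset : C ⊆ closedBall q D := by
            rw [hC]
            refine closure_minimal (convexHull_min ?_ (convex_closedBall q D))
              isClosed_closedBall
            intro p hp
            rw [mem_closedBall, dist_eq_norm]
            exact hSD p hp q hq
          have := hsubset hc
          rwa [mem_closedBall, dist_eq_norm] at this
        have hsubset : C ⊆ closedBall a D := by
          rw [hC]
          refine closure_minimal (convexHull_min ?_ (convex_closedBall a D))
            isClosed_closedBall
          intro q hq
          rw [mem_closedBall, dist_comm, dist_eq_norm]
          exact hsub q hq a ha
        have := hsubset hb
        rwa [mem_closedBall, dist_comm, dist_eq_norm] at this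
      · intro i
        refine ⟨hSC (Or.inl ⟨i, rfl⟩), ?_⟩
        intro y hy
        have hclosed : IsClosed {p : EuclideanSpace ℝ (Fin d) |
            ⟪‖v i‖⁻¹ • v i, p - z i⟫ ≤ 0} := by
          have hcont : Continuous fun p : EuclideanSpace ℝ (Fin d) =>
              ⟪‖v i‖⁻¹ • v i, p - z i⟫ :=
            continuous_const.inner (continuous_id.sub continuous_const)
          exact isClosed_le hcont continuous_const
        have hhalf : Convex ℝ {p : EuclideanSpace ℝ (Fin d) |
            ⟪‖v i‖⁻¹ • v i, p - z i⟫ ≤ 0} := by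
          have heq : {p : EuclideanSpace ℝ (Fin d) | ⟪‖v i‖⁻¹ • v i, p - z i⟫ ≤ 0}
              = {p : EuclideanSpace ℝ (Fin d) | ⟪‖v i‖⁻¹ • v i, p⟫ ≤ ⟪‖v i‖⁻¹ • v i, z i⟫} := by
            ext p
            simp [inner_sub_right, sub_nonpos]
          rw [heq]
          exact convex_halfSpace_le
            ⟨fun a b => inner_add_right _ _ _, fun c a => real_inner_smul_right _ _ _⟩ _
        have hmem : y ∈ {p : EuclideanSpace ℝ (Fin d) | ⟪‖v i‖⁻¹ • v i, p - z i⟫ ≤ 0} := by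
          rw [hC] at hy
          exact closure_minimal (convexHull_min (hSn i) hhalf) hclosed hy
        exact hscale' i _ hmem
      · intro k y hy
        exact hSC (Or.inr (mem_iUnion.mpr ⟨k, hy⟩))
    · push_neg at hne
      obtain ⟨hι, hκ⟩ := hne
      refine ⟨{0}, ⟨0, rfl⟩, isClosed_singleton, convex_singleton 0, ?_, ?_, ?_⟩
      · intro a ha b hb
        rw [mem_singleton_iff] at ha hb
        subst ha; subst hb
        simpa using hD
      · exact fun i => (@IsEmpty.false _ hι i).elim
      · exact fun k => (@IsEmpty.false _ hκ k).elim
end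
end

section
/- Let β > 0 and D ≥ 2/β, and let (z_i, v_i)_{i∈I}, (x_k, δ_k)_{k∈K} be interpolation data in E, with n_i = v_i/‖v_i‖ and s_k = max(0, δ_k − 1/β). The data is interpolated by some nonempty closed convex β-smooth set C with diam(C) ≤ D if and only if there exist w_k ∈ E (k ∈ K) such that for all i, j ∈ I and k, l ∈ K: ⟪n_i, z_j − (1/β)n_j − z_i + (1/β)n_i⟫ ≤ 0; ⟪n_i, w_k + s_k·n_i − z_i + (1/β)n_i⟫ ≤ 0; ‖x_k − w_k‖ ≤ 1/β − δ_k + s_k; ‖z_i − (1/β)n_i − (z_j − (1/β)n_j)‖ ≤ D − 2/β; ‖z_i − (1/β)n_i − w_k‖ ≤ D − 2/β − s_k; and ‖w_k − w_l‖ ≤ D − 2/β − s_k − s_l. -/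
open Metric Set
open scoped RealInnerProductSpace Pointwise

noncomputable section

variable {F : Type*} [NormedAddCommGroup F] [InnerProductSpace ℝ F]

lemma norm_inv_smul_self {v : F} (hv : v ≠ 0) : ‖‖v‖⁻¹ • v‖ = 1 := by
  rw [norm_smul, norm_inv, norm_norm, inv_mul_cancel₀ (norm_ne_zero_iff.2 hv)]

/-- `K + closedBall 0 (1/β)` is β-smooth provided it is closed. -/
lemma isSmoothSet_of_eq_add_ball {β : ℝ} (hβ : 0 < β) {K C : Set F}
    (hC : C = K + closedBall 0 (1 / β)) (hcl : IsClosed C) : IsSmoothSet β C := by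
  have hβ' : (0:ℝ) < 1 / β := by positivity
  intro zz hz n hn hn1
  have hzC : zz ∈ C := hcl.frontier_subset hz
  rw [hC] at hzC
  obtain ⟨p, hp, u, hu, rfl⟩ := hzC
  rw [mem_closedBall, dist_zero_right] at hu
  have hx : p + (1 / β) • n ∈ C := by
    rw [hC]
    exact add_mem_add hp (by
      rw [mem_closedBall, dist_zero_right, norm_smul, hn1, mul_one]
      rw [Real.norm_eq_abs, abs_of_pos hβ'])
  have h0 := hn _ hx
  have harg : p + (1 / β) • n - (p + u) = (1 / β) • n - u := by abel
  rw [harg, inner_sub_right, real_inner_smul_right, real_inner_self_eq_norm_sq, hn1] at h0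
  have hcs : ⟪n, u⟫ ≤ ‖n‖ * ‖u‖ := real_inner_le_norm n u
  have h1 : ⟪n, u⟫ = ‖n‖ * ‖u‖ := by rw [hn1] at hcs ⊢; nlinarith
  have h2 : ‖u‖ = 1 / β := by rw [hn1] at h1; nlinarith
  have h3 : ‖u‖ • n = ‖n‖ • u := inner_eq_norm_mul_iff_real.1 h1
  rw [h2, hn1, one_smul] at h3
  have hcenter : p + u - (1 / β) • n = p := by rw [← h3]; abel
  rw [hcenter, hC]
  intro y hy
  have : y = p + (y - p) := by abel
  rw [this]
  exact add_mem_add hp (by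
    rw [mem_closedBall] at hy ⊢
    rwa [dist_eq_norm, sub_zero, ← dist_eq_norm])

/-- pairwise distance bound extends to the closure of the convex hull. -/
lemma closure_convexHull_dist_le {S : Set F} {M : ℝ}
    (h : ∀ x ∈ S, ∀ y ∈ S, dist x y ≤ M) :
    ∀ x ∈ closure (convexHull ℝ S), ∀ y ∈ closure (convexHull ℝ S), dist x y ≤ M := by
  have step1 : ∀ y ∈ S, convexHull ℝ S ⊆ closedBall y M := fun y hy =>
    convexHull_min (fun x hx => mem_closedBall.2 (h x hx y hy)) (convex_closedBall _ _)
  have step2 : ∀ y ∈ S, closure (convexHull ℝ S) ⊆ closedBall y M := fun y hy =>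
    closure_minimal (step1 y hy) isClosed_closedBall
  have step3 : ∀ x ∈ closure (convexHull ℝ S), S ⊆ closedBall x M := by
    intro x hx y hy
    have := step2 y hy hx
    rw [mem_closedBall] at this ⊢
    rwa [dist_comm]
  intro x hx y hy
  have hsub : closure (convexHull ℝ S) ⊆ closedBall x M :=
    closure_minimal (convexHull_min (step3 x hx) (convex_closedBall _ _)) isClosed_closedBall
  have := hsub hy
  rw [mem_closedBall] at this
  rwa [dist_comm]

/-- a linear inequality valid on `S` extends to the closure of the convex hull. -/
lemma closure_convexHull_inner_le {S : Set F} {n c : F}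
    (h : ∀ y ∈ S, ⟪n, y - c⟫ ≤ 0) :
    ∀ a ∈ closure (convexHull ℝ S), ⟪n, a - c⟫ ≤ 0 := by
  have hlin : IsLinearMap ℝ (fun a : F => ⟪n, a⟫) :=
    ⟨fun a b => inner_add_right n a b, fun s a => real_inner_smul_right n a s⟩
  have hconv : Convex ℝ {a : F | ⟪n, a⟫ ≤ ⟪n, c⟫} := convex_halfSpace_le hlin _
  have hclosed : IsClosed {a : F | ⟪n, a⟫ ≤ ⟪n, c⟫} :=
    isClosed_le (Continuous.inner continuous_const continuous_id) continuous_const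
  have hS : S ⊆ {a : F | ⟪n, a⟫ ≤ ⟪n, c⟫} := by
    intro y hy
    have := h y hy
    rw [inner_sub_right] at this
    simpa [mem_setOf_eq, sub_nonpos] using this
  intro a ha
  have := closure_minimal (convexHull_min hS hconv) hclosed ha
  rw [mem_setOf_eq] at this
  rw [inner_sub_right]
  linarith

lemma dist_add_radii_le {d : ℕ} (hd : 1 ≤ d) {C : Set (EuclideanSpace ℝ (Fin d))} {D r r' : ℝ}
    (hr : 0 ≤ r) (hr' : 0 ≤ r') (hdiam : ∀ x ∈ C, ∀ y ∈ C, ‖x - y‖ ≤ D)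
    {a b : EuclideanSpace ℝ (Fin d)} (ha : closedBall a r ⊆ C) (hb : closedBall b r' ⊆ C) :
    ‖a - b‖ + r + r' ≤ D := by
  obtain ⟨e, he1, hae⟩ : ∃ e : EuclideanSpace ℝ (Fin d), ‖e‖ = 1 ∧ a - b = ‖a - b‖ • e := by
    by_cases hab : a = b
    · exact ⟨EuclideanSpace.single ⟨0, hd⟩ (1 : ℝ), by simp [EuclideanSpace.norm_single],
        by simp [hab]⟩
    · have h0 : a - b ≠ 0 := sub_ne_zero.2 hab
      exact ⟨‖a - b‖⁻¹ • (a - b), norm_inv_smul_self h0,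
        (smul_inv_smul₀ (norm_ne_zero_iff.2 h0) _).symm⟩
  have hp : a + r • e ∈ C := ha (by
    rw [mem_closedBall, dist_eq_norm]
    simp [norm_smul, he1, abs_of_nonneg hr])
  have hq : b - r' • e ∈ C := hb (by
    rw [mem_closedBall, dist_eq_norm]
    simp [norm_smul, he1, abs_of_nonneg hr'])
  have hDle := hdiam _ hp _ hq
  have harg : a + r • e - (b - r' • e) = (‖a - b‖ + r + r') • e := by
    rw [add_smul, add_smul, ← hae]; abel
  rw [harg, norm_smul, he1, mul_one, Real.norm_eq_abs,
    abs_of_nonneg (by positivity)] at hDle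
  exact hDle

set_option maxHeartbeats 1600000 in
/-- Interpolation by smooth convex sets of bounded diameter (`D ≥ 2/β`): interpolability
is equivalent to the existence of auxiliary points `w k` satisfying the listed conditions,
where `n i = v i / ‖v i‖` and `s k = max 0 (δ k - 1/β)`. -/
theorem smooth_interpolation {d : ℕ} (hd : 1 ≤ d)
    {ι κ : Type*} [Fintype ι] [Fintype κ] (β D : ℝ) (hβ : 0 < β) (hD : 2 / β ≤ D)
    (z v : ι → EuclideanSpace ℝ (Fin d)) (hv : ∀ i, v i ≠ 0)
    (x : κ → EuclideanSpace ℝ (Fin d)) (δ : κ → ℝ) (hδ : ∀ k, 0 ≤ δ k) :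
    (∃ C : Set (EuclideanSpace ℝ (Fin d)), C.Nonempty ∧ IsClosed C ∧ Convex ℝ C ∧
        IsSmoothSet β C ∧ DiamLE C D ∧ InterpolatedBy C z v x δ) ↔
      ∃ w : κ → EuclideanSpace ℝ (Fin d),
        (∀ i j, ⟪‖v i‖⁻¹ • v i,
            z j - (1 / β) • (‖v j‖⁻¹ • v j) - z i + (1 / β) • (‖v i‖⁻¹ • v i)⟫ ≤ 0) ∧
        (∀ i k, ⟪‖v i‖⁻¹ • v i,
            w k + max 0 (δ k - 1 / β) • (‖v i‖⁻¹ • v i) - z i + (1 / β) • (‖v i‖⁻¹ • v i)⟫ ≤ 0) ∧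
        (∀ k, ‖x k - w k‖ ≤ 1 / β - δ k + max 0 (δ k - 1 / β)) ∧
        (∀ i j, ‖z i - (1 / β) • (‖v i‖⁻¹ • v i) - (z j - (1 / β) • (‖v j‖⁻¹ • v j))‖ ≤
          D - 2 / β) ∧
        (∀ i k, ‖z i - (1 / β) • (‖v i‖⁻¹ • v i) - w k‖ ≤ D - 2 / β - max 0 (δ k - 1 / β)) ∧
        (∀ k l, ‖w k - w l‖ ≤ D - 2 / β - max 0 (δ k - 1 / β) - max 0 (δ l - 1 / β)) := by
  have hβ' : (0:ℝ) < 1 / β := by positivity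
  have h2β : (2:ℝ) / β = 1 / β + 1 / β := by ring
  set n : ι → EuclideanSpace ℝ (Fin d) := fun i => ‖v i‖⁻¹ • v i with hn_def
  constructor
  · rintro ⟨C, hCne, hCcl, hCconv, hCsm, hCdiam, hInterp⟩
    have hzv := hInterp.1
    have hxk := hInterp.2
    have hn1 : ∀ i, ‖n i‖ = 1 := fun i => norm_inv_smul_self (hv i)
    have hnormal : ∀ i, n i ∈ normalCone C (z i) := by
      intro i y hy
      have h0 := (hzv i).2 y hy
      show ⟪‖v i‖⁻¹ • v i, y - z i⟫ ≤ 0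
      rw [real_inner_smul_left]
      have := mul_le_mul_of_nonneg_left h0 (inv_nonneg.2 (norm_nonneg (v i)))
      simpa using this
    have hfront : ∀ i, z i ∈ frontier C := by
      intro i
      rw [hCcl.frontier_eq, mem_diff]
      refine ⟨(hzv i).1, fun hint => ?_⟩
      rw [mem_interior_iff_mem_nhds, Metric.mem_nhds_iff] at hint
      obtain ⟨ε, hε, hball⟩ := hint
      have hyC : z i + (ε / 2) • n i ∈ C := hball (by
        rw [mem_ball, dist_eq_norm, add_sub_cancel_left, norm_smul, hn1 i, mul_one,
          Real.norm_eq_abs, abs_of_pos (by linarith)]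
        linarith)
      have h0 := (hzv i).2 _ hyC
      rw [add_sub_cancel_left, real_inner_smul_right] at h0
      have hvv : (0:ℝ) < ⟪v i, n i⟫ := by
        rw [hn_def]
        simp only [real_inner_smul_right]
        rw [real_inner_self_eq_norm_sq]
        have hvpos : 0 < ‖v i‖ := norm_pos_iff.2 (hv i)
        positivity
      nlinarith
    have hcball : ∀ i, closedBall (z i - (1 / β) • n i) (1 / β) ⊆ C := fun i =>
      hCsm (z i) (hfront i) (n i) (hnormal i) (hn1 i)
    have hwex : ∀ k, ∃ wk, ‖x k - wk‖ ≤ 1 / β - δ k + max 0 (δ k - 1 / β) ∧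
        closedBall wk (max 0 (δ k - 1 / β) + 1 / β) ⊆ C := by
      intro k
      have hxkC : closedBall (x k) (δ k) ⊆ C := hxk k
      by_cases hc : closedBall (x k) (max 0 (δ k - 1 / β) + 1 / β) ⊆ C
      · refine ⟨x k, ?_, hc⟩
        rw [sub_self, norm_zero]
        rcases le_total (δ k) (1 / β) with h | h
        · have hm : max 0 (δ k - 1 / β) = 0 := max_eq_left (by linarith)
          rw [hm]; linarith
        · have hm : max 0 (δ k - 1 / β) = δ k - 1 / β := max_eq_right (by linarith)
          rw [hm]; linarith
      · have hs0 : max 0 (δ k - 1 / β) = 0 := by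
          rcases le_or_gt (δ k) (1 / β) with h | h
          · exact max_eq_left (by linarith)
          · exfalso
            apply hc
            have hm : max 0 (δ k - 1 / β) + 1 / β = δ k := by
              rw [max_eq_right (by linarith)]; ring
            rw [hm]
            exact hxkC
        rw [hs0] at hc ⊢
        rw [zero_add] at hc
        have hCcompl : Set.Nonempty Cᶜ := by
          obtain ⟨c₀, hc₀⟩ := hCne
          refine ⟨c₀ + (D + 1) • EuclideanSpace.single (⟨0, hd⟩ : Fin d) (1:ℝ), fun hmem => ?_⟩
          have hdd := hCdiam c₀ hc₀ _ hmem
          rw [show c₀ - (c₀ + (D + 1) • EuclideanSpace.single (⟨0, hd⟩ : Fin d) (1:ℝ))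
              = -((D + 1) • EuclideanSpace.single (⟨0, hd⟩ : Fin d) (1:ℝ)) by abel,
            norm_neg, norm_smul, EuclideanSpace.norm_single] at hdd
          have hD0 : 0 < D := lt_of_lt_of_le (by positivity) hD
          rw [Real.norm_eq_abs, abs_of_pos (by linarith), norm_one, mul_one] at hdd
          linarith
        set t := infDist (x k) Cᶜ with ht_def
        have ht0 : 0 ≤ t := infDist_nonneg
        have hδt : δ k ≤ t := by
          by_contra h'
          push_neg at h'
          obtain ⟨y, hyc, hyd⟩ := (infDist_lt_iff hCcompl).1 h'
          exact hyc (hxkC (by rw [mem_closedBall, dist_comm]; linarith))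
        have htball : closedBall (x k) t ⊆ C := by
          have hob : ball (x k) t ⊆ C := by
            intro y hy
            by_contra hyC
            have hle := infDist_le_dist_of_mem (x := x k) (show y ∈ Cᶜ from hyC)
            rw [mem_ball, dist_comm] at hy
            rw [← ht_def] at hle
            linarith
          rcases eq_or_lt_of_le ht0 with h0 | h0
          · intro y hy
            rw [← h0, mem_closedBall, dist_le_zero] at hy
            rw [hy]
            exact hxkC (mem_closedBall_self (hδ k))
          · rw [← closure_ball (x k) (ne_of_gt h0)]
            exact hCcl.closure_subset_iff.2 hob
        have htβ : t < 1 / β := by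
          by_contra h'
          push_neg at h'
          exact hc ((closedBall_subset_closedBall h').trans htball)
        set W := {w' : EuclideanSpace ℝ (Fin d) | closedBall w' (1 / β) ⊆ C} with hW_def
        have hWclosed : IsClosed W := by
          have hWeq : W = ⋂ (y : EuclideanSpace ℝ (Fin d))
              (_ : y ∈ closedBall (0 : EuclideanSpace ℝ (Fin d)) (1 / β)),
              (fun w' => w' + y) ⁻¹' C := by
            ext w'
            simp only [hW_def, mem_setOf_eq, mem_iInter, mem_preimage, mem_closedBall,
              dist_zero_right]
            constructor
            · intro h y hy
              exact h (by rw [mem_closedBall, dist_eq_norm, add_sub_cancel_left]; exact hy)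
            · intro h p hp
              rw [mem_closedBall, dist_eq_norm] at hp
              have := h (p - w') hp
              simpa using this
          rw [hWeq]
          exact isClosed_iInter fun y => isClosed_iInter fun _ =>
            IsClosed.preimage (continuous_id.add continuous_const) hCcl
        have hxkmem : x k ∈ C := hxkC (mem_closedBall_self (hδ k))
        have hkey : ∀ ε : ℝ, 0 < ε → ∃ w' ∈ W,
            ‖x k - w'‖ ^ 2 ≤ (t + ε) ^ 2 - 2 * (1 / β) * t + (1 / β) ^ 2 := by
          intro ε hε
          obtain ⟨q, hqc, hqd⟩ := (infDist_lt_iff hCcompl).1 (show t < t + ε by linarith)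
          obtain ⟨p, hpC, hpmin⟩ :=
            exists_norm_eq_iInf_of_complete_convex hCne hCcl.isComplete hCconv q
          have hproj : ∀ y ∈ C, ⟪q - p, y - p⟫ ≤ 0 :=
            (norm_eq_iInf_iff_real_inner_le_zero hCconv hpC).1 hpmin
          have hqp : q - p ≠ 0 := sub_ne_zero.2 fun h => hqc (h ▸ hpC)
          set m := ‖q - p‖⁻¹ • (q - p) with hm_def
          have hm1 : ‖m‖ = 1 := norm_inv_smul_self hqp
          have hmnc : m ∈ normalCone C p := by
            intro y hy
            rw [hm_def, real_inner_smul_left]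
            have := mul_le_mul_of_nonneg_left (hproj y hy)
              (inv_nonneg.2 (norm_nonneg (q - p)))
            simpa using this
          have hpfr : p ∈ frontier C := by
            rw [hCcl.frontier_eq, mem_diff]
            refine ⟨hpC, fun hint => ?_⟩
            rw [mem_interior_iff_mem_nhds, Metric.mem_nhds_iff] at hint
            obtain ⟨ε', hε', hball'⟩ := hint
            have hqpn : 0 < ‖q - p‖ := norm_pos_iff.2 hqp
            have hmm : p + (ε' / (2 * ‖q - p‖)) • (q - p) ∈ C := hball' (by
              rw [mem_ball, dist_eq_norm, add_sub_cancel_left, norm_smul, Real.norm_eq_abs,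
                abs_of_pos (by positivity)]
              rw [show ε' / (2 * ‖q - p‖) * ‖q - p‖ = ε' / 2 from by field_simp]
              linarith)
            have hcontra := hproj _ hmm
            rw [add_sub_cancel_left, real_inner_smul_right, real_inner_self_eq_norm_sq] at hcontra
            have hpos : 0 < ε' / (2 * ‖q - p‖) := by positivity
            nlinarith [mul_pos hpos (pow_pos hqpn 2)]
          have hwball := hCsm p hpfr m hmnc hm1
          refine ⟨p - (1 / β) • m, hwball, ?_⟩
          have h1 : ‖x k - p‖ ≤ t + ε := by
            have hp2 := hproj _ hxkmem
            have e2' : ‖q - x k‖ ^ 2 = ‖q - p‖ ^ 2 + 2 * ⟪q - p, p - x k⟫ + ‖p - x k‖ ^ 2 := by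
              rw [show q - x k = q - p + (p - x k) by abel]
              exact norm_add_sq_real _ _
            have e3 : ⟪q - p, p - x k⟫ = -⟪q - p, x k - p⟫ := by
              rw [← inner_neg_right]; congr 1; abel
            have e4 : ‖q - x k‖ < t + ε := by
              rw [dist_comm, dist_eq_norm] at hqd; exact hqd
            have e5 : ‖p - x k‖ ≤ ‖q - x k‖ := by
              nlinarith [norm_nonneg (p - x k), norm_nonneg (q - x k), norm_nonneg (q - p)]
            rw [norm_sub_rev]
            linarith
          have h3 : ⟪m, x k - p⟫ ≤ -t := by
            have hmem : x k + t • m ∈ C := htball (by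
              rw [mem_closedBall, dist_eq_norm, add_sub_cancel_left, norm_smul, hm1, mul_one,
                Real.norm_eq_abs, abs_of_nonneg ht0])
            have h0 := hmnc _ hmem
            rw [show x k + t • m - p = x k - p + t • m by abel, inner_add_right,
              real_inner_smul_right, real_inner_self_eq_norm_sq, hm1] at h0
            nlinarith
          have e6 : x k - (p - (1 / β) • m) = x k - p + (1 / β) • m := by abel
          have e7 : ‖x k - p + (1 / β) • m‖ ^ 2
              = ‖x k - p‖ ^ 2 + 2 * ⟪x k - p, (1 / β) • m⟫ + ‖(1 / β) • m‖ ^ 2 :=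
            norm_add_sq_real _ _
          have e8 : ⟪x k - p, (1 / β) • m⟫ = (1 / β) * ⟪m, x k - p⟫ := by
            rw [real_inner_smul_right, real_inner_comm]
          have e9 : ‖(1 / β) • m‖ = 1 / β := by
            rw [norm_smul, hm1, mul_one, Real.norm_eq_abs, abs_of_pos hβ']
          rw [e6, e7, e8, e9]
          have h10 : ‖x k - p‖ ^ 2 ≤ (t + ε) ^ 2 := by
            nlinarith [norm_nonneg (x k - p)]
          nlinarith [h10, mul_le_mul_of_nonneg_left h3 hβ'.le]
        obtain ⟨w₀, hw₀, _⟩ := hkey 1 one_pos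
        obtain ⟨wk, hwkW, hwkd⟩ := hWclosed.exists_infDist_eq_dist ⟨w₀, hw₀⟩ (x k)
        have hinf2 : infDist (x k) W ^ 2 ≤ t ^ 2 - 2 * (1 / β) * t + (1 / β) ^ 2 := by
          by_contra hcon
          push_neg at hcon
          obtain ⟨g, hg, hgL⟩ : ∃ g : ℝ, 0 < g ∧ infDist (x k) W ^ 2
              = (t ^ 2 - 2 * (1 / β) * t + (1 / β) ^ 2) + g :=
            ⟨infDist (x k) W ^ 2 - (t ^ 2 - 2 * (1 / β) * t + (1 / β) ^ 2),
              by linarith, by ring⟩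
          obtain ⟨ε, hεpos, hε1, hε2⟩ : ∃ ε : ℝ, 0 < ε ∧ ε ≤ 1 ∧ ε * (2 * t + 2) ≤ g := by
            refine ⟨min 1 (g / (2 * t + 2)), lt_min one_pos (div_pos hg (by linarith)),
              min_le_left _ _, ?_⟩
            exact (le_div_iff₀ (by linarith)).1 (min_le_right _ _)
          obtain ⟨w', hw'W, hw'b⟩ := hkey ε hεpos
          have hle : infDist (x k) W ≤ ‖x k - w'‖ := by
            rw [← dist_eq_norm]; exact infDist_le_dist_of_mem hw'W
          have hsq : infDist (x k) W ^ 2 ≤ ‖x k - w'‖ ^ 2 := by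
            nlinarith [infDist_nonneg (x := x k) (s := W)]
          nlinarith [hw'b, hsq, hεpos, hε2, ht0, hgL.le, hgL.ge,
            mul_le_mul_of_nonneg_left hε1 hεpos.le]
        have hfin : infDist (x k) W ≤ 1 / β - t := by
          have hsum : 0 < infDist (x k) W + (1 / β - t) := by
            have := infDist_nonneg (x := x k) (s := W)
            linarith
          nlinarith [hinf2, hsum]
        refine ⟨wk, ?_, ?_⟩
        · rw [← dist_eq_norm, ← hwkd]
          linarith
        · rw [zero_add]
          exact hwkW
    choose w hw1 hw2 using hwex
    refine ⟨w, ?_, ?_, hw1, ?_, ?_, ?_⟩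
    · intro i j
      have hx : z j - (1 / β) • n j + (1 / β) • n i ∈ C := hcball j (by
        rw [mem_closedBall, dist_eq_norm, add_sub_cancel_left, norm_smul, hn1 i, mul_one,
          Real.norm_eq_abs, abs_of_pos hβ'])
      have h0 := hnormal i _ hx
      rw [show z j - (1 / β) • n j + (1 / β) • n i - z i
          = z j - (1 / β) • n j - z i + (1 / β) • n i by abel] at h0
      exact h0
    · intro i k
      have hm : (0:ℝ) ≤ max 0 (δ k - 1 / β) := le_max_left _ _
      have hx : w k + (max 0 (δ k - 1 / β) + 1 / β) • n i ∈ C := hw2 k (by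
        rw [mem_closedBall, dist_eq_norm, add_sub_cancel_left, norm_smul, hn1 i, mul_one,
          Real.norm_eq_abs, abs_of_nonneg (by linarith)])
      have h0 := hnormal i _ hx
      rw [show w k + (max 0 (δ k - 1 / β) + 1 / β) • n i - z i
          = w k + max 0 (δ k - 1 / β) • n i - z i + (1 / β) • n i by rw [add_smul]; abel] at h0
      exact h0
    · intro i j
      have := dist_add_radii_le hd hβ'.le hβ'.le hCdiam (hcball i) (hcball j)
      linarith
    · intro i k
      have hm : (0:ℝ) ≤ max 0 (δ k - 1 / β) := le_max_left _ _
      have := dist_add_radii_le hd hβ'.le (by linarith) hCdiam (hcball i) (hw2 k)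
      linarith
    · intro k l
      have hmk : (0:ℝ) ≤ max 0 (δ k - 1 / β) := le_max_left _ _
      have hml : (0:ℝ) ≤ max 0 (δ l - 1 / β) := le_max_left _ _
      have := dist_add_radii_le hd (by linarith) (by linarith) hCdiam (hw2 k) (hw2 l)
      linarith
  · rintro ⟨w, h1, h2, h3, h4, h5, h6⟩
    have hn1 : ∀ i, ‖n i‖ = 1 := fun i => norm_inv_smul_self (hv i)
    have hvn : ∀ i, v i = ‖v i‖ • n i := fun i =>
      (smul_inv_smul₀ (norm_ne_zero_iff.2 (hv i)) _).symm
    rcases isEmpty_or_nonempty (ι ⊕ κ) with hemp | hne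
    · have hι : IsEmpty ι := ⟨fun i => hemp.false (Sum.inl i)⟩
      have hκ : IsEmpty κ := ⟨fun k => hemp.false (Sum.inr k)⟩
      have heq : (({(0 : EuclideanSpace ℝ (Fin d))} : Set (EuclideanSpace ℝ (Fin d)))
          + closedBall 0 (1 / β)) = closedBall (0 : EuclideanSpace ℝ (Fin d)) (1 / β) := by
        simp [Set.singleton_add]
      refine ⟨closedBall 0 (1 / β), ⟨0, mem_closedBall_self hβ'.le⟩, isClosed_closedBall,
        convex_closedBall _ _, isSmoothSet_of_eq_add_ball hβ heq.symm isClosed_closedBall, ?_,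
        ⟨fun i => hι.elim i, fun k => hκ.elim k⟩⟩
      intro a ha b hb
      rw [mem_closedBall, dist_zero_right] at ha hb
      calc ‖a - b‖ ≤ ‖a‖ + ‖b‖ := norm_sub_le _ _
        _ ≤ D := by linarith
    · set c : ι → EuclideanSpace ℝ (Fin d) := fun i => z i - (1 / β) • n i with hc_def
      have hc_fun : ∀ i, c i = z i - (1 / β) • n i := fun i => rfl
      set P : ι ⊕ κ → EuclideanSpace ℝ (Fin d) := Sum.elim c w with hP_def
      set R : ι ⊕ κ → ℝ := Sum.elim (fun _ => 0) (fun k => max 0 (δ k - 1 / β)) with hR_def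
      have hR : ∀ j, 0 ≤ R j := by
        rintro (i | k)
        · exact le_refl _
        · exact le_max_left _ _
      set S := ⋃ j, closedBall (P j) (R j) with hS_def
      set A := closure (convexHull ℝ S) with hA_def
      have hSA : S ⊆ A := (subset_convexHull ℝ S).trans subset_closure
      have hPS : ∀ j, P j ∈ S := fun j => mem_iUnion.2 ⟨j, mem_closedBall_self (hR j)⟩
      have hBS : ∀ j, closedBall (P j) (R j) ⊆ S := fun j =>
        subset_iUnion (fun j => closedBall (P j) (R j)) j
      have hpair : ∀ j l, ‖P j - P l‖ ≤ (D - 2 / β) - R j - R l := by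
        rintro (i | k) (i' | k')
        · simp only [hP_def, hR_def, Sum.elim_inl]
          have := h4 i i'
          linarith
        · simp only [hP_def, hR_def, Sum.elim_inl, Sum.elim_inr]
          have := h5 i k'
          linarith
        · simp only [hP_def, hR_def, Sum.elim_inl, Sum.elim_inr]
          rw [norm_sub_rev]
          have := h5 i' k
          linarith
        · simp only [hP_def, hR_def, Sum.elim_inr]
          have := h6 k k'
          linarith
      have hSdiam : ∀ a ∈ S, ∀ b ∈ S, dist a b ≤ D - 2 / β := by
        intro a ha b hb
        obtain ⟨j, haj⟩ := mem_iUnion.1 ha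
        obtain ⟨l, hbl⟩ := mem_iUnion.1 hb
        have h4' := dist_triangle4 a (P j) (P l) b
        rw [mem_closedBall] at haj hbl
        have hnd : dist (P j) (P l) = ‖P j - P l‖ := dist_eq_norm _ _
        have hd2 : dist (P l) b ≤ R l := by rw [dist_comm]; exact hbl
        have := hpair j l
        linarith
      have hAdiam := closure_convexHull_dist_le hSdiam
      have hAconv : Convex ℝ A := (convex_convexHull ℝ S).closure
      obtain ⟨a₀, ha₀⟩ : A.Nonempty := ⟨P (Classical.arbitrary _), hSA (hPS _)⟩
      have hAcomp : IsCompact A := by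
        apply isCompact_of_isClosed_isBounded isClosed_closure
        apply (isBounded_closedBall (x := a₀) (r := D - 2 / β)).subset
        intro y hy
        rw [mem_closedBall]
        exact hAdiam y hy a₀ ha₀
      set C := A + closedBall (0 : EuclideanSpace ℝ (Fin d)) (1 / β) with hC_def
      have hCcl : IsClosed C := IsClosed.add_left_of_isCompact isClosed_closedBall hAcomp
      have hCconv : Convex ℝ C := hAconv.add (convex_closedBall _ _)
      have hCne : C.Nonempty := ⟨a₀ + 0, add_mem_add ha₀ (mem_closedBall_self hβ'.le)⟩
      have hsm : IsSmoothSet β C := isSmoothSet_of_eq_add_ball hβ hC_def hCcl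
      have hCdiam : DiamLE C D := by
        intro p hp q hq
        rw [hC_def, Set.mem_add] at hp hq
        obtain ⟨a, ha, u, hu, rfl⟩ := hp
        obtain ⟨b, hb, u', hu', rfl⟩ := hq
        rw [mem_closedBall, dist_zero_right] at hu hu'
        have hab := hAdiam a ha b hb
        rw [dist_eq_norm] at hab
        calc ‖a + u - (b + u')‖ = ‖(a - b) + (u - u')‖ := by
              rw [show a + u - (b + u') = (a - b) + (u - u') by abel]
          _ ≤ ‖a - b‖ + ‖u - u'‖ := norm_add_le _ _
          _ ≤ ‖a - b‖ + (‖u‖ + ‖u'‖) := by linarith [norm_sub_le u u']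
          _ ≤ D := by linarith
      have hz_mem : ∀ i, z i ∈ C := by
        intro i
        rw [show z i = c i + (1 / β) • n i by rw [hc_fun]; abel, hC_def]
        exact add_mem_add (hSA (hPS (Sum.inl i))) (by
          rw [mem_closedBall, dist_zero_right, norm_smul, hn1 i, mul_one, Real.norm_eq_abs,
            abs_of_pos hβ'])
      have hhalf : ∀ i, ∀ a ∈ A, ⟪n i, a - c i⟫ ≤ 0 := by
        intro i
        apply closure_convexHull_inner_le
        intro y hy
        obtain ⟨j, hyj⟩ := mem_iUnion.1 hy
        rcases j with j | k
        · have hyc : y = c j := by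
            simp only [hP_def, hR_def, Sum.elim_inl] at hyj
            rwa [mem_closedBall, dist_le_zero] at hyj
          have h0 := h1 i j
          rw [show z j - (1 / β) • n j - z i + (1 / β) • n i = c j - c i by
            rw [hc_fun, hc_fun]; abel] at h0
          rw [hyc]
          exact h0
        · have hyb : ‖y - w k‖ ≤ max 0 (δ k - 1 / β) := by
            simp only [hP_def, hR_def, Sum.elim_inr] at hyj
            rwa [mem_closedBall, dist_eq_norm] at hyj
          have hcs : ⟪n i, y - w k⟫ ≤ max 0 (δ k - 1 / β) := by
            calc ⟪n i, y - w k⟫ ≤ ‖n i‖ * ‖y - w k‖ := real_inner_le_norm _ _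
              _ = ‖y - w k‖ := by rw [hn1 i, one_mul]
              _ ≤ _ := hyb
          have h0 := h2 i k
          rw [show w k + max 0 (δ k - 1 / β) • n i - z i + (1 / β) • n i
              = (w k - c i) + max 0 (δ k - 1 / β) • n i by rw [hc_fun]; abel,
            inner_add_right, real_inner_smul_right, real_inner_self_eq_norm_sq, hn1 i] at h0
          rw [show y - c i = (y - w k) + (w k - c i) by abel, inner_add_right]
          nlinarith
      have hnormal : ∀ i, v i ∈ normalCone C (z i) := by
        intro i p hp
        rw [hC_def, Set.mem_add] at hp
        obtain ⟨a, ha, u, hu, rfl⟩ := hp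
        rw [mem_closedBall, dist_zero_right] at hu
        have hinner : ⟪n i, a + u - z i⟫ ≤ 0 := by
          rw [show a + u - z i = (a - c i) + (u - (1 / β) • n i) by rw [hc_fun]; abel,
            inner_add_right]
          have hA1 := hhalf i a ha
          have hu1 : ⟪n i, u - (1 / β) • n i⟫ ≤ 0 := by
            rw [inner_sub_right, real_inner_smul_right, real_inner_self_eq_norm_sq, hn1 i]
            have hcs := real_inner_le_norm (n i) u
            rw [hn1 i, one_mul] at hcs
            nlinarith
          linarith
        rw [hvn i, real_inner_smul_left]
        have := mul_le_mul_of_nonneg_left hinner (norm_nonneg (v i))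
        simpa using this
      have hx_mem : ∀ k, x k ∈ deltaInterior (δ k) C := by
        intro k
        show closedBall (x k) (δ k) ⊆ C
        have hmax : (0:ℝ) ≤ max 0 (δ k - 1 / β) := le_max_left _ _
        have hsub1 : closedBall (x k) (δ k)
            ⊆ closedBall (w k) (max 0 (δ k - 1 / β) + 1 / β) := by
          apply closedBall_subset_closedBall'
          rw [dist_eq_norm]
          linarith [h3 k]
        have heq2 : closedBall (w k) (max 0 (δ k - 1 / β))
            + closedBall (0 : EuclideanSpace ℝ (Fin d)) (1 / β)
            = closedBall (w k) (max 0 (δ k - 1 / β) + 1 / β) := by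
          rw [closedBall_add_closedBall hmax hβ'.le, add_zero]
        refine hsub1.trans ?_
        rw [hC_def, ← heq2]
        refine add_subset_add ?_ Subset.rfl
        refine Subset.trans ?_ hSA
        have := hBS (Sum.inr k)
        simpa only [hP_def, hR_def, Sum.elim_inr] using this
      exact ⟨C, hCne, hCcl, hCconv, hsm, hCdiam, ⟨fun i => ⟨hz_mem i, hnormal i⟩, hx_mem⟩⟩

end
end

section
/- Let β > 0, δ ≥ 0, R > 0, and set h = max(δ, 1/β). Let C ⊆ E be a nonempty closed convex β-smooth set, q ∈ E with closedBall(q, δ) ⊆ C, and x₀ ∈ E with ‖x₀ − q‖ ≤ R. Suppose x₁, …, x_N are generated by x_{i+1} = x_i − h·n_i, where for each 0 ≤ i ≤ N−1, n_i is a unit vector satisfying ⟪n_i, y − x_i⟫ ≤ 0 for all y ∈ C, and suppose x_N does not belong to the interior of C. Then (N + 1)·h² ≤ (R + h − δ)². -/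
open Metric Set
open scoped RealInnerProductSpace Pointwise

noncomputable section

variable {F : Type*} [NormedAddCommGroup F] [InnerProductSpace ℝ F]

lemma mem_of_dist_le_infDist {C : Set F} (hcl : IsClosed C) {q : F} (hqC : q ∈ C)
    {w : F} (hw : dist w q ≤ Metric.infDist q Cᶜ) : w ∈ C := by
  rcases eq_or_ne w q with rfl | hwq
  · exact hqC
  have hd : 0 < ‖w - q‖ := by
    rw [norm_pos_iff]; exact sub_ne_zero.mpr hwq
  rw [← hcl.closure_eq, Metric.mem_closure_iff]
  intro r hr
  set d := ‖w - q‖ with hdd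
  set θ : ℝ := max (1 - r / (2 * d)) (1 / 2) with hθ
  have hrd : 0 < r / (2 * d) := by positivity
  have hθ1 : θ < 1 := max_lt (by linarith) (by norm_num)
  have hθ0 : 0 < θ := lt_of_lt_of_le (by norm_num) (le_max_right _ _)
  refine ⟨q + θ • (w - q), ?_, ?_⟩
  · by_contra hmem
    have h1 : Metric.infDist q Cᶜ ≤ dist q (q + θ • (w - q)) :=
      Metric.infDist_le_dist_of_mem (Set.mem_compl hmem)
    have h2 : dist q (q + θ • (w - q)) = θ * d := by
      rw [dist_eq_norm]
      have e : q - (q + θ • (w - q)) = -(θ • (w - q)) := by abel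
      rw [e, norm_neg, norm_smul, Real.norm_eq_abs, abs_of_pos hθ0]
    have h3 : d ≤ Metric.infDist q Cᶜ := by rwa [dist_eq_norm] at hw
    nlinarith
  · have e : w - (q + θ • (w - q)) = (1 - θ) • (w - q) := by
      rw [sub_smul, one_smul]; abel
    rw [dist_eq_norm, e, norm_smul, Real.norm_eq_abs, abs_of_nonneg (by linarith)]
    have h4 : 1 - θ ≤ r / (2 * d) := by
      have := le_max_left (1 - r / (2 * d)) (1 / 2)
      linarith [hθ.le]
    have h5 : (1 - θ) * d ≤ r / (2 * d) * d := mul_le_mul_of_nonneg_right h4 hd.le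
    have h6 : r / (2 * d) * d = r / 2 := by field_simp
    linarith

set_option maxHeartbeats 1000000 in
lemma exists_center [ProperSpace F] {β δ : ℝ} (hβ : 0 < β) (hδ : 0 ≤ δ)
    {C : Set F} (hne : C.Nonempty) (hcl : IsClosed C) (hcv : Convex ℝ C)
    (hsm : IsSmoothSet β C) (hCc : Cᶜ.Nonempty) {q : F} (hq : closedBall q δ ⊆ C)
    {ε : ℝ} (hε : 0 < ε) :
    ∃ c : F, closedBall c (max δ (1 / β)) ⊆ C ∧ ‖q - c‖ ≤ max δ (1 / β) - δ + ε := by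
  have hqC : q ∈ C := hq (mem_closedBall_self hδ)
  have hβ' : 0 < 1 / β := by positivity
  set t := Metric.infDist q Cᶜ with ht
  have ht0 : 0 ≤ t := Metric.infDist_nonneg
  have hball : ∀ w : F, dist w q ≤ t → w ∈ C := fun w hw =>
    mem_of_dist_le_infDist hcl hqC hw
  have hδt : δ ≤ t := by
    by_contra hlt
    push_neg at hlt
    obtain ⟨y, hyc, hyd⟩ := (Metric.infDist_lt_iff hCc).mp hlt
    exact hyc (hq (by rw [mem_closedBall, dist_comm]; exact hyd.le))
  rcases le_or_gt (1 / β) δ with h1 | h1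
  · refine ⟨q, ?_, ?_⟩
    · rwa [max_eq_left h1]
    · simp only [sub_self, norm_zero]
      linarith [le_max_left δ (1 / β)]
  · have hmax : max δ (1 / β) = 1 / β := max_eq_right h1.le
    rcases le_or_gt (1 / β) t with hb | hb
    · refine ⟨q, ?_, ?_⟩
      · rw [hmax]
        exact fun w hw => hball w (le_trans (mem_closedBall.mp hw) hb)
      · simp only [sub_self, norm_zero]
        rw [hmax]; linarith
    · -- t < 1/β : construct center from smoothness
      obtain ⟨z, hzcl, hzd⟩ :=
        (isClosed_closure (s := Cᶜ)).exists_infDist_eq_dist hCc.closure q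
      rw [Metric.infDist_closure, ← ht] at hzd
      have hzq : dist z q = t := by rw [dist_comm]; exact hzd.symm
      have hzC : z ∈ C := hball z hzq.le
      set ε' : ℝ := min (ε ^ 2 / (4 * (t + 1))) 1 with hε'def
      have hε'0 : 0 < ε' := lt_min (by positivity) one_pos
      have hε'1 : ε' ≤ 1 := min_le_right _ _
      have hε'2 : 4 * ε' * (t + 1) ≤ ε ^ 2 := by
        have h := min_le_left (ε ^ 2 / (4 * (t + 1))) 1
        have h4 : (0:ℝ) < 4 * (t + 1) := by positivity
        rw [hε'def]
        calc 4 * min (ε ^ 2 / (4 * (t + 1))) 1 * (t + 1)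
            ≤ 4 * (ε ^ 2 / (4 * (t + 1))) * (t + 1) := by nlinarith
          _ = ε ^ 2 := by field_simp
      obtain ⟨p, hpCc, hpz⟩ := Metric.mem_closure_iff.mp hzcl ε' hε'0
      obtain ⟨v, hvC, hviInf⟩ :=
        exists_norm_eq_iInf_of_complete_convex hne hcl.isComplete hcv p
      have hsep : ∀ w ∈ C, ⟪p - v, w - v⟫ ≤ 0 :=
        (norm_eq_iInf_iff_real_inner_le_zero hcv hvC).mp hviInf
      have hmin : ∀ w ∈ C, ‖p - v‖ ≤ ‖p - w‖ := by
        intro w hw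
        rw [hviInf]
        exact ciInf_le ⟨0, by rintro _ ⟨y, rfl⟩; positivity⟩ (⟨w, hw⟩ : C)
      have hpv : 0 < ‖p - v‖ := by
        rw [norm_pos_iff, sub_ne_zero]
        exact fun h => hpCc (h ▸ hvC)
      set n : F := ‖p - v‖⁻¹ • (p - v) with hndef
      have hnorm : ‖n‖ = 1 := by
        rw [hndef, norm_smul, norm_inv, norm_norm, inv_mul_cancel₀ hpv.ne']
      have hnc : n ∈ normalCone C v := by
        intro w hw
        rw [hndef, real_inner_smul_left]
        exact mul_nonpos_of_nonneg_of_nonpos (by positivity) (hsep w hw)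
      have hvfr : v ∈ frontier C := by
        rw [hcl.frontier_eq]
        refine ⟨hvC, fun hint => ?_⟩
        rcases Metric.isOpen_iff.mp isOpen_interior v hint with ⟨r, hr, hrsub⟩
        set s : ℝ := min (r / (2 * ‖p - v‖)) (1 / 2) with hsdef
        have hs0 : 0 < s := lt_min (by positivity) (by norm_num)
        have hs1 : s < 1 := lt_of_le_of_lt (min_le_right _ _) (by norm_num)
        have hsr : s * ‖p - v‖ < r := by
          have h7 : s ≤ r / (2 * ‖p - v‖) := min_le_left _ _
          have h8 : s * ‖p - v‖ ≤ r / (2 * ‖p - v‖) * ‖p - v‖ :=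
            mul_le_mul_of_nonneg_right h7 hpv.le
          have h9 : r / (2 * ‖p - v‖) * ‖p - v‖ = r / 2 := by field_simp
          linarith
        have hwmem : v + s • (p - v) ∈ C := by
          apply interior_subset
          apply hrsub
          rw [mem_ball, dist_eq_norm]
          have e : v + s • (p - v) - v = s • (p - v) := by abel
          rw [e, norm_smul, Real.norm_eq_abs, abs_of_pos hs0]
          exact hsr
        have h10 := hmin _ hwmem
        have e : p - (v + s • (p - v)) = (1 - s) • (p - v) := by
          rw [sub_smul, one_smul]; abel
        rw [e, norm_smul, Real.norm_eq_abs, abs_of_nonneg (by linarith)] at h10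
        nlinarith
      set c : F := v - (1 / β) • n with hcdef
      have hsub : closedBall c (1 / β) ⊆ C := hsm v hvfr n hnc hnorm
      refine ⟨c, by rwa [hmax], ?_⟩
      -- inner product bound
      have hqtC : q + t • n ∈ C := by
        apply hball
        rw [dist_eq_norm]
        have e : q + t • n - q = t • n := by abel
        rw [e, norm_smul, Real.norm_eq_abs, abs_of_nonneg ht0, hnorm, mul_one]
      have hip : ⟪n, q - v⟫ ≤ -t := by
        have h11 := hnc _ hqtC
        have e : q + t • n - v = (q - v) + t • n := by abel
        rw [e, inner_add_right, real_inner_smul_right, real_inner_self_eq_norm_sq,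
          hnorm] at h11
        nlinarith
      have hpvz : ‖p - v‖ ≤ ε' := le_trans (hmin z hzC) (by
        rw [← dist_eq_norm, dist_comm]; exact hpz.le)
      have hqv : ‖q - v‖ ≤ t + 2 * ε' := by
        have e : q - v = (q - z) + (z - p) + (p - v) := by abel
        calc ‖q - v‖ ≤ ‖(q - z) + (z - p)‖ + ‖p - v‖ := by rw [e]; exact norm_add_le _ _
          _ ≤ ‖q - z‖ + ‖z - p‖ + ‖p - v‖ := by linarith [norm_add_le (q - z) (z - p)]
          _ ≤ t + ε' + ε' := by
              refine add_le_add (add_le_add ?_ ?_) hpvz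
              · rw [← dist_eq_norm, dist_comm]; exact hzq.le
              · rw [← dist_eq_norm]; exact hpz.le
          _ = t + 2 * ε' := by ring
      have hexp : ‖q - c‖ ^ 2 = ‖q - v‖ ^ 2 + 2 * ((1 / β) * ⟪q - v, n⟫) + (1 / β) ^ 2 := by
        have e : q - c = (q - v) + (1 / β) • n := by rw [hcdef]; abel
        rw [e, norm_add_sq_real, real_inner_smul_right, norm_smul, Real.norm_eq_abs,
          abs_of_pos hβ', hnorm, mul_one]
      have hipc : ⟪q - v, n⟫ ≤ -t := by rw [real_inner_comm]; exact hip
      have hsq : ‖q - c‖ ^ 2 ≤ (1 / β - t + ε) ^ 2 := by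
        have hbt : 0 < 1 / β - t := by linarith
        have hqv2 : ‖q - v‖ ^ 2 ≤ (t + 2 * ε') ^ 2 := by
          have h12 := norm_nonneg (q - v)
          nlinarith
        have h13 : (1 / β) * ⟪q - v, n⟫ ≤ (1 / β) * (-t) :=
          mul_le_mul_of_nonneg_left hipc hβ'.le
        have h14 : ‖q - c‖ ^ 2 ≤ (t + 2 * ε') ^ 2 + 2 * ((1 / β) * (-t)) + (1 / β) ^ 2 := by
          rw [hexp]; linarith
        have h15 : 4 * ε' * ε' ≤ 4 * ε' * 1 :=
          mul_le_mul_of_nonneg_left hε'1 (by linarith)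
        nlinarith [mul_pos hε hbt]
      have : ‖q - c‖ ≤ 1 / β - t + ε :=
        le_of_pow_le_pow_left₀ (by norm_num) (by linarith) hsq
      rw [hmax]
      linarith



set_option maxHeartbeats 1000000 in
/-- Stopping-time guarantee for the constant-step separating hyperplane method with
stepsize `h = max δ (1/β)`: if the final iterate `x N` is still not interior to `C`,
then `(N+1) h² ≤ (R + h - δ)²`. -/
theorem separating_hyperplane_stopping {d : ℕ} (hd : 1 ≤ d) (β δ R : ℝ)
    (hβ : 0 < β) (hδ : 0 ≤ δ) (hR : 0 < R)
    (C : Set (EuclideanSpace ℝ (Fin d))) (hne : C.Nonempty) (hcl : IsClosed C)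
    (hcv : Convex ℝ C) (hsm : IsSmoothSet β C)
    (q : EuclideanSpace ℝ (Fin d)) (hq : closedBall q δ ⊆ C)
    (N : ℕ) (x n : ℕ → EuclideanSpace ℝ (Fin d))
    (hx0 : ‖x 0 - q‖ ≤ R)
    (hn : ∀ i < N, ‖n i‖ = 1 ∧ ∀ y ∈ C, ⟪n i, y - x i⟫ ≤ 0)
    (hiter : ∀ i < N, x (i + 1) = x i - max δ (1 / β) • n i)
    (hxN : x N ∉ interior C) :
    ((N : ℝ) + 1) * max δ (1 / β) ^ 2 ≤ (R + max δ (1 / β) - δ) ^ 2 := by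
  set h : ℝ := max δ (1 / β) with hhdef
  have hβ' : 0 < 1 / β := by positivity
  have hhpos : 0 < h := lt_of_lt_of_le hβ' (le_max_right _ _)
  have hδh : δ ≤ h := le_max_left _ _
  have hCc : Cᶜ.Nonempty := by
    rw [Set.nonempty_iff_ne_empty]
    intro hc
    rw [compl_empty_iff] at hc
    rw [hc, interior_univ] at hxN
    exact hxN (Set.mem_univ _)
  have key : ∀ ε : ℝ, 0 < ε → ((N : ℝ) + 1) * h ^ 2 ≤ (R + h - δ + ε) ^ 2 := by
    intro ε hε
    obtain ⟨c, hcb, hcq⟩ := exists_center hβ hδ hne hcl hcv hsm hCc hq hε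
    have hstep : ∀ i < N, ‖x (i + 1) - c‖ ^ 2 ≤ ‖x i - c‖ ^ 2 - h ^ 2 := by
      intro i hi
      obtain ⟨hni, hsep⟩ := hn i hi
      have hy : c + h • n i ∈ C := by
        apply hcb
        rw [mem_closedBall, dist_eq_norm]
        have e : c + h • n i - c = h • n i := by abel
        rw [e, norm_smul, Real.norm_eq_abs, abs_of_pos hhpos, hni, mul_one]
      have hipy := hsep _ hy
      have hip : h ≤ ⟪n i, x i - c⟫ := by
        have e : (c + h • n i) - x i = -(x i - c) + h • n i := by abel
        rw [e, inner_add_right, inner_neg_right, real_inner_smul_right,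
          real_inner_self_eq_norm_sq, hni] at hipy
        nlinarith
      rw [hiter i hi]
      have e : (x i - h • n i) - c = (x i - c) - h • n i := by abel
      rw [e, norm_sub_sq_real, real_inner_smul_right, norm_smul, Real.norm_eq_abs,
        abs_of_pos hhpos, hni, mul_one]
      have hcomm : ⟪x i - c, n i⟫ = ⟪n i, x i - c⟫ := real_inner_comm _ _
      nlinarith
    have hind : ∀ i ≤ N, ‖x i - c‖ ^ 2 + (i : ℝ) * h ^ 2 ≤ ‖x 0 - c‖ ^ 2 := by
      intro i hi
      induction i with
      | zero => simp
      | succ k ih =>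
        have hkN : k < N := hi
        have h1 := hstep k hkN
        have h2 := ih (le_of_lt hkN)
        push_cast
        push_cast at h2
        linarith
    have hfin : h ^ 2 ≤ ‖x N - c‖ ^ 2 := by
      have hb2 : ball c h ⊆ interior C :=
        interior_maximal (ball_subset_closedBall.trans hcb) isOpen_ball
      have hnm : x N ∉ ball c h := fun hm => hxN (hb2 hm)
      rw [mem_ball, not_lt, dist_eq_norm] at hnm
      nlinarith [norm_nonneg (x N - c)]
    have hx0c : ‖x 0 - c‖ ≤ R + h - δ + ε := by
      have e : x 0 - c = (x 0 - q) + (q - c) := by abel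
      calc ‖x 0 - c‖ ≤ ‖x 0 - q‖ + ‖q - c‖ := by rw [e]; exact norm_add_le _ _
        _ ≤ R + h - δ + ε := by linarith
    have hsq : ‖x 0 - c‖ ^ 2 ≤ (R + h - δ + ε) ^ 2 := by
      nlinarith [norm_nonneg (x 0 - c)]
    have hN := hind N le_rfl
    linarith
  have hA : 0 ≤ R + h - δ := by linarith
  have hL : 0 ≤ ((N : ℝ) + 1) * h ^ 2 := by positivity
  have h1 : Real.sqrt (((N : ℝ) + 1) * h ^ 2) ≤ R + h - δ := by
    apply le_of_forall_pos_le_add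
    intro ε hε
    calc Real.sqrt (((N : ℝ) + 1) * h ^ 2) ≤ Real.sqrt ((R + h - δ + ε) ^ 2) :=
          Real.sqrt_le_sqrt (key ε hε)
      _ = R + h - δ + ε := Real.sqrt_sq (by linarith)
  calc ((N : ℝ) + 1) * h ^ 2 = Real.sqrt (((N : ℝ) + 1) * h ^ 2) ^ 2 :=
        (Real.sq_sqrt hL).symm
    _ ≤ (R + h - δ) ^ 2 := by
        have := Real.sqrt_nonneg (((N : ℝ) + 1) * h ^ 2)
        nlinarith
end
end

section
/- Let β > 0, δ ≥ 0, set h = max(δ, 1/β), and let α > 0 with 1/α ≥ h, D ≥ 2h, and R ≥ δ be such that N := (R + h − δ)²/h² is a positive integer. Work in E = EuclideanSpace ℝ (Fin d) with d ≥ N. Then there exist a nonempty closed convex set C ⊆ E that is α-strongly convex and β-smooth with diam(C) ≤ D, a point q ∈ E with closedBall(q, δ) ⊆ C, and x₀ ∈ E with ‖x₀ − q‖ ≤ R, such that for every array of reals (H_{i,j})_{0 ≤ j ≤ i ≤ N−1} there exist unit vectors n₀, …, n_{N−1} ∈ E with the following properties: defining x_{i+1} = x₀ − Σ_{j=0}^{i}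 H_{i,j}·n_j for 0 ≤ i ≤ N−2, one has ⟪n_i, y − x_i⟫ ≤ 0 for all y ∈ C and all 0 ≤ i ≤ N−1, and x_k does not belong to the interior of C for any 0 ≤ k ≤ N−1. -/
open Metric Set
open scoped RealInnerProductSpace Pointwise

noncomputable section

variable {F : Type*} [NormedAddCommGroup F] [InnerProductSpace ℝ F]

lemma normal_of_ball {h : ℝ} (hpos : 0 < h) {z n : F}
    (hz : z ∈ frontier (closedBall (0:F) h)) (hn : n ∈ normalCone (closedBall (0:F) h) z)
    (hn1 : ‖n‖ = 1) : z = h • n := by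
  rw [frontier_closedBall 0 hpos.ne', mem_sphere_zero_iff_norm] at hz
  have hmem : h • n ∈ closedBall (0:F) h := by
    simp [mem_closedBall, dist_zero_right, norm_smul, hn1, abs_of_pos hpos]
  have key := hn _ hmem
  rw [inner_sub_right, real_inner_smul_right, real_inner_self_eq_norm_sq, hn1] at key
  have hcs := real_inner_le_norm n z
  rw [hn1, hz] at hcs
  have heq : ⟪n, z⟫ = ‖n‖ * ‖z‖ := by rw [hn1, hz]; nlinarith
  have := (inner_eq_norm_mul_iff_real).mp heq
  rw [hn1, hz, one_smul] at this
  exact this.symm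

lemma ball_stronglyConvex {h α : ℝ} (hpos : 0 < h) (hα : 0 < α) (hle : h ≤ 1/α) :
    IsStronglyConvexSet α (closedBall (0:F) h) := by
  intro z hz n hn hn1 y hy
  have hzn := normal_of_ball hpos hz hn hn1
  rw [mem_closedBall, dist_zero_right] at hy
  rw [mem_closedBall, dist_eq_norm, hzn]
  have hrw : y - (h • n - (1/α) • n) = y - (h - 1/α) • n := by rw [← sub_smul]
  rw [hrw]
  have h1 : ‖y - (h - 1/α) • n‖^2 = ‖y‖^2 - 2*((h-1/α)*⟪y,n⟫) + (h-1/α)^2 := by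
    rw [norm_sub_sq_real, real_inner_smul_right, norm_smul, hn1]
    simp [mul_pow, sq_abs]
  have hcs : ⟪y, n⟫ ≤ ‖y‖ := by
    have := real_inner_le_norm y n
    rwa [hn1, mul_one] at this
  have hαpos : 0 < 1/α := by positivity
  have hsq : ‖y - (h - 1/α) • n‖^2 ≤ (1/α)^2 := by nlinarith [norm_nonneg y]
  nlinarith [norm_nonneg (y - (h - 1/α) • n)]

lemma ball_smooth {h β : ℝ} (hβ : 0 < β) (hle : 1/β ≤ h) :
    IsSmoothSet β (closedBall (0:F) h) := by
  intro z hz n hn hn1 y hy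
  have hbpos : (0:ℝ) < 1/β := by positivity
  have hpos : 0 < h := lt_of_lt_of_le hbpos hle
  have hzn := normal_of_ball hpos hz hn hn1
  rw [mem_closedBall, dist_eq_norm] at hy
  rw [mem_closedBall, dist_zero_right]
  have hc : ‖z - (1/β) • n‖ = h - 1/β := by
    rw [hzn, ← sub_smul, norm_smul, hn1, mul_one, Real.norm_eq_abs,
      abs_of_nonneg (by linarith)]
  calc ‖y‖ = ‖(y - (z - (1/β) • n)) + (z - (1/β) • n)‖ := by rw [sub_add_cancel]
    _ ≤ ‖y - (z - (1/β) • n)‖ + ‖z - (1/β) • n‖ := norm_add_le _ _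
    _ ≤ 1/β + (h - 1/β) := by rw [hc]; linarith
    _ = h := by ring

/-- Minimax lower bound for separating hyperplane methods: there is a hard problem
instance `(C, q, x₀)` on which any separating hyperplane method `x_{i+1} = x₀ - Σ_{j≤i}
H_{i,j} n_j` fails to reach the interior of `C` within `N = (R + h - δ)²/h²` queries,
where `h = max δ (1/β)`. -/
theorem separating_hyperplane_lower_bound {d : ℕ} (β δ α D R : ℝ)
    (hβ : 0 < β) (hδ : 0 ≤ δ) (hα : 0 < α)
    (hh : max δ (1 / β) ≤ 1 / α) (hD : 2 * max δ (1 / β) ≤ D) (hR : δ ≤ R)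
    (N : ℕ) (hN : 1 ≤ N)
    (hNval : (N : ℝ) = (R + max δ (1 / β) - δ) ^ 2 / max δ (1 / β) ^ 2)
    (hdN : N ≤ d) :
    ∃ C : Set (EuclideanSpace ℝ (Fin d)), ∃ q x₀ : EuclideanSpace ℝ (Fin d),
      C.Nonempty ∧ IsClosed C ∧ Convex ℝ C ∧ IsStronglyConvexSet α C ∧ IsSmoothSet β C ∧
      DiamLE C D ∧ closedBall q δ ⊆ C ∧ ‖x₀ - q‖ ≤ R ∧
      ∀ H : ℕ → ℕ → ℝ, ∃ n : ℕ → EuclideanSpace ℝ (Fin d),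
        (∀ i < N, ‖n i‖ = 1) ∧
        ∀ x : ℕ → EuclideanSpace ℝ (Fin d), x 0 = x₀ →
          (∀ i, i + 1 < N → x (i + 1) = x₀ - ∑ j ∈ Finset.range (i + 1), H i j • n j) →
          (∀ i < N, ∀ y ∈ C, ⟪n i, y - x i⟫ ≤ 0) ∧ ∀ k < N, x k ∉ interior C := by
  classical
  set h : ℝ := max δ (1 / β) with hhdef
  have hbpos : (0:ℝ) < 1/β := by positivity
  have hpos : 0 < h := lt_of_lt_of_le hbpos (le_max_right _ _)
  have hδh : δ ≤ h := le_max_left _ _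
  have hβh : 1/β ≤ h := le_max_right _ _
  have hRδ : 0 < R + h - δ := by linarith
  -- the unit normal vectors: standard basis
  set nv : ℕ → EuclideanSpace ℝ (Fin d) :=
    fun i => if hi : i < d then EuclideanSpace.single (⟨i, hi⟩ : Fin d) 1 else 0 with hnvdef
  have hnorm : ∀ i, i < d → ‖nv i‖ = 1 := by
    intro i hi
    simp [hnvdef, hi, EuclideanSpace.norm_single]
  have hinner : ∀ i j, i < d → j < d → ⟪nv i, nv j⟫ = if i = j then 1 else 0 := by
    intro i j hi hj
    simp only [hnvdef, dif_pos hi, dif_pos hj]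
    rw [EuclideanSpace.inner_single_left, EuclideanSpace.single_apply]
    simp [Fin.mk.injEq, eq_comm]
  set x₀ : EuclideanSpace ℝ (Fin d) := ∑ i ∈ Finset.range N, h • nv i with hx₀def
  have hinx0 : ∀ k, k < N → ⟪nv k, x₀⟫ = h := by
    intro k hk
    rw [hx₀def, inner_sum]
    rw [Finset.sum_eq_single k]
    · rw [real_inner_smul_right, hinner k k (lt_of_lt_of_le hk hdN) (lt_of_lt_of_le hk hdN)]
      simp
    · intro b hb hbk
      rw [real_inner_smul_right,
        hinner k b (lt_of_lt_of_le hk hdN) (lt_of_lt_of_le (Finset.mem_range.mp hb) hdN)]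
      simp [Ne.symm hbk]
    · intro hk'
      exact absurd (Finset.mem_range.mpr hk) hk'
  have hx₀norm : ‖x₀‖ = R + h - δ := by
    have hsq : ‖x₀‖^2 = (R + h - δ)^2 := by
      rw [← real_inner_self_eq_norm_sq, hx₀def, sum_inner]
      have : ∀ i ∈ Finset.range N, ⟪h • nv i, x₀⟫ = h * h := by
        intro i hi
        rw [real_inner_smul_left, hinx0 i (Finset.mem_range.mp hi)]
      rw [Finset.sum_congr rfl this, Finset.sum_const, Finset.card_range, nsmul_eq_mul]
      have hNval' : (N:ℝ) * h^2 = (R + h - δ)^2 := by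
        rw [hNval]; field_simp
      nlinarith [hNval']
    exact (pow_left_inj₀ (norm_nonneg _) (le_of_lt hRδ) (two_ne_zero)).mp hsq
  set t : ℝ := (h - δ) / (R + h - δ) with htdef
  set q : EuclideanSpace ℝ (Fin d) := t • x₀ with hqdef
  have hqnorm : ‖q‖ = h - δ := by
    rw [hqdef, norm_smul, hx₀norm, Real.norm_eq_abs, htdef,
      abs_of_nonneg (div_nonneg (by linarith) hRδ.le)]
    field_simp
  refine ⟨closedBall 0 h, q, x₀, ⟨0, by simp [mem_closedBall, le_of_lt hpos]⟩,
    isClosed_closedBall, convex_closedBall _ _, ball_stronglyConvex hpos hα hh,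
    ball_smooth hβ hβh, ?_, ?_, ?_, ?_⟩
  · -- DiamLE
    intro x hx y hy
    rw [mem_closedBall, dist_zero_right] at hx hy
    calc ‖x - y‖ ≤ ‖x‖ + ‖y‖ := norm_sub_le _ _
      _ ≤ 2 * h := by linarith
      _ ≤ D := hD
  · -- closedBall q δ ⊆ C
    intro y hy
    rw [mem_closedBall, dist_eq_norm] at hy
    rw [mem_closedBall, dist_zero_right]
    calc ‖y‖ = ‖(y - q) + q‖ := by rw [sub_add_cancel]
      _ ≤ ‖y - q‖ + ‖q‖ := norm_add_le _ _
      _ ≤ δ + (h - δ) := by rw [hqnorm]; linarith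
      _ = h := by ring
  · -- ‖x₀ - q‖ ≤ R
    have : x₀ - q = (1 - t) • x₀ := by rw [hqdef, sub_smul, one_smul]
    rw [this, norm_smul, hx₀norm, Real.norm_eq_abs]
    have h1t : 1 - t = R / (R + h - δ) := by
      rw [htdef]; field_simp; ring
    rw [h1t, abs_of_nonneg (div_nonneg (by linarith) hRδ.le)]
    rw [div_mul_cancel₀ _ (ne_of_gt hRδ)]
  · -- the adversary
    intro H
    refine ⟨nv, fun i hi => hnorm i (lt_of_lt_of_le hi hdN), ?_⟩
    intro x hx0 hxrec
    have hkey : ∀ k, k < N → ⟪nv k, x k⟫ = h := by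
      intro k hk
      match k with
      | 0 => rw [hx0]; exact hinx0 0 hk
      | (m+1) =>
        rw [hxrec m hk, inner_sub_right, hinx0 _ hk, inner_sum]
        have : ∀ j ∈ Finset.range (m+1), ⟪nv (m+1), H m j • nv j⟫ = 0 := by
          intro j hj
          have hjm : j < m + 1 := Finset.mem_range.mp hj
          rw [real_inner_smul_right,
            hinner _ _ (lt_of_lt_of_le hk hdN) (lt_of_lt_of_le (lt_of_lt_of_le hjm hk.le) hdN)]
          simp [Nat.ne_of_gt hjm]
        rw [Finset.sum_congr rfl this, Finset.sum_const, smul_zero, sub_zero]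
    have hxnorm : ∀ k, k < N → h ≤ ‖x k‖ := by
      intro k hk
      have := real_inner_le_norm (nv k) (x k)
      rw [hnorm k (lt_of_lt_of_le hk hdN), one_mul, hkey k hk] at this
      exact this
    constructor
    · intro i hi y hy
      rw [mem_closedBall, dist_zero_right] at hy
      rw [inner_sub_right, hkey i hi]
      have := real_inner_le_norm (nv i) y
      rw [hnorm i (lt_of_lt_of_le hi hdN), one_mul] at this
      linarith
    · intro k hk hmem
      rw [interior_closedBall 0 hpos.ne', mem_ball, dist_zero_right] at hmem
      exact absurd hmem (not_lt.mpr (hxnorm k hk))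
end
end

section
/- Let N ≥ 1, β > 0, δ > 0, R ≥ δ, and c ∈ (0,1). There exist nonempty closed convex β-smooth sets C₁, C₂ ⊆ ℝ² (Euclidean plane), a point q with closedBall(q, δ) ⊆ C₁ ∩ C₂, a point x₀ with ‖x₀ − q‖ ≤ R, and sequences (z_k)_{0≤k≤N−1}, (x_k)_{0≤k≤N} such that: for each k, z_k ∈ C₁ with ‖x_k − z_k‖ ≤ ‖x_k − y‖ for all y ∈ C₁, and x_{k+1} ∈ C₂ with ‖z_k − x_{k+1}‖ ≤ ‖z_k − y‖ for all y ∈ C₂ (the alternating projections iteration), and the final iterate satisfies infDist(x_N, C₁ ∩ C₂) ≥ c^{2N−1}·(√(R² − δ²) − δ·(c + 1)/√(1 − c²)). -/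
open Metric Set
open scoped RealInnerProductSpace Pointwise

noncomputable section

variable {F : Type*} [NormedAddCommGroup F] [InnerProductSpace ℝ F]

set_option maxHeartbeats 1000000

namespace APLBAux

/-- The point `(a, b)` of the Euclidean plane. -/
noncomputable def V (a b : ℝ) : EuclideanSpace ℝ (Fin 2) :=
  (WithLp.equiv 2 (Fin 2 → ℝ)).symm ![a, b]

theorem inner_V (a b a' b' : ℝ) : ⟪V a b, V a' b'⟫ = a * a' + b * b' := by
  simp [V, PiLp.inner_apply, Fin.sum_univ_two,
    RCLike.inner_apply, conj_trivial]
  ring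

theorem norm_eq_of_inner_self {v : F} {a : ℝ} (ha : 0 ≤ a) (h : ⟪v, v⟫ = a ^ 2) :
    ‖v‖ = a := by
  have h2 : ‖v‖ ^ 2 = a ^ 2 := by rw [← real_inner_self_eq_norm_sq, h]
  calc ‖v‖ = Real.sqrt (‖v‖ ^ 2) := (Real.sqrt_sq (norm_nonneg v)).symm
    _ = Real.sqrt (a ^ 2) := by rw [h2]
    _ = a := Real.sqrt_sq ha

/-- A Minkowski sum `S + closedBall 0 ρ` with `1/β ≤ ρ` is `β`-smooth. -/
theorem isSmoothSet_add_closedBall {β ρ : ℝ} (hβ : 0 < β) (hρ : 1 / β ≤ ρ)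
    (S : Set F) (hcl : IsClosed (S + closedBall (0 : F) ρ)) :
    IsSmoothSet β (S + closedBall (0 : F) ρ) := by
  have hβ0 : 0 < 1 / β := by positivity
  have hρ0 : 0 < ρ := lt_of_lt_of_le hβ0 hρ
  intro z hz n hn hn1
  have hzC : z ∈ S + closedBall (0 : F) ρ := hcl.frontier_subset hz
  rw [Set.mem_add] at hzC
  obtain ⟨σ, hσ, b, hb, hzeq⟩ := hzC
  rw [mem_closedBall_zero_iff] at hb
  have h1 : σ + ρ • n ∈ S + closedBall (0 : F) ρ := by
    refine Set.add_mem_add hσ ?_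
    rw [mem_closedBall_zero_iff, norm_smul, hn1, mul_one, Real.norm_eq_abs, abs_of_pos hρ0]
  have h2 := hn _ h1
  have h3 : (σ + ρ • n) - z = ρ • n - b := by rw [← hzeq]; abel
  rw [h3, inner_sub_right, real_inner_smul_right, real_inner_self_eq_norm_sq, hn1] at h2
  norm_num at h2
  have h4 : ⟪n, b⟫ ≤ ‖b‖ := by
    have := real_inner_le_norm n b
    rwa [hn1, one_mul] at this
  have hbρ : ‖b‖ = ρ := le_antisymm hb (by linarith)
  have h5 : ⟪n, b⟫ = ‖n‖ * ‖b‖ := by rw [hn1, one_mul, hbρ]; linarith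
  have h6 : b = ρ • n := by
    have h7 := inner_eq_norm_mul_iff_real.1 h5
    rw [hn1, hbρ, one_smul] at h7
    exact h7.symm
  intro y hy
  rw [mem_closedBall_iff_norm] at hy
  rw [Set.mem_add]
  refine ⟨σ, hσ, y - σ, ?_, by abel⟩
  rw [mem_closedBall_zero_iff]
  have h8 : y - σ = (y - (z - (1 / β) • n)) + (ρ - 1 / β) • n := by
    rw [← hzeq, h6]; module
  rw [h8]
  calc ‖(y - (z - (1 / β) • n)) + (ρ - 1 / β) • n‖
      ≤ ‖y - (z - (1 / β) • n)‖ + ‖(ρ - 1 / β) • n‖ := norm_add_le _ _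
    _ ≤ 1 / β + (ρ - 1 / β) := by
        rw [norm_smul, hn1, mul_one, Real.norm_eq_abs, abs_of_nonneg (by linarith)]
        linarith
    _ = ρ := by ring

end APLBAux

/-- Lower bound for alternating projections: there is a hard instance of two `β`-smooth
closed convex sets in the plane, with a common `δ`-interior point `q` and initial point
`x₀` within distance `R` of `q`, on which `N` steps of alternating projections leave a
final iterate at distance at least `c^(2N-1) (√(R² - δ²) - δ(c+1)/√(1-c²))` from the
intersection. -/
theorem alternating_projections_lower_bound (N : ℕ) (hN : 1 ≤ N) (β δ R c : ℝ)
    (hβ : 0 < β) (hδ : 0 < δ) (hR : δ ≤ R) (hc : c ∈ Set.Ioo (0 : ℝ) 1) :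
    ∃ C₁ C₂ : Set (EuclideanSpace ℝ (Fin 2)), ∃ q x₀ : EuclideanSpace ℝ (Fin 2),
      ∃ z x : ℕ → EuclideanSpace ℝ (Fin 2),
      C₁.Nonempty ∧ IsClosed C₁ ∧ Convex ℝ C₁ ∧ IsSmoothSet β C₁ ∧
      C₂.Nonempty ∧ IsClosed C₂ ∧ Convex ℝ C₂ ∧ IsSmoothSet β C₂ ∧
      closedBall q δ ⊆ C₁ ∩ C₂ ∧ ‖x₀ - q‖ ≤ R ∧ x 0 = x₀ ∧
      (∀ k < N, z k ∈ C₁ ∧ (∀ y ∈ C₁, ‖x k - z k‖ ≤ ‖x k - y‖) ∧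
        x (k + 1) ∈ C₂ ∧ (∀ y ∈ C₂, ‖z k - x (k + 1)‖ ≤ ‖z k - y‖)) ∧
      c ^ (2 * N - 1) * (Real.sqrt (R ^ 2 - δ ^ 2) - δ * (c + 1) / Real.sqrt (1 - c ^ 2)) ≤
        Metric.infDist (x N) (C₁ ∩ C₂) := by
  obtain ⟨hc0, hc1⟩ := hc
  have hR0 : 0 < R := lt_of_lt_of_le hδ hR
  set s := Real.sqrt (1 - c ^ 2) with hs_def
  have hs2 : s ^ 2 = 1 - c ^ 2 := Real.sq_sqrt (by nlinarith)
  have hs0 : 0 < s := Real.sqrt_pos.2 (by nlinarith)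
  set G := Real.sqrt (R ^ 2 - δ ^ 2) with hG_def
  have hG2 : G ^ 2 = R ^ 2 - δ ^ 2 := Real.sq_sqrt (by nlinarith)
  have hG0 : 0 ≤ G := Real.sqrt_nonneg _
  set w0 := δ * (c + 1) / s with hw0_def
  have hw00 : 0 < w0 := by positivity
  set K := G - w0 with hK_def
  set d := max K 0 with hd_def
  have hd0 : 0 ≤ d := le_max_right _ _
  set ρ := max (1 / β) δ with hρ_def
  have hρβ : 1 / β ≤ ρ := le_max_left _ _
  have hρδ : δ ≤ ρ := le_max_right _ _
  have hρ0 : 0 < ρ := lt_of_lt_of_le hδ hρδ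
  set qx := -w0 with hqx_def
  have hqx0 : qx < 0 := by rw [hqx_def]; linarith
  have hqxs : qx * s = -(δ * (c + 1)) := by
    rw [hqx_def, hw0_def]; field_simp
  have hτc : qx * c - δ * s - qx = 0 := by
    rw [hqx_def, hw0_def]; field_simp; linear_combination (-δ) * hs2
  have hnc : qx * s + δ * c + δ = 0 := by linear_combination hqxs
  -- the orthonormal pair
  set τ : EuclideanSpace ℝ (Fin 2) := APLBAux.V c s with hτ_def
  set nv : EuclideanSpace ℝ (Fin 2) := APLBAux.V s (-c) with hnv_def
  have hττ : ⟪τ, τ⟫ = 1 := by rw [hτ_def, APLBAux.inner_V]; linear_combination hs2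
  have hnn : ⟪nv, nv⟫ = 1 := by rw [hnv_def, APLBAux.inner_V]; linear_combination hs2
  have hτn : ⟪τ, nv⟫ = 0 := by rw [hτ_def, hnv_def, APLBAux.inner_V]; ring
  have hnτ : ⟪nv, τ⟫ = 0 := by rw [hτ_def, hnv_def, APLBAux.inner_V]; ring
  have hnτ1 : ‖τ‖ = 1 := APLBAux.norm_eq_of_inner_self zero_le_one (by rw [hττ]; norm_num)
  have hnnv1 : ‖nv‖ = 1 := APLBAux.norm_eq_of_inner_self zero_le_one (by rw [hnn]; norm_num)
  set e₁ : EuclideanSpace ℝ (Fin 2) := c • τ + s • nv with he₁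
  set e₂ : EuclideanSpace ℝ (Fin 2) := s • τ - c • nv with he₂
  have he2e2 : ⟪e₂, e₂⟫ = 1 := by
    rw [he₂]
    simp only [inner_sub_left, inner_sub_right, real_inner_smul_left, real_inner_smul_right,
      hττ, hnn, hτn, hnτ]
    linear_combination hs2
  have he1e1 : ⟪e₁, e₁⟫ = 1 := by
    rw [he₁]
    simp only [inner_add_left, inner_add_right, real_inner_smul_left, real_inner_smul_right,
      hττ, hnn, hτn, hnτ]
    linear_combination hs2
  have he2e1 : ⟪e₂, e₁⟫ = 0 := by
    rw [he₁, he₂]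
    simp only [inner_add_left, inner_add_right, inner_sub_left, inner_sub_right,
      real_inner_smul_left, real_inner_smul_right, hττ, hnn, hτn, hnτ]
    ring
  have he1e2 : ⟪e₁, e₂⟫ = 0 := by
    rw [he₁, he₂]
    simp only [inner_add_left, inner_add_right, inner_sub_left, inner_sub_right,
      real_inner_smul_left, real_inner_smul_right, hττ, hnn, hτn, hnτ]
    ring
  have he2τ : ⟪e₂, τ⟫ = s := by
    rw [he₂]
    simp only [inner_sub_left, real_inner_smul_left, hττ, hnτ]
    ring
  have hne1 : ⟪nv, e₁⟫ = s := by
    rw [he₁]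
    simp only [inner_add_right, real_inner_smul_right, hnn, hnτ]
    ring
  have hne₂1 : ‖e₂‖ = 1 := APLBAux.norm_eq_of_inner_self zero_le_one (by rw [he2e2]; norm_num)
  -- the two sets
  set A₁ : EuclideanSpace ℝ (Fin 2) := qx • e₁ - ρ • e₂ with hA₁
  set B₁ : EuclideanSpace ℝ (Fin 2) := d • e₁ - ρ • e₂ with hB₁
  set A₂ : EuclideanSpace ℝ (Fin 2) := qx • τ - ρ • nv with hA₂
  set B₂ : EuclideanSpace ℝ (Fin 2) := (d * c) • τ - ρ • nv with hB₂
  set C₁ : Set (EuclideanSpace ℝ (Fin 2)) := segment ℝ A₁ B₁ + closedBall 0 ρ with hC₁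
  set C₂ : Set (EuclideanSpace ℝ (Fin 2)) := segment ℝ A₂ B₂ + closedBall 0 ρ with hC₂
  set q : EuclideanSpace ℝ (Fin 2) := qx • e₁ - δ • e₂ with hq
  -- basic properties of the sets
  have hseg₁ : IsCompact (segment ℝ A₁ B₁) := by
    rw [segment_eq_image ℝ A₁ B₁]
    exact isCompact_Icc.image (by fun_prop)
  have hseg₂ : IsCompact (segment ℝ A₂ B₂) := by
    rw [segment_eq_image ℝ A₂ B₂]
    exact isCompact_Icc.image (by fun_prop)
  have hC₁cl : IsClosed C₁ := (hseg₁.add (isCompact_closedBall _ _)).isClosed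
  have hC₂cl : IsClosed C₂ := (hseg₂.add (isCompact_closedBall _ _)).isClosed
  have hC₁conv : Convex ℝ C₁ := (convex_segment _ _).add (convex_closedBall _ _)
  have hC₂conv : Convex ℝ C₂ := (convex_segment _ _).add (convex_closedBall _ _)
  have hC₁ne : C₁.Nonempty :=
    ⟨A₁ + 0, Set.add_mem_add (left_mem_segment ℝ _ _) (mem_closedBall_self hρ0.le)⟩
  have hC₂ne : C₂.Nonempty :=
    ⟨A₂ + 0, Set.add_mem_add (left_mem_segment ℝ _ _) (mem_closedBall_self hρ0.le)⟩
  have hC₁sm : IsSmoothSet β C₁ := APLBAux.isSmoothSet_add_closedBall hβ hρβ _ hC₁cl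
  have hC₂sm : IsSmoothSet β C₂ := APLBAux.isSmoothSet_add_closedBall hβ hρβ _ hC₂cl
  -- segment membership helpers
  have hsegmem₁ : ∀ t : ℝ, qx ≤ t → t ≤ d → t • e₁ - ρ • e₂ ∈ segment ℝ A₁ B₁ := by
    intro t h1 h2
    have hden : 0 < d - qx := by linarith
    have hden' : d - qx ≠ 0 := ne_of_gt hden
    refine ⟨1 - (t - qx) / (d - qx), (t - qx) / (d - qx), ?_,
      div_nonneg (by linarith) hden.le, by ring, ?_⟩
    · have : (t - qx) / (d - qx) ≤ 1 := by rw [div_le_one hden]; linarith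
      linarith
    · rw [hA₁, hB₁]
      match_scalars
      · field_simp
        ring
      · field_simp
        ring
  have hsegmem₂ : ∀ t : ℝ, qx ≤ t → t ≤ d * c → t • τ - ρ • nv ∈ segment ℝ A₂ B₂ := by
    intro t h1 h2
    have hdc : 0 ≤ d * c := mul_nonneg hd0 hc0.le
    have hden : 0 < d * c - qx := by linarith
    have hden' : d * c - qx ≠ 0 := ne_of_gt hden
    refine ⟨1 - (t - qx) / (d * c - qx), (t - qx) / (d * c - qx), ?_,
      div_nonneg (by linarith) hden.le, by ring, ?_⟩
    · have : (t - qx) / (d * c - qx) ≤ 1 := by rw [div_le_one hden]; linarith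
      linarith
    · rw [hA₂, hB₂]
      match_scalars
      · field_simp
        ring
      · field_simp
        ring
  -- the δ-ball around q is inside both sets
  have hq₁ : closedBall q δ ⊆ C₁ := by
    intro y hy
    rw [mem_closedBall_iff_norm] at hy
    refine Set.mem_add.2 ⟨A₁, left_mem_segment ℝ _ _, y - A₁, ?_, by abel⟩
    rw [mem_closedBall_zero_iff]
    have hqa : q - A₁ = (ρ - δ) • e₂ := by rw [hq, hA₁]; module
    have hsplit : y - A₁ = (y - q) + (q - A₁) := by abel
    rw [hsplit, hqa]
    calc ‖(y - q) + (ρ - δ) • e₂‖ ≤ ‖y - q‖ + ‖(ρ - δ) • e₂‖ := norm_add_le _ _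
      _ ≤ δ + (ρ - δ) := by
          rw [norm_smul, hne₂1, mul_one, Real.norm_eq_abs, abs_of_nonneg (by linarith)]
          linarith
      _ = ρ := by ring
  have hq₂ : closedBall q δ ⊆ C₂ := by
    intro y hy
    rw [mem_closedBall_iff_norm] at hy
    refine Set.mem_add.2 ⟨A₂, left_mem_segment ℝ _ _, y - A₂, ?_, by abel⟩
    rw [mem_closedBall_zero_iff]
    have hqa : q - A₂ = (ρ - δ) • nv := by
      rw [hq, hA₂, he₁, he₂]
      match_scalars
      · linear_combination hτc
      · linear_combination hnc
    have hsplit : y - A₂ = (y - q) + (q - A₂) := by abel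
    rw [hsplit, hqa]
    calc ‖(y - q) + (ρ - δ) • nv‖ ≤ ‖y - q‖ + ‖(ρ - δ) • nv‖ := norm_add_le _ _
      _ ≤ δ + (ρ - δ) := by
          rw [norm_smul, hnnv1, mul_one, Real.norm_eq_abs, abs_of_nonneg (by linarith)]
          linarith
      _ = ρ := by ring
  have hball : closedBall q δ ⊆ C₁ ∩ C₂ := subset_inter hq₁ hq₂
  have hqmem : q ∈ C₁ ∩ C₂ := hball (mem_closedBall_self hδ.le)
  -- half-plane bounds
  have hC₁half : ∀ y ∈ C₁, ⟪e₂, y⟫ ≤ 0 := by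
    intro y hy
    obtain ⟨σ, hσ, b, hb, rfl⟩ := Set.mem_add.1 hy
    obtain ⟨a1, a2, ha1, ha2, hsum, rfl⟩ := hσ
    rw [mem_closedBall_zero_iff] at hb
    have h1 : ⟪e₂, A₁⟫ = -ρ := by
      rw [hA₁]
      simp only [inner_sub_right, real_inner_smul_right, he2e1, he2e2]
      ring
    have h2 : ⟪e₂, B₁⟫ = -ρ := by
      rw [hB₁]
      simp only [inner_sub_right, real_inner_smul_right, he2e1, he2e2]
      ring
    have h3 : ⟪e₂, b⟫ ≤ ρ := by
      have := real_inner_le_norm e₂ b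
      rw [hne₂1, one_mul] at this
      linarith
    have h4 : ⟪e₂, a1 • A₁ + a2 • B₁ + b⟫ = a1 * ⟪e₂, A₁⟫ + a2 * ⟪e₂, B₁⟫ + ⟪e₂, b⟫ := by
      simp only [inner_add_right, real_inner_smul_right]
    rw [h4, h1, h2]
    have hρsum : a1 * ρ + a2 * ρ = ρ := by rw [← add_mul, hsum, one_mul]
    linarith
  have hC₂half : ∀ y ∈ C₂, ⟪nv, y⟫ ≤ 0 := by
    intro y hy
    obtain ⟨σ, hσ, b, hb, rfl⟩ := Set.mem_add.1 hy
    obtain ⟨a1, a2, ha1, ha2, hsum, rfl⟩ := hσ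
    rw [mem_closedBall_zero_iff] at hb
    have h1 : ⟪nv, A₂⟫ = -ρ := by
      rw [hA₂]
      simp only [inner_sub_right, real_inner_smul_right, hnτ, hnn]
      ring
    have h2 : ⟪nv, B₂⟫ = -ρ := by
      rw [hB₂]
      simp only [inner_sub_right, real_inner_smul_right, hnτ, hnn]
      ring
    have h3 : ⟪nv, b⟫ ≤ ρ := by
      have := real_inner_le_norm nv b
      rw [hnnv1, one_mul] at this
      linarith
    have h4 : ⟪nv, a1 • A₂ + a2 • B₂ + b⟫ = a1 * ⟪nv, A₂⟫ + a2 * ⟪nv, B₂⟫ + ⟪nv, b⟫ := by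
      simp only [inner_add_right, real_inner_smul_right]
    rw [h4, h1, h2]
    have hρsum : a1 * ρ + a2 * ρ = ρ := by rw [← add_mul, hsum, one_mul]
    linarith
  -- the iterate sequences
  set zf : ℕ → EuclideanSpace ℝ (Fin 2) := fun k => (d * c ^ (2 * k)) • e₁ with hzf
  set xf : ℕ → EuclideanSpace ℝ (Fin 2) :=
    fun k => if k = 0 then d • e₁ else (d * c ^ (2 * k - 1)) • τ with hxf
  have hzfk : ∀ k : ℕ, zf k = (d * c ^ (2 * k)) • e₁ := fun k => by rw [hzf]
  have hxf0 : xf 0 = d • e₁ := by simp [hxf]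
  have hxfs : ∀ k : ℕ, k ≠ 0 → xf k = (d * c ^ (2 * k - 1)) • τ := by
    intro k hk; simp [hxf, hk]
  -- membership of the iterates
  have hzmem : ∀ k : ℕ, zf k ∈ C₁ := by
    intro k
    have ht1 : qx ≤ d * c ^ (2 * k) := le_trans hqx0.le (by positivity)
    have ht2 : d * c ^ (2 * k) ≤ d := by
      calc d * c ^ (2 * k) ≤ d * 1 :=
            mul_le_mul_of_nonneg_left (pow_le_one₀ hc0.le hc1.le) hd0
        _ = d := mul_one d
    have hmem := hsegmem₁ _ ht1 ht2
    have hdecomp : zf k = ((d * c ^ (2 * k)) • e₁ - ρ • e₂) + ρ • e₂ := by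
      rw [hzfk]; module
    rw [hdecomp]
    refine Set.add_mem_add hmem ?_
    rw [mem_closedBall_zero_iff, norm_smul, hne₂1, mul_one, Real.norm_eq_abs, abs_of_pos hρ0]
  have hxmem : ∀ k : ℕ, k ≠ 0 → xf k ∈ C₂ := by
    intro k hk
    obtain ⟨m, rfl⟩ := Nat.exists_eq_succ_of_ne_zero hk
    have hexp : 2 * (m + 1) - 1 = 2 * m + 1 := by omega
    have ht1 : qx ≤ d * c ^ (2 * m + 1) := le_trans hqx0.le (by positivity)
    have ht2 : d * c ^ (2 * m + 1) ≤ d * c := by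
      refine mul_le_mul_of_nonneg_left ?_ hd0
      calc c ^ (2 * m + 1) = c ^ (2 * m) * c := pow_succ c (2 * m)
        _ ≤ 1 * c := mul_le_mul_of_nonneg_right (pow_le_one₀ hc0.le hc1.le) hc0.le
        _ = c := one_mul c
    have hmem := hsegmem₂ _ ht1 ht2
    have hdecomp : xf (m + 1) = ((d * c ^ (2 * m + 1)) • τ - ρ • nv) + ρ • nv := by
      rw [hxfs _ (Nat.succ_ne_zero m), hexp]; module
    rw [hdecomp]
    refine Set.add_mem_add hmem ?_
    rw [mem_closedBall_zero_iff, norm_smul, hnnv1, mul_one, Real.norm_eq_abs, abs_of_pos hρ0]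
  -- case split on K
  rcases le_or_gt 0 K with hK | hK
  · -- main case
    have hdK : d = K := max_eq_left hK
    refine ⟨C₁, C₂, q, xf 0, zf, xf,
      hC₁ne, hC₁cl, hC₁conv, hC₁sm, hC₂ne, hC₂cl, hC₂conv, hC₂sm, hball, ?_, rfl, ?_, ?_⟩
    · -- ‖x₀ - q‖ ≤ R
      rw [hxf0]
      have hdq : d - qx = G := by rw [hdK, hqx_def, hK_def]; ring
      have hid : d • e₁ - q = G • e₁ + δ • e₂ := by
        rw [hq, ← hdq]
        module
      rw [hid]
      have hnrm : ‖G • e₁ + δ • e₂‖ = R := by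
        refine APLBAux.norm_eq_of_inner_self hR0.le ?_
        simp only [inner_add_left, inner_add_right, real_inner_smul_left, real_inner_smul_right,
          he1e1, he2e2, he1e2, he2e1]
        linear_combination hG2
      rw [hnrm]
    · -- the iteration conditions
      intro k hk
      refine ⟨hzmem k, ?_, hxmem (k + 1) (Nat.succ_ne_zero k), ?_⟩
      · -- projection inequality onto C₁
        rcases Nat.eq_zero_or_pos k with hk0 | hk0
        · subst hk0
          intro y hy
          rw [hxf0, hzfk]
          simp only [Nat.mul_zero, pow_zero, mul_one]
          rw [sub_self, norm_zero]
          exact norm_nonneg _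
        · have hk0' : k ≠ 0 := Nat.pos_iff_ne_zero.1 hk0
          intro y hy
          have hpow : c ^ (2 * k) = c ^ (2 * k - 1) * c := by
            rw [← pow_succ]
            congr 1
            omega
          have hxz : xf k - zf k = (d * c ^ (2 * k - 1) * s) • e₂ := by
            rw [hxfs k hk0', hzfk, hpow, he₁, he₂]
            match_scalars
            · linear_combination (-(d * c ^ (2 * k - 1))) * hs2
            · ring
          rw [hxz, norm_smul, hne₂1, mul_one, Real.norm_eq_abs,
            abs_of_nonneg (by positivity)]
          have h2 : ⟪e₂, xf k - y⟫ ≤ ‖xf k - y‖ := by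
            have := real_inner_le_norm e₂ (xf k - y)
            rwa [hne₂1, one_mul] at this
          have h3 : ⟪e₂, xf k⟫ = d * c ^ (2 * k - 1) * s := by
            rw [hxfs k hk0', real_inner_smul_right, he2τ]
          have h4 : ⟪e₂, xf k - y⟫ = ⟪e₂, xf k⟫ - ⟪e₂, y⟫ := inner_sub_right _ _ _
          have h5 := hC₁half y hy
          rw [h4, h3] at h2
          linarith
      · -- projection inequality onto C₂
        intro y hy
        have hexp : 2 * (k + 1) - 1 = 2 * k + 1 := by omega
        have hzx : zf k - xf (k + 1) = (d * c ^ (2 * k) * s) • nv := by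
          rw [hxfs _ (Nat.succ_ne_zero k), hzfk, hexp, pow_succ, he₁]
          match_scalars
          · ring
          · ring
        rw [hzx, norm_smul, hnnv1, mul_one, Real.norm_eq_abs,
          abs_of_nonneg (by positivity)]
        have h2 : ⟪nv, zf k - y⟫ ≤ ‖zf k - y‖ := by
          have := real_inner_le_norm nv (zf k - y)
          rwa [hnnv1, one_mul] at this
        have h3 : ⟪nv, zf k⟫ = d * c ^ (2 * k) * s := by
          rw [hzfk, real_inner_smul_right, hne1]
        have h4 : ⟪nv, zf k - y⟫ = ⟪nv, zf k⟫ - ⟪nv, y⟫ := inner_sub_right _ _ _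
        have h5 := hC₂half y hy
        rw [h4, h3] at h2
        linarith
    · -- the final distance bound
      have hNne : N ≠ 0 := by omega
      have hτcomb : τ = (1 / s) • e₂ + (c / s) • nv := by
        rw [he₂]
        match_scalars
        · field_simp
        · field_simp
          ring
      have hkey : ∀ y ∈ C₁ ∩ C₂, c ^ (2 * N - 1) * (G - w0) ≤ dist (xf N) y := by
        intro y hy
        obtain ⟨hy1, hy2⟩ := hy
        have h1' := hC₁half y hy1
        have h2' := hC₂half y hy2
        have hτy : ⟪τ, y⟫ ≤ 0 := by
          rw [hτcomb, inner_add_left, real_inner_smul_left, real_inner_smul_left]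
          have hc1s : 0 ≤ 1 / s := by positivity
          have hccs : 0 ≤ c / s := by positivity
          have t1 : 1 / s * ⟪e₂, y⟫ ≤ 0 := mul_nonpos_iff.mpr (Or.inl ⟨hc1s, h1'⟩)
          have t2 : c / s * ⟪nv, y⟫ ≤ 0 := mul_nonpos_iff.mpr (Or.inl ⟨hccs, h2'⟩)
          linarith
        rw [dist_eq_norm, hxfs N hNne]
        have h1 : ⟪τ, (d * c ^ (2 * N - 1)) • τ - y⟫ ≤ ‖(d * c ^ (2 * N - 1)) • τ - y‖ := by
          have := real_inner_le_norm τ ((d * c ^ (2 * N - 1)) • τ - y)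
          rwa [hnτ1, one_mul] at this
        have h2 : ⟪τ, (d * c ^ (2 * N - 1)) • τ - y⟫ = d * c ^ (2 * N - 1) - ⟪τ, y⟫ := by
          rw [inner_sub_right, real_inner_smul_right, hττ, mul_one]
        have h3 : c ^ (2 * N - 1) * (G - w0) = d * c ^ (2 * N - 1) := by
          rw [hdK, hK_def]; ring
        linarith
      have hne : (C₁ ∩ C₂).Nonempty := ⟨q, hqmem⟩
      by_contra hcon
      push_neg at hcon
      obtain ⟨y, hy, hlt⟩ := (Metric.infDist_lt_iff hne).1 hcon
      exact absurd hlt (not_lt.2 (hkey y hy))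
  · -- trivial case: the bound is nonpositive
    refine ⟨C₁, C₂, q, q, fun _ => q, fun _ => q,
      hC₁ne, hC₁cl, hC₁conv, hC₁sm, hC₂ne, hC₂cl, hC₂conv, hC₂sm, hball, ?_, rfl, ?_, ?_⟩
    · rw [sub_self, norm_zero]; linarith
    · intro k hk
      refine ⟨hqmem.1, ?_, hqmem.2, ?_⟩
      · intro y hy
        rw [sub_self, norm_zero]
        exact norm_nonneg _
      · intro y hy
        rw [sub_self, norm_zero]
        exact norm_nonneg _
    · have h1 : 0 < c ^ (2 * N - 1) := pow_pos hc0 _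
      have h2 : c ^ (2 * N - 1) * (G - w0) ≤ 0 :=
        mul_nonpos_iff.mpr (Or.inl ⟨h1.le, by linarith⟩)
      exact le_trans h2 Metric.infDist_nonneg
end
end

section
/- Let L > 0, 0 < R < 1/L, N ≥ 1, and h₀, …, h_{N−1} ∈ [0,1]. Define the ball-pen function f(x) = 1/L − √(1/L² − x²) for |x| ≤ 1/L, with derivative f'(x) = x/√(1/L² − x²) for |x| < 1/L, and let E_f = {(x, t) ∈ ℝ² : |x| ≤ 1/L and t ≥ f(x)} be its epigraph. Then: (i) E_f is a nonempty closed convex L-smooth subset of ℝ²; (ii) the iterates defined by x₀ = R and x_{k+1} = x_k − (h_k/L)·f'(x_k)/√(1 + f'(x_k)²) satisfy x_k = R·∏_{i=0}^{k−1}(1 − h_i) for all 0 ≤ k ≤ N; and (iii) consequently f(x_N) − f(0) = 1/L − √(1/L² − R²·∏_{i=0}^{N−1}(1 − h_i)²). -/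
open Metric Set
open scoped RealInnerProductSpace

noncomputable section

variable {F : Type*} [NormedAddCommGroup F] [InnerProductSpace ℝ F]

/-- The ball-pen function `f(x) = 1/L - √(1/L² - x²)`. -/
def ballPen (L x : ℝ) : ℝ := 1 / L - Real.sqrt (1 / L ^ 2 - x ^ 2)

/-- The derivative of the ball-pen function, `f'(x) = x / √(1/L² - x²)`. -/
def ballPen' (L x : ℝ) : ℝ := x / Real.sqrt (1 / L ^ 2 - x ^ 2)

/-- The epigraph `{(x, t) : |x| ≤ 1/L, t ≥ f(x)}` of the ball-pen function, as a subset
of the Euclidean plane. -/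
def ballPenEpi (L : ℝ) : Set (EuclideanSpace ℝ (Fin 2)) :=
  {p | |p 0| ≤ 1 / L ∧ ballPen L (p 0) ≤ p 1}

namespace BPAux

lemma sqrt_concave_aux (c x y u v a b : ℝ)
    (hx : x^2 ≤ c) (hy : y^2 ≤ c)
    (hu : 0 ≤ u) (hv : 0 ≤ v) (hu2 : u^2 = c - x^2) (hv2 : v^2 = c - y^2)
    (ha : 0 ≤ a) (hb : 0 ≤ b) (hab : a + b = 1) :
    a * u + b * v ≤ Real.sqrt (c - (a*x + b*y)^2) := by
  have huv : u*v ≤ c - x*y := by nlinarith [sq_nonneg (u - v), sq_nonneg (x - y)]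
  have hprod : 0 ≤ (a*b) * (c - x*y - u*v) :=
    mul_nonneg (mul_nonneg ha hb) (by linarith)
  have h1 : a^2 * u^2 = a^2 * (c - x^2) := by rw [hu2]
  have h2 : b^2 * v^2 = b^2 * (c - y^2) := by rw [hv2]
  have h3 : c * (a+b)^2 = c := by rw [hab]; ring
  have key : (a*u + b*v)^2 ≤ c - (a*x+b*y)^2 := by nlinarith [hprod, h1, h2, h3]
  calc a*u + b*v = Real.sqrt ((a*u+b*v)^2) := (Real.sqrt_sq (by positivity)).symm
    _ ≤ _ := Real.sqrt_le_sqrt key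


lemma ballPen_zero {L : ℝ} (hL : 0 < L) : ballPen L 0 = 0 := by
  rw [ballPen, show (1:ℝ)/L^2 - 0^2 = (1/L)^2 by ring, Real.sqrt_sq (by positivity)]
  ring

lemma continuous_ballPen (L : ℝ) : Continuous (ballPen L) := by
  unfold ballPen
  fun_prop

lemma closed_epi (L : ℝ) : IsClosed (ballPenEpi L) := by
  have h0 : Continuous fun p : EuclideanSpace ℝ (Fin 2) => p 0 :=
    (EuclideanSpace.proj (𝕜 := ℝ) (0 : Fin 2)).continuous
  have h1 : Continuous fun p : EuclideanSpace ℝ (Fin 2) => p 1 :=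
    (EuclideanSpace.proj (𝕜 := ℝ) (1 : Fin 2)).continuous
  exact (isClosed_le h0.abs continuous_const).inter
    (isClosed_le ((continuous_ballPen L).comp h0) h1)

lemma sq_le_of_abs {L x : ℝ} (hL : 0 < L) (hx : |x| ≤ 1/L) : x^2 ≤ 1/L^2 := by
  have h := abs_le.mp hx
  rw [show (1:ℝ)/L^2 = (1/L)^2 by ring]
  nlinarith [mul_nonneg (by linarith [h.2] : (0:ℝ) ≤ 1/L - x) (by linarith [h.1] : (0:ℝ) ≤ 1/L + x)]

lemma convex_epi {L : ℝ} (hL : 0 < L) : Convex ℝ (ballPenEpi L) := by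
  intro p hp q hq a b ha hb hab
  obtain ⟨hp1, hp2⟩ := hp
  obtain ⟨hq1, hq2⟩ := hq
  have hco0 : (a • p + b • q) 0 = a * p 0 + b * q 0 := rfl
  have hco1 : (a • p + b • q) 1 = a * p 1 + b * q 1 := rfl
  constructor
  · show |(a • p + b • q) 0| ≤ 1/L
    rw [hco0]
    calc |a * p 0 + b * q 0| ≤ |a * p 0| + |b * q 0| := abs_add_le _ _
      _ = a * |p 0| + b * |q 0| := by rw [abs_mul, abs_mul, abs_of_nonneg ha, abs_of_nonneg hb]
      _ ≤ a * (1/L) + b * (1/L) := by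
          exact add_le_add (mul_le_mul_of_nonneg_left hp1 ha) (mul_le_mul_of_nonneg_left hq1 hb)
      _ = 1/L := by rw [← add_mul, hab, one_mul]
  · show ballPen L ((a • p + b • q) 0) ≤ (a • p + b • q) 1
    rw [hco0, hco1]
    set u := Real.sqrt (1/L^2 - p 0^2) with hu
    set v := Real.sqrt (1/L^2 - q 0^2) with hv
    have hpx : p 0^2 ≤ 1/L^2 := sq_le_of_abs hL hp1
    have hqx : q 0^2 ≤ 1/L^2 := sq_le_of_abs hL hq1
    have hu2 : u^2 = 1/L^2 - p 0^2 := Real.sq_sqrt (by linarith)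
    have hv2 : v^2 = 1/L^2 - q 0^2 := Real.sq_sqrt (by linarith)
    have hconc := sqrt_concave_aux (1/L^2) (p 0) (q 0) u v a b hpx hqx
      (Real.sqrt_nonneg _) (Real.sqrt_nonneg _) hu2 hv2 ha hb hab
    have hp2' : 1/L - u ≤ p 1 := hp2
    have hq2' : 1/L - v ≤ q 1 := hq2
    rw [ballPen]
    have := add_le_add (mul_le_mul_of_nonneg_left hp2' ha) (mul_le_mul_of_nonneg_left hq2' hb)
    have h3 : a * (1/L) + b * (1/L) = 1/L := by rw [← add_mul, hab, one_mul]
    linarith [hconc, this, h3]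

def vec (a b : ℝ) : EuclideanSpace ℝ (Fin 2) := !₂[a, b]

@[simp] lemma vec_zero (a b : ℝ) : vec a b 0 = a := rfl
@[simp] lemma vec_one (a b : ℝ) : vec a b 1 = b := rfl

set_option maxHeartbeats 2000000 in
lemma smooth_epi {L : ℝ} (hL : 0 < L) : IsSmoothSet L (ballPenEpi L) := by
  intro z hz n hn hnorm
  have hL0 : L ≠ 0 := ne_of_gt hL
  have hzE : z ∈ ballPenEpi L := (closed_epi L).frontier_subset hz
  obtain ⟨hz1, hz2⟩ := hzE
  have hn2 : n 0 ^ 2 + n 1 ^ 2 = 1 := by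
    have h := real_inner_self_eq_norm_sq n
    rw [hnorm] at h
    simp only [PiLp.inner_apply, RCLike.inner_apply, conj_trivial, Fin.sum_univ_two,
      one_pow] at h
    nlinarith [h]
  have hinner : ∀ x ∈ ballPenEpi L, n 0 * (x 0 - z 0) + n 1 * (x 1 - z 1) ≤ 0 := by
    intro x hx
    have hxx := hn x hx
    simp [PiLp.inner_apply, RCLike.inner_apply, Fin.sum_univ_two] at hxx
    linear_combination hxx
  -- n 1 ≤ 0 from the vertical ray
  have hvert : vec (z 0) (z 1 + 1) ∈ ballPenEpi L :=
    ⟨hz1, by simpa using le_trans hz2 (by linarith)⟩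
  have hn1 : n 1 ≤ 0 := by
    have hv := hinner _ hvert
    simp only [vec_zero, vec_one] at hv
    nlinarith [hv]
  have habs : n 0 ^ 2 ≤ 1 := by nlinarith [sq_nonneg (n 1)]
  have hn0abs : |n 0| ≤ 1 := abs_le.2 ⟨by nlinarith, by nlinarith⟩
  -- the tangency point
  have hstar_mem : vec (n 0 / L) (1/L + n 1 / L) ∈ ballPenEpi L := by
    constructor
    · show |n 0 / L| ≤ 1/L
      rw [abs_div, abs_of_pos hL]
      gcongr
    · show ballPen L (n 0 / L) ≤ 1/L + n 1/L
      have e1 : 1 / L ^ 2 - (n 0 / L) ^ 2 = (-(n 1) / L) ^ 2 := by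
        linear_combination (-(1/L^2)) * hn2
      rw [ballPen, e1, Real.sqrt_sq (div_nonneg (neg_nonneg.mpr hn1) hL.le)]
      exact le_of_eq (by ring)
  have hstar := hinner _ hstar_mem
  simp only [vec_zero, vec_one] at hstar
  have hkey : 1/L ≤ n 0 * z 0 + n 1 * (z 1 - 1/L) := by
    have h1 : n 0^2/L + n 1^2/L = 1/L := by rw [← add_div, hn2]
    ring_nf at hstar h1 ⊢
    linarith [hstar, h1]
  have hz0sq : z 0 ^ 2 ≤ 1/L^2 := sq_le_of_abs hL hz1
  have hsnn : 0 ≤ Real.sqrt (1/L^2 - z 0^2) := Real.sqrt_nonneg _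
  have hs : Real.sqrt (1/L^2 - z 0^2) ^ 2 = 1/L^2 - z 0^2 := Real.sq_sqrt (by linarith)
  have hz2' : 1/L - Real.sqrt (1/L^2 - z 0^2) ≤ z 1 := hz2
  -- upper bound n0 * z0 ≤ 1/L
  have hup : n 0 * z 0 ≤ 1/L :=
    calc n 0 * z 0 ≤ |n 0 * z 0| := le_abs_self _
      _ = |n 0| * |z 0| := abs_mul _ _
      _ ≤ 1 * (1/L) := mul_le_mul hn0abs hz1 (abs_nonneg _) zero_le_one
      _ = 1/L := one_mul _
  obtain ⟨w, hw⟩ : ∃ w : ℝ, w = 1/L := ⟨_, rfl⟩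
  rw [← hw] at hkey hup hz2' hz1 ⊢
  have hwpos : 0 < w := by rw [hw]; positivity
  have hwsq : (1:ℝ)/L^2 = w^2 := by rw [hw]; ring
  -- main claims
  have hAB : z 0 = n 0 * w ∧ w ≤ z 1 - n 1 * w := by
    rcases lt_or_eq_of_le hn1 with hlt | heq
    · -- n 1 < 0 : z 1 ≤ w
      have hd : z 1 ≤ w := by
        by_contra hc
        push_neg at hc
        nlinarith [mul_neg_of_neg_of_pos hlt (by linarith : (0:ℝ) < z 1 - w)]
      have hball : z 0^2 + (z 1 - w)^2 ≤ w^2 := by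
        have h3 : w - z 1 ≤ Real.sqrt (1/L^2 - z 0^2) := by linarith
        have h4 : (w - z 1)^2 ≤ Real.sqrt (1/L^2 - z 0^2)^2 :=
          pow_le_pow_left₀ (by linarith) h3 2
        rw [hs, hwsq] at h4
        nlinarith [h4]
      have h5 : 2*w * w ≤ 2*w * (n 0 * z 0 + n 1 * (z 1 - w)) :=
        mul_le_mul_of_nonneg_left hkey (by positivity)
      have h6 : (n 0^2 + n 1^2) * w^2 = 1 * w^2 := by rw [hn2]
      have hzero : (z 0 - n 0 * w)^2 + ((z 1 - w) - n 1 * w)^2 ≤ 0 := by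
        ring_nf at h5 h6 hball ⊢
        linarith [h5, h6, hball]
      have e1 : z 0 - n 0 * w = 0 := by
        have he : (z 0 - n 0 * w)^2 = 0 :=
          le_antisymm (by linarith [hzero, sq_nonneg ((z 1 - w) - n 1 * w)]) (sq_nonneg _)
        exact pow_eq_zero_iff (two_ne_zero) |>.mp he
      have e2 : (z 1 - w) - n 1 * w = 0 := by
        have he : ((z 1 - w) - n 1 * w)^2 = 0 :=
          le_antisymm (by linarith [hzero, sq_nonneg (z 0 - n 0 * w)]) (sq_nonneg _)
        exact pow_eq_zero_iff (two_ne_zero) |>.mp he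
      exact ⟨by linarith, by linarith⟩
    · -- n 1 = 0
      have hone : n 0 ^ 2 = 1 := by rw [heq] at hn2; simpa using hn2
      have heqt : n 0 * z 0 = w := by
        rw [heq] at hkey
        simp only [zero_mul, add_zero] at hkey
        linarith
      have hz0 : z 0 = n 0 * w := by
        linear_combination n 0 * heqt - z 0 * hone
      refine ⟨hz0, ?_⟩
      have hzz : 1/L^2 - z 0^2 = 0 := by
        rw [hz0, hwsq]
        linear_combination (-(w^2)) * hone
      rw [hzz, Real.sqrt_zero] at hz2'
      have hz' : n 1 * w = 0 := by rw [heq]; ring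
      linarith [hz2', hz']
  obtain ⟨hA, hB⟩ := hAB
  -- conclude: the ball is inside
  intro p hp
  rw [mem_closedBall, dist_eq_norm] at hp
  have hpsq' : ‖p - (z - w • n)‖^2 ≤ w^2 :=
    pow_le_pow_left₀ (norm_nonneg _) hp 2
  have h9 : (p 0 - z 0 + w * n 0)^2 + (p 1 - z 1 + w * n 1)^2 ≤ w^2 := by
    have h10 := real_inner_self_eq_norm_sq (p - (z - w • n))
    simp only [PiLp.inner_apply, RCLike.inner_apply, conj_trivial, Fin.sum_univ_two,
      PiLp.sub_apply, PiLp.smul_apply, smul_eq_mul] at h10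
    ring_nf at h10 hpsq' ⊢
    linarith [h10, hpsq']
  have hw0 : p 0 - z 0 + w * n 0 = p 0 := by rw [hA]; ring
  have hw1 : p 1 - z 1 + w * n 1 = p 1 - (z 1 - n 1 * w) := by ring
  rw [hw0, hw1] at h9
  have hp0sq : p 0^2 ≤ w^2 := by linarith [sq_nonneg (p 1 - (z 1 - n 1 * w)), h9]
  constructor
  · show |p 0| ≤ 1/L
    rw [← hw]
    calc |p 0| = Real.sqrt (p 0^2) := (Real.sqrt_sq_eq_abs _).symm
      _ ≤ Real.sqrt (w^2) := Real.sqrt_le_sqrt hp0sq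
      _ = w := Real.sqrt_sq hwpos.le
  · show ballPen L (p 0) ≤ p 1
    rw [ballPen, hwsq, ← hw]
    have h10 : ((z 1 - n 1 * w) - p 1)^2 ≤ w^2 - p 0^2 := by nlinarith [h9]
    have h11 : (z 1 - n 1 * w) - p 1 ≤ Real.sqrt (w^2 - p 0^2) :=
      calc (z 1 - n 1 * w) - p 1 ≤ |(z 1 - n 1 * w) - p 1| := le_abs_self _
        _ = Real.sqrt (((z 1 - n 1 * w) - p 1)^2) := (Real.sqrt_sq_eq_abs _).symm
        _ ≤ _ := Real.sqrt_le_sqrt h10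
    linarith [hB]

end BPAux

namespace BPAux

lemma step_eq {L : ℝ} (hL : 0 < L) {y : ℝ} (hy0 : 0 ≤ y) (hy1 : y < 1/L) :
    ballPen' L y / Real.sqrt (1 + ballPen' L y ^ 2) = L * y := by
  have hL0 : L ≠ 0 := ne_of_gt hL
  have hw : 0 < 1/L := by positivity
  have h1 : 0 < 1/L^2 - y^2 := by
    rw [show (1:ℝ)/L^2 = (1/L)^2 by ring]
    nlinarith [mul_pos (by linarith : (0:ℝ) < 1/L - y) (by linarith : (0:ℝ) < 1/L + y)]
  set s := Real.sqrt (1/L^2 - y^2) with hsdef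
  have hs0 : 0 < s := Real.sqrt_pos.2 h1
  have hs00 : s ≠ 0 := ne_of_gt hs0
  have hs2 : s^2 = 1/L^2 - y^2 := Real.sq_sqrt h1.le
  have hkey : 1 + (y/s)^2 = (1/(L*s))^2 := by
    have e1 : 1 + y^2/s^2 = (s^2 + y^2)/s^2 := by field_simp
    have e2 : s^2 + y^2 = 1/L^2 := by linarith [hs2]
    rw [div_pow, e1, e2, show ((1:ℝ)/L^2)/s^2 = (1/(L*s))^2 by ring]
  rw [ballPen', ← hsdef, hkey, Real.sqrt_sq (by positivity)]
  field_simp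

end BPAux

/-- Epismooth gradient descent on the ball-pen function: the epigraph is a nonempty
closed convex `L`-smooth set, the normalized gradient iterates from `x₀ = R` are
`x_k = R ∏_{i<k} (1 - h_i)`, and the final objective gap is
`1/L - √(1/L² - R² ∏_{i<N} (1 - h_i)²)`. -/
theorem ballPen_epismooth_descent (L R : ℝ) (hL : 0 < L) (hR0 : 0 < R) (hR : R < 1 / L)
    (N : ℕ) (hN : 1 ≤ N) (h : ℕ → ℝ) (hh : ∀ i < N, h i ∈ Set.Icc (0 : ℝ) 1) :
    ((ballPenEpi L).Nonempty ∧ IsClosed (ballPenEpi L) ∧ Convex ℝ (ballPenEpi L) ∧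
      IsSmoothSet L (ballPenEpi L)) ∧
    ∀ x : ℕ → ℝ, x 0 = R →
      (∀ k < N, x (k + 1) =
        x k - h k / L * (ballPen' L (x k) / Real.sqrt (1 + ballPen' L (x k) ^ 2))) →
      (∀ k ≤ N, x k = R * ∏ i ∈ Finset.range k, (1 - h i)) ∧
      ballPen L (x N) - ballPen L 0 =
        1 / L - Real.sqrt (1 / L ^ 2 - R ^ 2 * ∏ i ∈ Finset.range N, (1 - h i) ^ 2) := by
  constructor
  · refine ⟨⟨BPAux.vec 0 (1/L), ?_, ?_⟩, BPAux.closed_epi L, BPAux.convex_epi hL,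
      BPAux.smooth_epi hL⟩
    · show |BPAux.vec 0 (1/L) 0| ≤ 1/L
      rw [BPAux.vec_zero, abs_zero]
      positivity
    · show ballPen L (BPAux.vec 0 (1/L) 0) ≤ BPAux.vec 0 (1/L) 1
      rw [BPAux.vec_zero, BPAux.vec_one, BPAux.ballPen_zero hL]
      positivity
  · intro x hx0 hrec
    have hL0 : L ≠ 0 := ne_of_gt hL
    have hprod : ∀ k, k ≤ N → 0 ≤ (∏ i ∈ Finset.range k, (1 - h i)) ∧
        (∏ i ∈ Finset.range k, (1 - h i)) ≤ 1 := by
      intro k hk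
      constructor
      · apply Finset.prod_nonneg
        intro i hi
        have := hh i (lt_of_lt_of_le (Finset.mem_range.mp hi) hk)
        linarith [this.2]
      · apply Finset.prod_le_one
        · intro i hi
          have := hh i (lt_of_lt_of_le (Finset.mem_range.mp hi) hk)
          linarith [this.2]
        · intro i hi
          have := hh i (lt_of_lt_of_le (Finset.mem_range.mp hi) hk)
          linarith [this.1]
    have hiter : ∀ k, k ≤ N → x k = R * ∏ i ∈ Finset.range k, (1 - h i) := by
      intro k
      induction k with
      | zero => intro _; simpa using hx0
      | succ k ih =>
        intro hk1
        have hk : k < N := lt_of_lt_of_le (Nat.lt_succ_self k) hk1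
        have hxk := ih (le_of_lt hk)
        obtain ⟨hP0, hP1⟩ := hprod k (le_of_lt hk)
        have hx0' : 0 ≤ x k := by rw [hxk]; exact mul_nonneg hR0.le hP0
        have hx1' : x k < 1/L := by
          rw [hxk]
          calc R * ∏ i ∈ Finset.range k, (1 - h i) ≤ R * 1 :=
                mul_le_mul_of_nonneg_left hP1 hR0.le
            _ = R := mul_one R
            _ < 1/L := hR
        rw [hrec k hk, BPAux.step_eq hL hx0' hx1', hxk, Finset.prod_range_succ]
        field_simp
    refine ⟨hiter, ?_⟩
    have hxN := hiter N le_rfl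
    have hP2 : (R * ∏ i ∈ Finset.range N, (1 - h i))^2 =
        R^2 * ∏ i ∈ Finset.range N, (1 - h i)^2 := by
      rw [mul_pow, ← Finset.prod_pow]
    rw [hxN, BPAux.ballPen_zero hL, ballPen, sub_zero, hP2]
end
end

section
/- Let L > 0, 0 < τ < 1/L, N ≥ 1, h₀, …, h_{N−1} ≥ 0, and R ∈ ℝ with R − τ·Σ_{i=0}^{N−1} h_i ≥ τ. Define the ball-Huber function f : ℝ → ℝ by f(x) = 1/L − √(1/L² − x²) for |x| ≤ τ and f(x) = (τ/√(1/L² − τ²))·|x| + 1/L − (1/L²)/√(1/L² − τ²) for |x| > τ. Then: (i) f is convex and its epigraph {(x, t) ∈ ℝ² : t ≥ f(x)} is an L-smooth set; (ii) the iterates defined by x₀ = R and x_{k+1} = x_k − (h_k/L)·f'(x_k)/√(1 + f'(x_k)²) satisfy x_k = R − τ·Σ_{i=0}^{k−1} h_i for all 0 ≤ k ≤ N; and (iii) f(x_N) − f(0) = 1/L − (1/L² − τ·(R − τ·Σ_{i=0}^{N−1} h_i))/√(1/L² − τ²). -/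
open Metric Set
open scoped RealInnerProductSpace

noncomputable section

variable {F : Type*} [NormedAddCommGroup F] [InnerProductSpace ℝ F]

/-- The ball-Huber function: the ball-pen function for `|x| ≤ τ`, extended linearly
(continuously differentiably) for `|x| > τ`. -/
def ballHuber (L τ x : ℝ) : ℝ :=
  if |x| ≤ τ then 1 / L - Real.sqrt (1 / L ^ 2 - x ^ 2)
  else τ / Real.sqrt (1 / L ^ 2 - τ ^ 2) * |x| + 1 / L -
    (1 / L ^ 2) / Real.sqrt (1 / L ^ 2 - τ ^ 2)

namespace BH

def clamp (τ x : ℝ) : ℝ := max (-τ) (min τ x)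

variable {L τ : ℝ}

lemma hs2 (hτ0 : 0 < τ) (hτ : τ < 1 / L) : 0 < 1 / L ^ 2 - τ ^ 2 := by
  have h1 : τ ^ 2 < (1 / L) ^ 2 := by nlinarith
  have : (1:ℝ) / L ^ 2 = (1 / L) ^ 2 := by ring
  linarith [this]

lemma hs (hτ0 : 0 < τ) (hτ : τ < 1 / L) : 0 < Real.sqrt (1 / L ^ 2 - τ ^ 2) :=
  Real.sqrt_pos.2 (hs2 hτ0 hτ)

lemma s_sq (hτ0 : 0 < τ) (hτ : τ < 1 / L) :
    Real.sqrt (1 / L ^ 2 - τ ^ 2) ^ 2 = 1 / L ^ 2 - τ ^ 2 :=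
  Real.sq_sqrt (hs2 hτ0 hτ).le

lemma sqrt_c (hL : 0 < L) : Real.sqrt (1 / L ^ 2) = 1 / L := by
  rw [show (1:ℝ) / L ^ 2 = (1 / L) ^ 2 by ring, Real.sqrt_sq (by positivity)]

lemma ballHuber_even (x : ℝ) : ballHuber L τ (-x) = ballHuber L τ x := by
  simp [ballHuber, abs_neg, neg_sq]

lemma clamp_abs_le {x : ℝ} (hx : |x| ≤ τ) : clamp τ x = x := by
  rw [abs_le] at hx
  simp [clamp, min_eq_right hx.2, max_eq_right hx.1]

lemma clamp_of_le (hτ0 : 0 < τ) {x : ℝ} (hx : τ ≤ x) : clamp τ x = τ := by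
  simp [clamp, min_eq_left hx, max_eq_right (by linarith : -τ ≤ τ)]

lemma clamp_of_ge {x : ℝ} (hx : x ≤ -τ) : clamp τ x = -τ := by
  have : min τ x ≤ -τ := le_trans (min_le_right _ _) hx
  simp [clamp, max_eq_left this]

lemma ballHuber_of_abs_le {x : ℝ} (hx : |x| ≤ τ) :
    ballHuber L τ x = 1 / L - Real.sqrt (1 / L ^ 2 - x ^ 2) := by
  simp [ballHuber, hx]

lemma ballHuber_of_ge (hL : 0 < L) (hτ0 : 0 < τ) (hτ : τ < 1 / L) {x : ℝ} (hx : τ ≤ x) :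
    ballHuber L τ x = τ / Real.sqrt (1 / L ^ 2 - τ ^ 2) * x +
      (1 / L - (1 / L ^ 2) / Real.sqrt (1 / L ^ 2 - τ ^ 2)) := by
  have hs' := hs hτ0 hτ
  have hss := s_sq hτ0 hτ
  by_cases hy' : τ < x
  · have hax : |x| = x := abs_of_pos (lt_trans hτ0 hy')
    rw [ballHuber, if_neg (by rw [hax]; push_neg; exact hy'), hax]
    ring
  · have hyx : x = τ := le_antisymm (not_lt.1 hy') hx
    subst hyx
    rw [ballHuber_of_abs_le (by rw [abs_of_pos hτ0])]
    rw [show (1:ℝ) / L ^ 2 - x ^ 2 = Real.sqrt (1 / L ^ 2 - x ^ 2) ^ 2 by rw [hss]]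
    rw [Real.sqrt_sq hs'.le]
    set w := Real.sqrt (1 / L ^ 2 - x ^ 2) with hw
    have hw0 : w ≠ 0 := ne_of_gt hs'
    have hL0 : L ≠ 0 := ne_of_gt hL
    have h3 : x / w * x - 1 / L ^ 2 / w = -w := by
      rw [div_mul_eq_mul_div, div_sub_div_same]
      rw [show x * x - 1 / L ^ 2 = -(w * w) from by nlinarith [hss]]
      rw [neg_div, mul_div_assoc, div_self hw0, mul_one]
    linarith [h3]

lemma hasDerivAt_g {x : ℝ} (hx : x ^ 2 < 1 / L ^ 2) :
    HasDerivAt (fun y => 1 / L - Real.sqrt (1 / L ^ 2 - y ^ 2))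
      (x / Real.sqrt (1 / L ^ 2 - x ^ 2)) x := by
  have hpos : 0 < 1 / L ^ 2 - x ^ 2 := by linarith
  have h1' := (hasDerivAt_pow 2 x).const_sub (1 / L ^ 2)
  have h1 : HasDerivAt (fun y : ℝ => 1 / L ^ 2 - y ^ 2) (-(2 * x)) x := by
    refine h1'.congr_deriv ?_; push_cast; ring
  have h2 := (h1.sqrt (by positivity))
  have h3 := h2.const_sub (1 / L)
  refine h3.congr_deriv ?_
  have hsq : Real.sqrt (1 / L ^ 2 - x ^ 2) ≠ 0 := by positivity
  field_simp

/-- derivative of ballHuber everywhere -/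
lemma hasDerivAt_bh (hL : 0 < L) (hτ0 : 0 < τ) (hτ : τ < 1 / L) (x : ℝ) :
    HasDerivAt (ballHuber L τ)
      (clamp τ x / Real.sqrt (1 / L ^ 2 - clamp τ x ^ 2)) x := by
  have hs' := hs hτ0 hτ
  have hss := s_sq hτ0 hτ
  set s := Real.sqrt (1 / L ^ 2 - τ ^ 2) with hsdef
  have hfl : ∀ y : ℝ, τ ≤ y → ballHuber L τ y = τ / s * y + (1 / L - (1 / L ^ 2) / s) :=
    fun y hy => ballHuber_of_ge hL hτ0 hτ hy
  have hlin : ∀ y : ℝ, HasDerivAt (fun z : ℝ => τ / s * z + (1 / L - (1 / L ^ 2) / s))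
      (τ / s) y := by
    intro y
    have := ((hasDerivAt_id y).const_mul (τ / s)).add_const (1 / L - (1 / L ^ 2) / s)
    simpa using this
  -- the glued derivative at τ
  have hdτ : HasDerivAt (ballHuber L τ) (τ / s) τ := by
    have hg : HasDerivAt (fun y => 1 / L - Real.sqrt (1 / L ^ 2 - y ^ 2)) (τ / s) τ :=
      hasDerivAt_g (by nlinarith [hs2 hτ0 hτ])
    have hW1 : HasDerivWithinAt (ballHuber L τ) (τ / s) (Icc 0 τ) τ :=
      (hg.hasDerivWithinAt).congr
        (fun y hy => ballHuber_of_abs_le (by rw [abs_of_nonneg hy.1]; exact hy.2))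
        (ballHuber_of_abs_le (by rw [abs_of_pos hτ0]))
    have hW2 : HasDerivWithinAt (ballHuber L τ) (τ / s) (Ici τ) τ :=
      ((hlin τ).hasDerivWithinAt).congr (fun y hy => hfl y hy) (hfl τ le_rfl)
    have hu := hW1.union hW2
    rw [Set.Icc_union_Ici_eq_Ici hτ0.le] at hu
    exact hu.hasDerivAt (Ici_mem_nhds hτ0)
  rcases lt_trichotomy x τ with hxτ | heq | hxτ
  · rcases lt_trichotomy x (-τ) with hxm | heq | hxm
    · -- x < -τ : linear branch on the left
      rw [clamp_of_ge (le_of_lt hxm)]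
      have hkey : HasDerivAt (fun y : ℝ => τ / s * (-y) + (1 / L - (1 / L ^ 2) / s))
          (-(τ / s)) x := by
        have := ((hasDerivAt_id x).neg.const_mul (τ / s)).add_const (1 / L - (1 / L ^ 2) / s)
        simpa using this
      have heq : ballHuber L τ =ᶠ[nhds x] fun y => τ / s * (-y) + (1 / L - (1 / L ^ 2) / s) := by
        filter_upwards [Iio_mem_nhds hxm] with y hy
        have hy' : y < -τ := hy
        rw [ballHuber, if_neg (by rw [abs_of_neg (by linarith)]; push_neg; linarith),
          abs_of_neg (by linarith)]
        ring
      have hres := hkey.congr_of_eventuallyEq heq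
      refine hres.congr_deriv ?_
      rw [neg_sq, ← hsdef]
      field_simp
    · -- x = -τ : by evenness from the point τ
      subst heq
      rw [clamp_of_ge le_rfl]
      have hcomp : HasDerivAt (fun y => ballHuber L τ (-y)) (τ / s * (-1)) (-τ) := by
        have hneg : HasDerivAt (fun y : ℝ => -y) (-1 : ℝ) (-τ) := hasDerivAt_neg _
        have := HasDerivAt.comp (-τ) (by simpa using hdτ) hneg
        exact this
      have : HasDerivAt (ballHuber L τ) (τ / s * (-1)) (-τ) := by
        have hfun : (fun y => ballHuber L τ (-y)) = ballHuber L τ := by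
          funext y; exact ballHuber_even y
        rwa [hfun] at hcomp
      refine this.congr_deriv ?_
      rw [neg_sq, ← hsdef]
      field_simp
    · -- -τ < x < τ
      have habs : |x| < τ := abs_lt.2 ⟨hxm, hxτ⟩
      rw [clamp_abs_le habs.le]
      have hkey := hasDerivAt_g (L := L) (x := x)
        (by nlinarith [hs2 hτ0 hτ, abs_nonneg x, sq_abs x])
      refine hkey.congr_of_eventuallyEq ?_
      have hopen : IsOpen {y : ℝ | |y| < τ} := isOpen_lt (continuous_abs) continuous_const
      filter_upwards [hopen.mem_nhds habs] with y hy
      exact ballHuber_of_abs_le (le_of_lt hy)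
  · subst heq
    rw [clamp_of_le hτ0 le_rfl, ← hsdef]
    exact hdτ
  · -- x > τ
    rw [clamp_of_le hτ0 hxτ.le, ← hsdef]
    refine (hlin x).congr_of_eventuallyEq ?_
    filter_upwards [Ioi_mem_nhds hxτ] with y hy
    exact hfl y (le_of_lt hy)


lemma le_of_sq_le {A B : ℝ} (hA : 0 ≤ A) (hB : 0 ≤ B) (h : A ^ 2 ≤ B ^ 2) : A ≤ B := by
  calc A = Real.sqrt (A ^ 2) := (Real.sqrt_sq hA).symm
    _ ≤ Real.sqrt (B ^ 2) := Real.sqrt_le_sqrt h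
    _ = B := Real.sqrt_sq hB

-- monotonicity of t ↦ t / √(c - t²) on [-τ, τ]
lemma psi_mono (hτ0 : 0 < τ) (hτ : τ < 1 / L) {t1 t2 : ℝ}
    (h1 : -τ ≤ t1) (h12 : t1 ≤ t2) (h2 : t2 ≤ τ) :
    t1 / Real.sqrt (1 / L ^ 2 - t1 ^ 2) ≤ t2 / Real.sqrt (1 / L ^ 2 - t2 ^ 2) := by
  have hc2 : 0 < 1 / L ^ 2 - τ ^ 2 := by
    have ha : τ ^ 2 < (1 / L) ^ 2 := by nlinarith
    have hb : (1:ℝ) / L ^ 2 = (1 / L) ^ 2 := by ring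
    linarith
  have hcpos : 0 < 1 / L ^ 2 := by nlinarith [sq_nonneg τ]
  have e1 : 0 < 1 / L ^ 2 - t1 ^ 2 := by nlinarith
  have e2 : 0 < 1 / L ^ 2 - t2 ^ 2 := by nlinarith
  set w1 := Real.sqrt (1 / L ^ 2 - t1 ^ 2) with hw1
  set w2 := Real.sqrt (1 / L ^ 2 - t2 ^ 2) with hw2
  have hw1p : 0 < w1 := Real.sqrt_pos.2 e1
  have hw2p : 0 < w2 := Real.sqrt_pos.2 e2
  have hs1 : w1 ^ 2 = 1 / L ^ 2 - t1 ^ 2 := Real.sq_sqrt e1.le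
  have hs2 : w2 ^ 2 = 1 / L ^ 2 - t2 ^ 2 := Real.sq_sqrt e2.le
  rw [div_le_div_iff₀ hw1p hw2p]
  rcases le_or_gt t1 0 with hn | hp
  · rcases le_or_gt 0 t2 with hq | hq
    · exact le_trans (mul_nonpos_of_nonpos_of_nonneg hn hw2p.le)
        (mul_nonneg hq hw1p.le)
    · -- both ≤ 0
      have key : -t2 * w1 ≤ -t1 * w2 := by
        refine le_of_sq_le (by nlinarith) (by nlinarith) ?_
        have ht : t2 ^ 2 ≤ t1 ^ 2 := by nlinarith
        calc (-t2 * w1) ^ 2 = t2 ^ 2 * (1 / L ^ 2) - t2 ^ 2 * t1 ^ 2 := by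
              rw [mul_pow, hs1]; ring
          _ ≤ t1 ^ 2 * (1 / L ^ 2) - t1 ^ 2 * t2 ^ 2 := by nlinarith
          _ = (-t1 * w2) ^ 2 := by rw [mul_pow, hs2]; ring
      linarith
  · -- both > 0
    have hp2 : 0 < t2 := lt_of_lt_of_le hp h12
    refine le_of_sq_le (by positivity) (by positivity) ?_
    have ht : t1 ^ 2 ≤ t2 ^ 2 := by nlinarith
    calc (t1 * w2) ^ 2 = t1 ^ 2 * (1 / L ^ 2) - t1 ^ 2 * t2 ^ 2 := by
          rw [mul_pow, hs2]; ring
      _ ≤ t2 ^ 2 * (1 / L ^ 2) - t2 ^ 2 * t1 ^ 2 := by nlinarith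
      _ = (t2 * w1) ^ 2 := by rw [mul_pow, hs1]; ring

lemma monotone_phi (hτ0 : 0 < τ) (hτ : τ < 1 / L) :
    Monotone (fun x => clamp τ x / Real.sqrt (1 / L ^ 2 - clamp τ x ^ 2)) := by
  intro a b hab
  have hma : -τ ≤ clamp τ a := le_max_left _ _
  have hmb : clamp τ b ≤ τ := max_le (by linarith) (min_le_left _ _)
  have hmono : clamp τ a ≤ clamp τ b :=
    max_le_max le_rfl (min_le_min le_rfl hab)
  exact psi_mono hτ0 hτ hma hmono hmb

lemma differentiable_bh (hL : 0 < L) (hτ0 : 0 < τ) (hτ : τ < 1 / L) :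
    Differentiable ℝ (ballHuber L τ) :=
  fun x => (hasDerivAt_bh hL hτ0 hτ x).differentiableAt

lemma deriv_bh (hL : 0 < L) (hτ0 : 0 < τ) (hτ : τ < 1 / L) (x : ℝ) :
    deriv (ballHuber L τ) x = clamp τ x / Real.sqrt (1 / L ^ 2 - clamp τ x ^ 2) :=
  (hasDerivAt_bh hL hτ0 hτ x).deriv

lemma convexOn_bh (hL : 0 < L) (hτ0 : 0 < τ) (hτ : τ < 1 / L) :
    ConvexOn ℝ Set.univ (ballHuber L τ) := by
  apply Monotone.convexOn_univ_of_deriv (differentiable_bh hL hτ0 hτ)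
  have : deriv (ballHuber L τ) =
      fun x => clamp τ x / Real.sqrt (1 / L ^ 2 - clamp τ x ^ 2) :=
    funext (deriv_bh hL hτ0 hτ)
  rw [this]
  exact monotone_phi hτ0 hτ

-- first key inequality : s √(c - v²) ≤ c - τ v
lemma key1 (hτ0 : 0 < τ) (hτ : τ < 1 / L) {v : ℝ} (hv : v ^ 2 ≤ 1 / L ^ 2) :
    Real.sqrt (1 / L ^ 2 - τ ^ 2) * Real.sqrt (1 / L ^ 2 - v ^ 2) ≤ 1 / L ^ 2 - τ * v := by
  have hs2' := hs2 hτ0 hτ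
  have hcpos : 0 < 1 / L ^ 2 := by nlinarith [sq_nonneg τ]
  have h1L : 0 < 1 / L := lt_trans hτ0 hτ
  have hb : (1:ℝ) / L ^ 2 = (1 / L) ^ 2 := by ring
  have hrhs : 0 ≤ 1 / L ^ 2 - τ * v := by
    rcases le_or_gt 0 v with hv0 | hv0
    · have hv1 : v ≤ 1 / L := le_of_sq_le hv0 h1L.le (by rw [← hb]; exact hv)
      have h2 : τ * v ≤ τ * (1 / L) := mul_le_mul_of_nonneg_left hv1 hτ0.le
      have h3 : τ * (1 / L) < (1 / L) * (1 / L) := mul_lt_mul_of_pos_right hτ h1L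
      nlinarith
    · nlinarith
  have h1 : Real.sqrt (1 / L ^ 2 - τ ^ 2) * Real.sqrt (1 / L ^ 2 - v ^ 2)
      = Real.sqrt ((1 / L ^ 2 - τ ^ 2) * (1 / L ^ 2 - v ^ 2)) :=
    (Real.sqrt_mul hs2'.le _).symm
  rw [h1]
  calc Real.sqrt ((1 / L ^ 2 - τ ^ 2) * (1 / L ^ 2 - v ^ 2))
      ≤ Real.sqrt ((1 / L ^ 2 - τ * v) ^ 2) := by
        apply Real.sqrt_le_sqrt
        nlinarith [mul_nonneg hcpos.le (sq_nonneg (τ - v))]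
    _ = 1 / L ^ 2 - τ * v := Real.sqrt_sq hrhs

lemma key2 (hτ0 : 0 < τ) (hτ : τ < 1 / L) {v : ℝ} (hv : v ^ 2 ≤ 1 / L ^ 2) :
    Real.sqrt (1 / L ^ 2 - τ ^ 2) * Real.sqrt (1 / L ^ 2 - v ^ 2) ≤ 1 / L ^ 2 + τ * v := by
  have := key1 hτ0 hτ (v := -v) (by rwa [neg_sq])
  rw [neg_sq] at this
  linarith [this]

-- s t ≤ τ √(c - t²) for t ≤ τ
lemma key3 (hτ0 : 0 < τ) (hτ : τ < 1 / L) {t : ℝ} (ht : t ≤ τ) :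
    Real.sqrt (1 / L ^ 2 - τ ^ 2) * t ≤ τ * Real.sqrt (1 / L ^ 2 - t ^ 2) := by
  have hs2' := hs2 hτ0 hτ
  have hcpos : 0 < 1 / L ^ 2 := by nlinarith [sq_nonneg τ]
  have hsnn : 0 ≤ Real.sqrt (1 / L ^ 2 - τ ^ 2) := Real.sqrt_nonneg _
  rcases le_or_gt t 0 with h0 | h0
  · exact le_trans (mul_nonpos_of_nonneg_of_nonpos hsnn h0)
      (mul_nonneg hτ0.le (Real.sqrt_nonneg _))
  · have ht2 : t ^ 2 ≤ τ ^ 2 := by nlinarith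
    have he : 0 ≤ 1 / L ^ 2 - t ^ 2 := by nlinarith
    refine le_of_sq_le (mul_nonneg hsnn h0.le)
      (mul_nonneg hτ0.le (Real.sqrt_nonneg _)) ?_
    rw [mul_pow, mul_pow, Real.sq_sqrt hs2'.le, Real.sq_sqrt he]
    nlinarith

-- the central geometric inequality, b ≥ 0 case
lemma main_ineq (hL : 0 < L) (hτ0 : 0 < τ) (hτ : τ < 1 / L) {b u : ℝ} (hb : 0 ≤ b)
    (hv : (u - b) ^ 2 ≤ 1 / L ^ 2) :
    ballHuber L τ u + Real.sqrt (1 / L ^ 2 - (u - b) ^ 2) ≤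
      1 / L + τ / Real.sqrt (1 / L ^ 2 - τ ^ 2) * b := by
  have hs2' := hs2 hτ0 hτ
  have hs' := hs hτ0 hτ
  have hss := s_sq hτ0 hτ
  have hcpos : 0 < 1 / L ^ 2 := by nlinarith [sq_nonneg τ]
  set s := Real.sqrt (1 / L ^ 2 - τ ^ 2) with hsdef
  set v := u - b with hvdef
  set W1 := Real.sqrt (1 / L ^ 2 - v ^ 2) with hW1def
  have hW1nn : 0 ≤ W1 := Real.sqrt_nonneg _
  have hW1sq : W1 ^ 2 = 1 / L ^ 2 - v ^ 2 := Real.sq_sqrt (by linarith)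
  rcases le_or_gt |u| τ with hu | hu
  · -- |u| ≤ τ
    have hu2 : u ^ 2 ≤ τ ^ 2 := by nlinarith [sq_abs u, abs_nonneg u]
    have hecu : 0 ≤ 1 / L ^ 2 - u ^ 2 := by nlinarith
    set W2 := Real.sqrt (1 / L ^ 2 - u ^ 2) with hW2def
    have hW2sq : W2 ^ 2 = 1 / L ^ 2 - u ^ 2 := Real.sq_sqrt hecu
    have hW2s : s ≤ W2 := Real.sqrt_le_sqrt (by nlinarith)
    have hSig : 0 < W1 + W2 := by linarith
    have hus : u ≤ τ := le_trans (le_abs_self u) hu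
    have hvs : v ≤ τ := by rw [hvdef]; linarith
    have k3u : s * u ≤ τ * W2 := key3 hτ0 hτ hus
    have k3v : s * v ≤ τ * W1 := key3 hτ0 hτ hvs
    have hdiff : (W1 - W2) * (W1 + W2) = b * (u + v) := by
      have : W1 ^ 2 - W2 ^ 2 = b * (u + v) := by
        rw [hW1sq, hW2sq, hvdef]; ring
      linear_combination this
    have hmain : (W1 - W2) * s ≤ τ * b := by
      have h5 : s * ((W1 - W2) * (W1 + W2)) ≤ τ * b * (W1 + W2) := by
        rw [hdiff]
        linarith [mul_le_mul_of_nonneg_left (add_le_add k3u k3v) hb]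
      have h6 : ((W1 - W2) * s) * (W1 + W2) ≤ (τ * b) * (W1 + W2) := by linarith [h5]
      exact le_of_mul_le_mul_right h6 hSig
    have hW12 : W1 - W2 ≤ τ / s * b := by
      rw [div_mul_eq_mul_div, le_div_iff₀ hs']
      linarith [hmain]
    rw [ballHuber_of_abs_le hu]
    rw [← hW2def]
    linarith
  · -- |u| > τ
    have hfu : ballHuber L τ u = τ / s * |u| + 1 / L - (1 / L ^ 2) / s := by
      rw [ballHuber, if_neg (not_le.2 hu), ← hsdef]
    have hkey : τ * |u| + s * W1 ≤ 1 / L ^ 2 + τ * b := by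
      rcases le_or_gt 0 u with hu0 | hu0
      · have : |u| = u := abs_of_nonneg hu0
        rw [this]
        have := key1 hτ0 hτ (v := v) hv
        rw [← hW1def] at this
        rw [hvdef] at *
        linarith
      · have : |u| = -u := abs_of_neg hu0
        rw [this]
        have h2 := key2 hτ0 hτ (v := v) hv
        rw [← hW1def] at h2
        have hbτ : 0 ≤ τ * b := mul_nonneg hτ0.le hb
        have : τ * v = τ * u - τ * b := by rw [hvdef]; ring
        nlinarith [h2]
    rw [hfu, ← mul_le_mul_iff_right₀ hs']
    have e1 : s * (τ / s * |u| + 1 / L - 1 / L ^ 2 / s + W1) =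
        τ * |u| + s * (1 / L) - 1 / L ^ 2 + s * W1 := by
      field_simp
    have e2 : s * (1 / L + τ / s * b) = s * (1 / L) + τ * b := by
      field_simp
    rw [e1, e2]
    linarith [hkey]

lemma main_ineq_abs (hL : 0 < L) (hτ0 : 0 < τ) (hτ : τ < 1 / L) (b u : ℝ)
    (hv : (u - b) ^ 2 ≤ 1 / L ^ 2) :
    ballHuber L τ u + Real.sqrt (1 / L ^ 2 - (u - b) ^ 2) ≤
      1 / L + τ / Real.sqrt (1 / L ^ 2 - τ ^ 2) * |b| := by
  rcases le_or_gt 0 b with hb | hb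
  · rw [abs_of_nonneg hb]; exact main_ineq hL hτ0 hτ hb hv
  · have hv' : ((-u) - (-b)) ^ 2 ≤ 1 / L ^ 2 := by
      rw [show ((-u) - (-b)) ^ 2 = (u - b) ^ 2 by ring]; exact hv
    have := main_ineq hL hτ0 hτ (b := -b) (u := -u) (by linarith) hv'
    rw [ballHuber_even, show ((-u) - (-b)) ^ 2 = (u - b) ^ 2 by ring] at this
    rw [abs_of_neg hb]
    exact this

-- the center of the tangent ball at a point (a, f a)
lemma center_val (hL : 0 < L) (hτ0 : 0 < τ) (hτ : τ < 1 / L) (a : ℝ) :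
    ballHuber L τ a + Real.sqrt (1 / L ^ 2 - clamp τ a ^ 2) =
      1 / L + τ / Real.sqrt (1 / L ^ 2 - τ ^ 2) * |a - clamp τ a| := by
  have hs' := hs hτ0 hτ
  have hss := s_sq hτ0 hτ
  have hL0 : L ≠ 0 := ne_of_gt hL
  set s := Real.sqrt (1 / L ^ 2 - τ ^ 2) with hsdef
  have hs0 : s ≠ 0 := ne_of_gt hs'
  have hss2 : s ^ 2 * L ^ 2 + τ ^ 2 * L ^ 2 = 1 := by
    have h := hss
    field_simp at h
    linarith
  rcases le_or_gt |a| τ with ha | ha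
  · rw [clamp_abs_le ha, ballHuber_of_abs_le ha]
    simp
  · rcases le_or_gt 0 a with ha0 | ha0
    · have haτ : τ < a := by rwa [abs_of_nonneg ha0] at ha
      rw [clamp_of_le hτ0 haτ.le, ballHuber_of_ge hL hτ0 hτ haτ.le,
        abs_of_pos (by linarith : (0:ℝ) < a - τ),
        show Real.sqrt (1 / L ^ 2 - τ ^ 2) = s from rfl]
      field_simp
      linear_combination hss2
    · have haτ : a < -τ := by
        rcases abs_cases a with ⟨h1, _⟩ | ⟨h1, _⟩
        · linarith
        · linarith
      rw [clamp_of_ge haτ.le]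
      have hfa : ballHuber L τ a = τ / s * (-a) + 1 / L - (1 / L ^ 2) / s := by
        rw [ballHuber, if_neg (by rw [abs_of_neg (by linarith)]; push_neg; linarith),
          abs_of_neg (by linarith), ← hsdef]
      rw [hfa, neg_sq, show (1:ℝ) / L ^ 2 - τ ^ 2 = s ^ 2 from hss.symm,
        Real.sqrt_sq hs'.le, abs_of_neg (by linarith : a - -τ < 0)]
      field_simp
      linear_combination hss2

lemma ballHuber_zero (hL : 0 < L) (hτ0 : 0 < τ) : ballHuber L τ 0 = 0 := by
  rw [ballHuber_of_abs_le (by simp [hτ0.le]), sub_eq_zero]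
  rw [show (1:ℝ) / L ^ 2 - 0 ^ 2 = 1 / L ^ 2 by ring, sqrt_c hL]

lemma ballHuber_val_ge (hL : 0 < L) (hτ0 : 0 < τ) (hτ : τ < 1 / L) {A : ℝ} (hA : τ ≤ A) :
    ballHuber L τ A = 1 / L - (1 / L ^ 2 - τ * A) / Real.sqrt (1 / L ^ 2 - τ ^ 2) := by
  rw [ballHuber_of_ge hL hτ0 hτ hA]
  ring

lemma step_val (hL : 0 < L) (hτ0 : 0 < τ) (hτ : τ < 1 / L) :
    (τ / Real.sqrt (1 / L ^ 2 - τ ^ 2)) /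
      Real.sqrt (1 + (τ / Real.sqrt (1 / L ^ 2 - τ ^ 2)) ^ 2) = τ * L := by
  have hs' := hs hτ0 hτ
  have hss := s_sq hτ0 hτ
  set s := Real.sqrt (1 / L ^ 2 - τ ^ 2) with hsdef
  have hL0 : L ≠ 0 := ne_of_gt hL
  have hs0 : s ≠ 0 := ne_of_gt hs'
  have hss2 : s ^ 2 * L ^ 2 + τ ^ 2 * L ^ 2 = 1 := by
    have h := hss
    field_simp at h
    linarith
  have h1 : 1 + (τ / s) ^ 2 = ((1 / L) / s) ^ 2 := by
    field_simp
    linear_combination hss2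
  rw [h1, Real.sqrt_sq (by positivity)]
  field_simp

lemma clamp_bounds (hτ0 : 0 < τ) (x : ℝ) : -τ ≤ clamp τ x ∧ clamp τ x ≤ τ :=
  ⟨le_max_left _ _, max_le (by linarith) (min_le_left _ _)⟩

lemma clamp_sq_lt (hτ0 : 0 < τ) (hτ : τ < 1 / L) (x : ℝ) :
    clamp τ x ^ 2 < 1 / L ^ 2 := by
  have h1 : -τ ≤ clamp τ x := le_max_left _ _
  have h2 : clamp τ x ≤ τ := max_le (by linarith) (min_le_left _ _)
  have := hs2 hτ0 hτ
  nlinarith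

set_option maxHeartbeats 1000000 in
lemma isSmoothSet_bh (hL : 0 < L) (hτ0 : 0 < τ) (hτ : τ < 1 / L) :
    IsSmoothSet L {p : EuclideanSpace ℝ (Fin 2) | ballHuber L τ (p 0) ≤ p 1} := by
  have hs2' := hs2 hτ0 hτ
  have hs' := hs hτ0 hτ
  have hss := s_sq hτ0 hτ
  have hL0 : L ≠ 0 := ne_of_gt hL
  intro z hz n hn hn1
  have hproj0 : Continuous (fun p : EuclideanSpace ℝ (Fin 2) => p 0) := (continuous_apply 0).comp (PiLp.continuous_ofLp _ _)
  have hproj1 : Continuous (fun p : EuclideanSpace ℝ (Fin 2) => p 1) := (continuous_apply 1).comp (PiLp.continuous_ofLp _ _)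
  have hcont : Continuous (ballHuber L τ) := (differentiable_bh hL hτ0 hτ).continuous
  have hclosed : IsClosed {p : EuclideanSpace ℝ (Fin 2) | ballHuber L τ (p 0) ≤ p 1} :=
    isClosed_le (hcont.comp hproj0) hproj1
  have hzC : ballHuber L τ (z 0) ≤ z 1 := hclosed.frontier_subset hz
  -- the boundary point is on the graph
  have hzeq : z 1 = ballHuber L τ (z 0) := by
    by_contra hne
    have hlt : ballHuber L τ (z 0) < z 1 := lt_of_le_of_ne hzC (fun h => hne h.symm)
    have hU : IsOpen {p : EuclideanSpace ℝ (Fin 2) | ballHuber L τ (p 0) < p 1} :=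
      isOpen_lt (hcont.comp hproj0) hproj1
    have hsubU : {p : EuclideanSpace ℝ (Fin 2) | ballHuber L τ (p 0) < p 1} ⊆
        {p : EuclideanSpace ℝ (Fin 2) | ballHuber L τ (p 0) ≤ p 1} := by
      intro p hp
      simp only [Set.mem_setOf_eq] at hp ⊢
      exact le_of_lt hp
    have hzint : z ∈ interior {p : EuclideanSpace ℝ (Fin 2) | ballHuber L τ (p 0) ≤ p 1} :=
      interior_maximal hsubU hU hlt
    exact hz.2 hzint
  -- coordinates / points
  have hmem : ∀ t c : ℝ, ballHuber L τ t ≤ c →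
      ((WithLp.equiv 2 (Fin 2 → ℝ)).symm ![t, c] : EuclideanSpace ℝ (Fin 2)) ∈
        {p : EuclideanSpace ℝ (Fin 2) | ballHuber L τ (p 0) ≤ p 1} := by
    intro t c htc
    simp only [Set.mem_setOf_eq, WithLp.equiv_symm_apply, PiLp.toLp_apply]
    simpa using htc
  have hinner : ∀ x : EuclideanSpace ℝ (Fin 2), ⟪n, x - z⟫ =
      n 0 * (x 0 - z 0) + n 1 * (x 1 - z 1) := by
    intro x
    simp [PiLp.inner_apply, Fin.sum_univ_two, PiLp.sub_apply, RCLike.inner_apply, conj_trivial]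
    ring
  have hsub : ∀ t : ℝ, n 0 * (t - z 0) + n 1 * (ballHuber L τ t - ballHuber L τ (z 0)) ≤ 0 := by
    intro t
    have hmm := hn _ (hmem t (ballHuber L τ t) le_rfl)
    rw [hinner] at hmm
    simpa [WithLp.equiv_symm_apply, PiLp.toLp_apply, ← hzeq] using hmm
  have hnormsq : n 0 ^ 2 + n 1 ^ 2 = 1 := by
    rw [EuclideanSpace.norm_eq, Fin.sum_univ_two, Real.norm_eq_abs, Real.norm_eq_abs,
      sq_abs, sq_abs] at hn1
    have := Real.sqrt_eq_one.mp hn1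
    linarith
  have h1le : n 1 ≤ 0 := by
    have hmm := hn _ (hmem (z 0) (ballHuber L τ (z 0) + 1) (by linarith))
    rw [hinner] at hmm
    simpa [WithLp.equiv_symm_apply, PiLp.toLp_apply, ← hzeq] using hmm
  have h1ne : n 1 ≠ 0 := by
    intro h0
    have ha1 := hsub (z 0 + 1)
    have ha2 := hsub (z 0 - 1)
    rw [h0] at ha1 ha2
    have hn00 : n 0 = 0 := by
      simp at ha1 ha2
      linarith
    rw [hn00, h0] at hnormsq
    norm_num at hnormsq
  have hlam0 : 0 < -(n 1) := by
    rcases lt_or_eq_of_le h1le with h | h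
    · linarith
    · exact absurd h h1ne
  -- identify n 0 via the derivative
  set m := clamp τ (z 0) with hm
  have hm2 : m ^ 2 < 1 / L ^ 2 := clamp_sq_lt hτ0 hτ (z 0)
  set w := Real.sqrt (1 / L ^ 2 - m ^ 2) with hw
  have hw0 : 0 < w := Real.sqrt_pos.2 (by linarith)
  have hwsq : w ^ 2 = 1 / L ^ 2 - m ^ 2 := Real.sq_sqrt (by linarith)
  have hder : HasDerivAt (ballHuber L τ) (m / w) (z 0) := hasDerivAt_bh hL hτ0 hτ (z 0)
  have hψmin : IsLocalMin
      (fun t => -(n 1) * (ballHuber L τ t - ballHuber L τ (z 0)) - n 0 * (t - z 0)) (z 0) := by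
    apply Filter.Eventually.of_forall
    intro t
    have hst := hsub t
    simp only
    have hψa : -(n 1) * (ballHuber L τ (z 0) - ballHuber L τ (z 0)) - n 0 * (z 0 - z 0) = 0 := by
      ring
    rw [hψa]
    nlinarith [hst]
  have hψder : HasDerivAt
      (fun t => -(n 1) * (ballHuber L τ t - ballHuber L τ (z 0)) - n 0 * (t - z 0))
      (-(n 1) * (m / w) - n 0) (z 0) := by
    have h1 := ((hder.sub_const (ballHuber L τ (z 0))).const_mul (-(n 1)))
    have h2 := ((hasDerivAt_id (z 0)).sub_const (z 0)).const_mul (n 0)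
    exact (h1.sub h2).congr_deriv (by ring)
  have hcrit : -(n 1) * (m / w) - n 0 = 0 := hψmin.hasDerivAt_eq_zero hψder
  have hn0val : n 0 = -(n 1) * (m / w) := by linarith
  -- -(n 1) = w L
  have hlamval : -(n 1) = w * L := by
    have hsq : (-(n 1)) ^ 2 = (w * L) ^ 2 := by
      have he : (-(n 1)) ^ 2 * (m / w) ^ 2 + (-(n 1)) ^ 2 = 1 := by
        have hA : n 0 ^ 2 = (-(n 1)) ^ 2 * (m / w) ^ 2 := by rw [hn0val]; ring
        have hB : n 1 ^ 2 = (-(n 1)) ^ 2 := by ring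
        linarith [hnormsq, hA, hB]
      have hw2 : (w : ℝ) ≠ 0 := ne_of_gt hw0
      have hc : (m / w) ^ 2 * w ^ 2 = m ^ 2 := by field_simp
      have he2 : (-(n 1)) ^ 2 * (m ^ 2 + w ^ 2) = w ^ 2 := by
        linear_combination w ^ 2 * he - (-(n 1)) ^ 2 * hc
      have hmw : m ^ 2 + w ^ 2 = 1 / L ^ 2 := by linarith [hwsq]
      have he3 : (-(n 1)) ^ 2 * (1 / L ^ 2) = w ^ 2 := by rw [← hmw]; exact he2
      have hX : (1 : ℝ) / L ^ 2 * L ^ 2 = 1 := by field_simp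
      linear_combination L ^ 2 * he3 - (-(n 1)) ^ 2 * hX
    have hfac : (-(n 1) - w * L) * (-(n 1) + w * L) = 0 := by linear_combination hsq
    rcases mul_eq_zero.1 hfac with h | h
    · linarith
    · nlinarith [mul_pos hw0 hL]
  have hn0' : n 0 = m * L := by
    rw [hn0val, hlamval]
    field_simp
  -- center coordinates
  have hc0 : (z - (1 / L) • n) 0 = z 0 - m := by
    simp only [PiLp.sub_apply, PiLp.smul_apply, smul_eq_mul]
    rw [hn0']
    field_simp
  have hc1 : (z - (1 / L) • n) 1 = ballHuber L τ (z 0) + w := by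
    simp only [PiLp.sub_apply, PiLp.smul_apply, smul_eq_mul]
    rw [show n 1 = -(w * L) from by linarith [hlamval], hzeq]
    field_simp
    ring
  -- final inclusion
  intro p hp
  have hdist : dist p (z - (1 / L) • n) ≤ 1 / L := mem_closedBall.1 hp
  have hsum : (p 0 - (z 0 - m)) ^ 2 + (p 1 - (ballHuber L τ (z 0) + w)) ^ 2 ≤ (1 / L) ^ 2 := by
    have h2 : dist p (z - (1 / L) • n) ^ 2 ≤ (1 / L) ^ 2 := pow_le_pow_left₀ dist_nonneg hdist 2
    rw [EuclideanSpace.dist_eq, Fin.sum_univ_two, Real.sq_sqrt (by positivity)] at h2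
    rw [hc0, hc1, Real.dist_eq, Real.dist_eq, sq_abs, sq_abs] at h2
    exact h2
  have hb2 : (p 0 - (z 0 - m)) ^ 2 ≤ 1 / L ^ 2 := by
    have hbr : (1 / L : ℝ) ^ 2 = 1 / L ^ 2 := by ring
    nlinarith [sq_nonneg (p 1 - (ballHuber L τ (z 0) + w))]
  have hmain := main_ineq_abs hL hτ0 hτ (z 0 - m) (p 0) hb2
  have hcv : (1 : ℝ) / L + τ / Real.sqrt (1 / L ^ 2 - τ ^ 2) * |z 0 - m| =
      ballHuber L τ (z 0) + w := by
    have := (center_val hL hτ0 hτ (z 0)).symm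
    rw [← hm, ← hw] at this
    linarith [this]
  set K := Real.sqrt (1 / L ^ 2 - (p 0 - (z 0 - m)) ^ 2) with hK
  have hKnn : 0 ≤ K := Real.sqrt_nonneg _
  have hKsq : K ^ 2 = 1 / L ^ 2 - (p 0 - (z 0 - m)) ^ 2 := Real.sq_sqrt (by linarith)
  have hp1 : ballHuber L τ (z 0) + w - K ≤ p 1 := by
    have hbr : (1 / L : ℝ) ^ 2 = 1 / L ^ 2 := by ring
    nlinarith [hsum, sq_nonneg (p 1 - (ballHuber L τ (z 0) + w) + K)]
  show ballHuber L τ (p 0) ≤ p 1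
  rw [hcv] at hmain
  linarith

end BH

/-- Epismooth gradient descent on the ball-Huber function: the function is convex with
`L`-smooth epigraph, the normalized gradient iterates from `x₀ = R` are
`x_k = R - τ Σ_{i<k} h_i`, and the final objective gap is
`1/L - (1/L² - τ(R - τ Σ_{i<N} h_i)) / √(1/L² - τ²)`. -/
theorem ballHuber_epismooth_descent (L τ : ℝ) (hL : 0 < L) (hτ0 : 0 < τ) (hτ : τ < 1 / L)
    (N : ℕ) (hN : 1 ≤ N) (h : ℕ → ℝ) (hh : ∀ i < N, 0 ≤ h i) (R : ℝ)
    (hRbound : τ ≤ R - τ * ∑ i ∈ Finset.range N, h i) :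
    (ConvexOn ℝ Set.univ (ballHuber L τ) ∧
      IsSmoothSet L {p : EuclideanSpace ℝ (Fin 2) | ballHuber L τ (p 0) ≤ p 1}) ∧
    ∀ x : ℕ → ℝ, x 0 = R →
      (∀ k < N, x (k + 1) =
        x k - h k / L * (deriv (ballHuber L τ) (x k) /
          Real.sqrt (1 + deriv (ballHuber L τ) (x k) ^ 2))) →
      (∀ k ≤ N, x k = R - τ * ∑ i ∈ Finset.range k, h i) ∧
      ballHuber L τ (x N) - ballHuber L τ 0 =
        1 / L - (1 / L ^ 2 - τ * (R - τ * ∑ i ∈ Finset.range N, h i)) /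
          Real.sqrt (1 / L ^ 2 - τ ^ 2) := by
  constructor
  · exact ⟨BH.convexOn_bh hL hτ0 hτ, BH.isSmoothSet_bh hL hτ0 hτ⟩
  · intro x hx0 hrec
    have key : ∀ k, k ≤ N → x k = R - τ * ∑ i ∈ Finset.range k, h i := by
      intro k
      induction k with
      | zero => intro _; simp [hx0]
      | succ k ih =>
        intro hk1
        have hkN : k < N := hk1
        have hxk := ih (Nat.le_of_lt hkN)
        rcases eq_or_lt_of_le (hh k hkN) with heq | hpos
        · rw [hrec k hkN, hxk, Finset.sum_range_succ, ← heq]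
          ring
        · have hsum_le : ∑ i ∈ Finset.range (k + 1), h i ≤ ∑ i ∈ Finset.range N, h i := by
            apply Finset.sum_le_sum_of_subset_of_nonneg
            · exact Finset.range_subset_range.2 hk1
            · intro i hiN _
              exact hh i (Finset.mem_range.1 hiN)
          have hsucc : ∑ i ∈ Finset.range (k + 1), h i
              = ∑ i ∈ Finset.range k, h i + h k := Finset.sum_range_succ _ _
          have hxk_gt : τ < x k := by
            rw [hxk]
            nlinarith [hRbound, mul_pos hτ0 hpos,
              mul_le_mul_of_nonneg_left hsum_le hτ0.le]
          have hder : deriv (ballHuber L τ) (x k)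
              = τ / Real.sqrt (1 / L ^ 2 - τ ^ 2) := by
            rw [BH.deriv_bh hL hτ0 hτ, BH.clamp_of_le hτ0 hxk_gt.le]
          rw [hrec k hkN, hder, BH.step_val hL hτ0 hτ, hxk, Finset.sum_range_succ]
          field_simp
          ring
    refine ⟨key, ?_⟩
    rw [key N le_rfl, BH.ballHuber_zero hL hτ0, BH.ballHuber_val_ge hL hτ0 hτ hRbound]
    ring
end
end
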